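/- arXiv:1405.3375 — 2 statements merged into one kernel-verified Lean document; each statement's English description precedes it below -/
import Mathlib

section
/- An R-module is Gorenstein weak injective if and only if it is GWI-copure injective and has finite Gorenstein weak injective dimension. -/
open CategoryTheory

universe u

noncomputable section

variable (R : Type u) [Ring R]

/-- Vanishing of `Ext^n_R(N, M)` for left `R`-modules, expressed via the `Ext` bifunctor
on the `ℤ`-linear abelian category `ModuleCat R`. -/
def ExtVanish (n : ℕ) (N M : ModuleCat.{u} R) : Prop :=
  Subsingleton (((_root_.Ext ℤ (ModuleCat.{u} R) n).obj (Opposite.op N)).obj M)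

/-- An `R`-module is super finitely presented if it admits a resolution by
finitely generated projective modules. -/
def SuperFinitelyPresented (N : ModuleCat.{u} R) : Prop :=
  ∃ (F : ℕ → ModuleCat.{u} R) (d : ∀ n, F (n + 1) →ₗ[R] F n) (ε : F 0 →ₗ[R] N),
    (∀ n, Module.Finite R (F n)) ∧ (∀ n, Module.Projective R (F n)) ∧
    Function.Surjective ε ∧ Function.Exact (d 0) ε ∧
    (∀ n, Function.Exact (d (n + 1)) (d n))

/-- An `R`-module `W` is weak injective if `Ext^1_R(N, W) = 0` for every super finitely
presented module `N`. -/
def WeakInjective (W : ModuleCat.{u} R) : Prop :=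
  ∀ N : ModuleCat.{u} R, SuperFinitelyPresented R N → ExtVanish R 1 N W

/-- `wid_R M ≤ n` : `Ext^{n+1}_R(N, M) = 0` for every super finitely presented `N`. -/
def WidLE (M : ModuleCat.{u} R) (n : ℕ) : Prop :=
  ∀ N : ModuleCat.{u} R, SuperFinitelyPresented R N → ExtVanish R (n + 1) N M

/-- The weak injective dimension, as an element of `ℕ∞`. -/
def Wid (M : ModuleCat.{u} R) : ℕ∞ :=
  sInf {c : ℕ∞ | ∃ n : ℕ, c = n ∧ WidLE R M n}

/-- A doubly infinite exact complex of injective modules which stays exact after applying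
`Hom_R(W, -)` for every module `W` in the test class `𝒯`. -/
def IsTotallyAcyclicInjComplex (𝒯 : ModuleCat.{u} R → Prop)
    (I : ℤ → ModuleCat.{u} R) (d : ∀ n : ℤ, I n →ₗ[R] I (n + 1)) : Prop :=
  (∀ n, Module.Injective R (I n)) ∧
  (∀ n, Function.Exact (d n) (d (n + 1))) ∧
  (∀ W : ModuleCat.{u} R, 𝒯 W → ∀ n,
    Function.Exact (fun g : W →ₗ[R] I n => (d n).comp g)
      (fun g : W →ₗ[R] I (n + 1) => (d (n + 1)).comp g))

/-- `M` is Gorenstein injective relative to the test class `𝒯` : `M` is the cokernel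
`Coker (I_1 → I_0)` of a `Hom(𝒯, -)`-exact exact complex of injective modules. -/
def GorensteinRelInjective (𝒯 : ModuleCat.{u} R → Prop) (M : ModuleCat.{u} R) : Prop :=
  ∃ (I : ℤ → ModuleCat.{u} R) (d : ∀ n : ℤ, I n →ₗ[R] I (n + 1)) (π : I 0 →ₗ[R] M),
    IsTotallyAcyclicInjComplex R 𝒯 I d ∧
    Function.Surjective π ∧ Function.Exact (d (-1)) π

/-- Gorenstein weak injective modules: the test class is that of weak injective modules. -/
def GorensteinWeakInjective (M : ModuleCat.{u} R) : Prop :=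
  GorensteinRelInjective R (WeakInjective R) M

/-- Gorenstein injective modules: the test class is that of injective modules. -/
def GorensteinInjective (M : ModuleCat.{u} R) : Prop :=
  GorensteinRelInjective R (fun E => Module.Injective R E) M

/-- The data of an exact sequence `0 → M → G^0 → ⋯ → G^n → 0` (the modules `G^i` for
`i > n` being trivial). -/
def IsFiniteCoresolution (M : ModuleCat.{u} R) (n : ℕ) (G : ℕ → ModuleCat.{u} R)
    (d : ∀ i, G i →ₗ[R] G (i + 1)) (ε : M →ₗ[R] G 0) : Prop :=
  Function.Injective ε ∧ Function.Exact ε (d 0) ∧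
  (∀ i, Function.Exact (d i) (d (i + 1))) ∧
  (∀ i, n < i → ∀ x : G i, x = 0)

/-- `Gwid_R M ≤ n` : `M` has a coresolution of length `n` by Gorenstein weak injective
modules. -/
def GwidLE (M : ModuleCat.{u} R) (n : ℕ) : Prop :=
  ∃ (G : ℕ → ModuleCat.{u} R) (d : ∀ i, G i →ₗ[R] G (i + 1)) (ε : M →ₗ[R] G 0),
    IsFiniteCoresolution R M n G d ε ∧ ∀ i, GorensteinWeakInjective R (G i)

/-- The Gorenstein weak injective dimension, as an element of `ℕ∞`. -/
def Gwid (M : ModuleCat.{u} R) : ℕ∞ :=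
  sInf {c : ℕ∞ | ∃ n : ℕ, c = n ∧ GwidLE R M n}

/-- `Gid_R M ≤ n`, via coresolutions by Gorenstein injective modules. -/
def GidLE (M : ModuleCat.{u} R) (n : ℕ) : Prop :=
  ∃ (G : ℕ → ModuleCat.{u} R) (d : ∀ i, G i →ₗ[R] G (i + 1)) (ε : M →ₗ[R] G 0),
    IsFiniteCoresolution R M n G d ε ∧ ∀ i, GorensteinInjective R (G i)

/-- The Gorenstein injective dimension, as an element of `ℕ∞`. -/
def Gid (M : ModuleCat.{u} R) : ℕ∞ :=
  sInf {c : ℕ∞ | ∃ n : ℕ, c = n ∧ GidLE R M n}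

/-- `id_R M ≤ n`, via coresolutions by injective modules. -/
def IdLE (M : ModuleCat.{u} R) (n : ℕ) : Prop :=
  ∃ (G : ℕ → ModuleCat.{u} R) (d : ∀ i, G i →ₗ[R] G (i + 1)) (ε : M →ₗ[R] G 0),
    IsFiniteCoresolution R M n G d ε ∧ ∀ i, Module.Injective R (G i)

/-- The injective dimension, as an element of `ℕ∞`. -/
def Idim (M : ModuleCat.{u} R) : ℕ∞ :=
  sInf {c : ℕ∞ | ∃ n : ℕ, c = n ∧ IdLE R M n}

/-- The data of an exact sequence `0 → P_n → ⋯ → P_0 → M → 0`. -/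
def IsFiniteResolution (M : ModuleCat.{u} R) (n : ℕ) (P : ℕ → ModuleCat.{u} R)
    (d : ∀ i, P (i + 1) →ₗ[R] P i) (ε : P 0 →ₗ[R] M) : Prop :=
  Function.Surjective ε ∧ Function.Exact (d 0) ε ∧
  (∀ i, Function.Exact (d (i + 1)) (d i)) ∧
  (∀ i, n < i → ∀ x : P i, x = 0)

/-- `pd_R M ≤ n`, via resolutions by projective modules. -/
def PdLE (M : ModuleCat.{u} R) (n : ℕ) : Prop :=
  ∃ (P : ℕ → ModuleCat.{u} R) (d : ∀ i, P (i + 1) →ₗ[R] P i) (ε : P 0 →ₗ[R] M),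
    IsFiniteResolution R M n P d ε ∧ ∀ i, Module.Projective R (P i)

end

variable (R : Type u) [Ring R]

/-- A short exact sequence `0 → L → M → N → 0` of `R`-modules. -/
def ShortExactSeq (L M N : ModuleCat.{u} R) (f : L →ₗ[R] M) (g : M →ₗ[R] N) : Prop :=
  Function.Injective f ∧ Function.Surjective g ∧ Function.Exact f g

/-- Exactness of `0 → Hom(C, X) → Hom(B, X) → Hom(A, X) → 0` induced by
`0 → A → B → C → 0`. -/
def HomContraExact (X : ModuleCat.{u} R) {A B C : ModuleCat.{u} R}
    (f : A →ₗ[R] B) (g : B →ₗ[R] C) : Prop :=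
  Function.Injective (fun h : C →ₗ[R] X => h.comp g) ∧
  Function.Exact (fun h : C →ₗ[R] X => h.comp g) (fun h : B →ₗ[R] X => h.comp f) ∧
  Function.Surjective (fun h : B →ₗ[R] X => h.comp f)

/-- A short exact sequence is `GWI`-copure exact if `Hom_R(-, X)` leaves it exact for
every Gorenstein weak injective module `X`. -/
def GWICopureExact {A B C : ModuleCat.{u} R} (f : A →ₗ[R] B) (g : B →ₗ[R] C) : Prop :=
  ShortExactSeq R A B C f g ∧
  ∀ X : ModuleCat.{u} R, GorensteinWeakInjective R X → HomContraExact R X f g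

/-- `M` is `GWI`-copure injective if `Hom_R(-, M)` is exact on every `GWI`-copure exact
sequence. -/
def GWICopureInjectiveMod (M : ModuleCat.{u} R) : Prop :=
  ∀ (A B C : ModuleCat.{u} R) (f : A →ₗ[R] B) (g : B →ₗ[R] C),
    GWICopureExact R f g → HomContraExact R M f g

/-- `φ : M → G` is a Gorenstein weak injective preenvelope of `M`. -/
def GWIPreenvelope (M G : ModuleCat.{u} R) (φ : M →ₗ[R] G) : Prop :=
  GorensteinWeakInjective R G ∧
  ∀ G' : ModuleCat.{u} R, GorensteinWeakInjective R G' →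
    ∀ f : M →ₗ[R] G', ∃ g : G →ₗ[R] G', g.comp φ = f

/-- A `WI`-pure Tate injective resolution of `M` : an injective resolution
`0 → M → E^0 → E^1 → ⋯`, a `WI`-pure exact complex `T` of injectives, and a chain map
`u : E → T` which is an isomorphism in all sufficiently large degrees. -/
def WIPureTateInjectiveResolution (M : ModuleCat.{u} R)
    (E : ℕ → ModuleCat.{u} R) (dE : ∀ n, E n →ₗ[R] E (n + 1)) (ε : M →ₗ[R] E 0)
    (T : ℤ → ModuleCat.{u} R) (dT : ∀ n : ℤ, T n →ₗ[R] T (n + 1))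
    (u : ∀ n : ℕ, E n →ₗ[R] T n) : Prop :=
  (∀ n, Module.Injective R (E n)) ∧ Function.Injective ε ∧
  Function.Exact ε (dE 0) ∧ (∀ n, Function.Exact (dE n) (dE (n + 1))) ∧
  IsTotallyAcyclicInjComplex R (WeakInjective R) T dT ∧
  (∀ n : ℕ, (dT n).comp (u n) = (u (n + 1)).comp (dE n)) ∧
  ∃ N : ℕ, ∀ n, N ≤ n → Function.Bijective (u n)

/-- Vanishing of the relative Tate cohomology `Êxt^i_GWI(N, M)` for all `i ∈ ℤ`,
computed from the `WI`-pure exact complex `T` : the complex `Hom_R(N, T)` is exact. -/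
def ExtHatVanishesAll (N : ModuleCat.{u} R) (T : ℤ → ModuleCat.{u} R)
    (dT : ∀ n : ℤ, T n →ₗ[R] T (n + 1)) : Prop :=
  ∀ n : ℤ, Function.Exact (fun g : N →ₗ[R] T n => (dT n).comp g)
    (fun g : N →ₗ[R] T (n + 1) => (dT (n + 1)).comp g)

noncomputable section
namespace GWIual


variable {R : Type u} [Ring R]

/-- Descend a linear map along a surjection whose kernel it kills. -/
def descend {A B C : ModuleCat.{u} R} (p : A →ₗ[R] B) (hp : Function.Surjective p)
    (f : A →ₗ[R] C) (h : LinearMap.ker p ≤ LinearMap.ker f) : B →ₗ[R] C :=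
  (LinearMap.ker p).liftQ f h ∘ₗ
    (LinearMap.quotKerEquivOfSurjective p hp).symm.toLinearMap

@[simp] lemma descend_apply {A B C : ModuleCat.{u} R} (p : A →ₗ[R] B)
    (hp : Function.Surjective p) (f : A →ₗ[R] C) (h : LinearMap.ker p ≤ LinearMap.ker f)
    (a : A) : descend p hp f h (p a) = f a := by
  have h1 : (LinearMap.quotKerEquivOfSurjective p hp).symm (p a) =
      Submodule.Quotient.mk a := by
    apply (LinearMap.quotKerEquivOfSurjective p hp).injective
    simp [LinearMap.quotKerEquivOfSurjective]
  simp [descend, h1]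

lemma descend_comp {A B C : ModuleCat.{u} R} (p : A →ₗ[R] B) (hp : Function.Surjective p)
    (f : A →ₗ[R] C) (h : LinearMap.ker p ≤ LinearMap.ker f) :
    (descend p hp f h) ∘ₗ p = f := by
  ext a; simp

lemma descend_surjective {A B C : ModuleCat.{u} R} (p : A →ₗ[R] B)
    (hp : Function.Surjective p) (f : A →ₗ[R] C) (h : LinearMap.ker p ≤ LinearMap.ker f)
    (hf : Function.Surjective f) : Function.Surjective (descend p hp f h) := by
  intro c; obtain ⟨a, rfl⟩ := hf c; exact ⟨p a, by simp⟩

/-- Factor a map through an injective map containing its range. -/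
def monoFactor {A B X : ModuleCat.{u} R} (i : A →ₗ[R] B) (hi : Function.Injective i)
    (f : X →ₗ[R] B) (h : LinearMap.range f ≤ LinearMap.range i) : X →ₗ[R] A :=
  (LinearEquiv.ofInjective i hi).symm.toLinearMap ∘ₗ
    (f.codRestrict (LinearMap.range i) (fun x => h ⟨x, rfl⟩))

@[simp] lemma monoFactor_spec {A B X : ModuleCat.{u} R} (i : A →ₗ[R] B)
    (hi : Function.Injective i) (f : X →ₗ[R] B) (h : LinearMap.range f ≤ LinearMap.range i)
    (x : X) : i (monoFactor i hi f h x) = f x := by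
  simp only [monoFactor, LinearMap.comp_apply]
  have := (LinearEquiv.ofInjective i hi).apply_symm_apply
    ⟨f x, h ⟨x, rfl⟩⟩
  have h2 : ∀ y : A, (i y : B) = ((LinearEquiv.ofInjective i hi) y : LinearMap.range i) := by
    intro y; rfl
  rw [h2]
  exact congrArg Subtype.val (LinearEquiv.apply_symm_apply _ _)

/-- extension along an injective map into a `Module.Injective` module. -/
lemma inj_extend {E : ModuleCat.{u} R} (hE : Module.Injective R E)
    {A B : ModuleCat.{u} R} (i : A →ₗ[R] B) (hi : Function.Injective i)
    (f : A →ₗ[R] E) : ∃ g : B →ₗ[R] E, g ∘ₗ i = f := by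
  obtain ⟨g, hg⟩ := hE.out i hi f
  exact ⟨g, by ext a; exact hg a⟩


/-- A subsingleton module is injective. -/
lemma subsingleton_injective (E : ModuleCat.{u} R) [Subsingleton E] :
    Module.Injective R E where
  out X Y _ _ _ _ f hf g := by
    refine ⟨0, fun x => ?_⟩
    apply Subsingleton.elim

lemma prod_injective (E F : ModuleCat.{u} R) (hE : Module.Injective R E)
    (hF : Module.Injective R F) : Module.Injective R (ModuleCat.of R (E × F)) where
  out X Y _ _ _ _ f hf g := by
    obtain ⟨h1, hh1⟩ := hE.out f hf ((LinearMap.fst R E F).comp g)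
    obtain ⟨h2, hh2⟩ := hF.out f hf ((LinearMap.snd R E F).comp g)
    exact ⟨h1.prod h2, fun x => by
      refine Prod.ext (hh1 x) (hh2 x)⟩

/-- Every module embeds into an injective module. -/
lemma embed_injective (M : ModuleCat.{u} R) :
    ∃ (E : ModuleCat.{u} R) (j : M →ₗ[R] E),
      Module.Injective R E ∧ Function.Injective j := by
  let E := Injective.under M
  refine ⟨E, (Injective.ι M).hom, ?_, ?_⟩
  · have : CategoryTheory.Injective (ModuleCat.of R E) := by
      show CategoryTheory.Injective E
      infer_instance
    exact Module.injective_module_of_injective_object R E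
  · rw [← ModuleCat.mono_iff_injective]
    infer_instance

/-- Ext^{n+1}(N, E) vanishes when `E` is an injective module. -/
lemma extVanish_succ_of_injective (N E : ModuleCat.{u} R) (hE : Module.Injective R E)
    (n : ℕ) : ExtVanish R (n + 1) N E := by
  have P : ProjectiveResolution N := ProjectiveResolution.of N
  have iso := P.isoExt (R := ℤ) (n + 1) E
  have hexact : (P.complex.linearYonedaObj ℤ E).ExactAt (n + 1) := by
    rw [HomologicalComplex.exactAt_iff' _ n (n+1) (n+2) (by simp) (by simp)]
    rw [ShortComplex.moduleCat_exact_iff]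
    intro (x : P.complex.X (n+1) ⟶ E) hx
    have hP := P.exact_succ n
    rw [ShortComplex.moduleCat_exact_iff] at hP
    have hker : LinearMap.ker (P.complex.d (n+1) n).hom ≤ LinearMap.ker x.hom := by
      intro z hz
      obtain ⟨w, hw⟩ := hP z hz
      have hx' : P.complex.d (n+2) (n+1) ≫ x = 0 := hx
      rw [LinearMap.mem_ker, ← hw]
      exact LinearMap.congr_fun (congrArg ModuleCat.Hom.hom hx') w
    set d := (P.complex.d (n+1) n).hom
    have hd : Function.Surjective d.rangeRestrict := d.surjective_rangeRestrict
    have hkerr : LinearMap.ker d.rangeRestrict ≤ LinearMap.ker x.hom := by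
      rw [LinearMap.ker_rangeRestrict]; exact hker
    let x' : ModuleCat.of R (LinearMap.range d) →ₗ[R] E :=
      descend (A := P.complex.X (n+1)) d.rangeRestrict hd x.hom hkerr
    obtain ⟨y, hy⟩ := inj_extend hE (A := ModuleCat.of R (LinearMap.range d))
      (B := P.complex.X n) (LinearMap.range d).subtype Subtype.val_injective x'
    refine ⟨ModuleCat.ofHom y, ?_⟩
    show P.complex.d (n+1) n ≫ ModuleCat.ofHom y = x
    ext z
    show y (d z) = x.hom z
    have h0 : y (d z) = y ((LinearMap.range d).subtype (d.rangeRestrict z)) := rfl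
    have h1 := congrFun (congrArg (fun (f : _ →ₗ[R] _) => (f : _ → _)) hy) (d.rangeRestrict z)
    simp only [LinearMap.comp_apply] at h1
    have h2 : x' (d.rangeRestrict z) = x.hom z := descend_apply _ hd x.hom hkerr z
    exact h0.trans (h1.trans h2)
  rw [HomologicalComplex.exactAt_iff_isZero_homology] at hexact
  have hzero := hexact.of_iso iso
  show Subsingleton (((_root_.Ext ℤ (ModuleCat.{u} R) (n+1)).obj (Opposite.op N)).obj E)
  set T := ((_root_.Ext ℤ (ModuleCat.{u} R) (n+1)).obj (Opposite.op N)).obj E with hT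
  have hid : 𝟙 T = 0 := hzero.eq_of_src _ _
  have h5 : ∀ v : T, v = (0 : T) := by
    intro v
    have : (𝟙 T) v = ((0 : T ⟶ T)) v := by rw [hid]
    simpa using this
  exact ⟨fun a b => (h5 a).trans (h5 b).symm⟩

lemma weakInjective_of_injective (E : ModuleCat.{u} R) (hE : Module.Injective R E) :
    WeakInjective R E :=
  fun N _ => extVanish_succ_of_injective N E hE 0

/-! ### Hom-exactness utilities -/

lemma exact_comp_zero {A B C : ModuleCat.{u} R} {f : A →ₗ[R] B} {g : B →ₗ[R] C}
    (h : Function.Exact f g) : g ∘ₗ f = 0 := by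
  ext a; exact h.apply_apply_eq_zero a

lemma eq_zero_of_comp_surjective {A B C : ModuleCat.{u} R} {p : A →ₗ[R] B}
    (hp : Function.Surjective p) {f : B →ₗ[R] C} (h : f ∘ₗ p = 0) : f = 0 := by
  ext b; obtain ⟨a, rfl⟩ := hp b
  exact congrFun (congrArg (fun (u : _ →ₗ[R] _) => (u : _ → _)) h) a

lemma hom_inj {A B X : ModuleCat.{u} R} {g : A →ₗ[R] B} (hg : Function.Surjective g) :
    Function.Injective (fun h : B →ₗ[R] X => h.comp g) := by
  intro h₁ h₂ h
  ext b; obtain ⟨a, rfl⟩ := hg b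
  exact congrFun (congrArg (fun (u : _ →ₗ[R] _) => (u : _ → _)) h) a

lemma hom_mid {A B C X : ModuleCat.{u} R} {f : A →ₗ[R] B} {g : B →ₗ[R] C}
    (hg : Function.Surjective g) (he : Function.Exact f g) :
    Function.Exact (fun h : C →ₗ[R] X => h.comp g) (fun h : B →ₗ[R] X => h.comp f) := by
  intro hB
  constructor
  · intro h0
    refine ⟨descend g hg hB ?_, ?_⟩
    · rw [LinearMap.exact_iff.mp he]
      rintro _ ⟨a, rfl⟩
      exact congrFun (congrArg (fun (u : _ →ₗ[R] _) => (u : _ → _)) h0) a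
    · exact descend_comp g hg hB _
  · rintro ⟨hC, rfl⟩
    show (hC.comp g).comp f = 0
    rw [LinearMap.comp_assoc, exact_comp_zero he, LinearMap.comp_zero]

/-! ### The class of modules `L` such that `Hom(L, T)` is exact for every
totally acyclic complex `T` (relative to weak injectives). -/

def CC (L : ModuleCat.{u} R) : Prop :=
  ∀ (I : ℤ → ModuleCat.{u} R) (d : ∀ n : ℤ, I n →ₗ[R] I (n + 1)),
    IsTotallyAcyclicInjComplex R (WeakInjective R) I d → ∀ n : ℤ,
    Function.Exact (fun g : L →ₗ[R] I n => (d n).comp g)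
      (fun g : L →ₗ[R] I (n + 1) => (d (n + 1)).comp g)

lemma CC_of_weakInjective {W : ModuleCat.{u} R} (h : WeakInjective R W) : CC W :=
  fun _ d hTA n => hTA.2.2 W h n

lemma CC_of_injective {E : ModuleCat.{u} R} (h : Module.Injective R E) : CC E :=
  CC_of_weakInjective (weakInjective_of_injective E h)

lemma CC_iso {L L' : ModuleCat.{u} R} (e : L ≃ₗ[R] L') (h : CC L) : CC L' := by
  intro I d hTA n
  intro g'
  constructor
  · intro h0
    have h0' : (d (n+1)).comp g' = 0 := h0
    have h1 : (d (n+1)).comp (g'.comp e.toLinearMap) = 0 := by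
      have h2 : (d (n+1)).comp (g'.comp e.toLinearMap)
          = ((d (n+1)).comp g').comp e.toLinearMap := by
        ext x; rfl
      rw [h2, h0', LinearMap.zero_comp]
    obtain ⟨u, hu⟩ := (h I d hTA n (g'.comp e.toLinearMap)).mp h1
    have hu' : (d n).comp u = g'.comp e.toLinearMap := hu
    refine ⟨u.comp e.symm.toLinearMap, ?_⟩
    show (d n).comp (u.comp e.symm.toLinearMap) = g'
    ext x
    have h9 := congrFun (congrArg (fun (v : _ →ₗ[R] _) => (v : _ → _)) hu') (e.symm x)
    simp only [LinearMap.comp_apply, LinearEquiv.coe_coe, LinearEquiv.apply_symm_apply] at h9 ⊢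
    exact h9
  · rintro ⟨u, rfl⟩
    show (d (n+1)).comp ((d n).comp u) = 0
    rw [← LinearMap.comp_assoc, exact_comp_zero (hTA.2.1 n), LinearMap.zero_comp]

lemma CC_two {L W L' : ModuleCat.{u} R} (i : L →ₗ[R] W) (p : W →ₗ[R] L')
    (hi : Function.Injective i) (hp : Function.Surjective p) (hip : Function.Exact i p)
    (hW : Module.Injective R W) (hL' : CC L') : CC L := by
  intro I d hTA n
  have hWC : CC W := CC_of_injective hW
  intro g
  constructor
  · intro h0
    -- extend g along i
    obtain ⟨gE, hgE⟩ := inj_extend (hTA.1 (n+1)) i hi g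
    -- descend d(n+1)∘gE along p
    have hker : LinearMap.ker p ≤ LinearMap.ker ((d (n+1)) ∘ₗ gE) := by
      rw [LinearMap.exact_iff.mp hip]
      rintro _ ⟨l, rfl⟩
      have h1 : gE (i l) = g l := congrFun (congrArg (fun (v : _ →ₗ[R] _) => (v : _ → _)) hgE) l
      have h2 : (d (n+1)) (g l) = 0 :=
        congrFun (congrArg (fun (v : _ →ₗ[R] _) => (v : _ → _)) h0) l
      simp only [LinearMap.mem_ker, LinearMap.comp_apply, h1, h2]
    set γ := descend p hp ((d (n+1)) ∘ₗ gE) hker with hγ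
    have hγc : γ ∘ₗ p = (d (n+1)) ∘ₗ gE := descend_comp _ _ _ _
    have hγ0 : (d (n+1+1)).comp γ = 0 := by
      apply eq_zero_of_comp_surjective hp
      rw [LinearMap.comp_assoc, hγc, ← LinearMap.comp_assoc,
        exact_comp_zero (hTA.2.1 (n+1)), LinearMap.zero_comp]
    obtain ⟨δ, hδ⟩ := (hL' I d hTA (n+1) γ).mp hγ0
    set ψ₂ := gE - δ.comp p with hψ₂
    have hδ' : (d (n+1)) ∘ₗ δ = γ := hδ
    have hψ₂0 : (d (n+1)).comp ψ₂ = 0 := by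
      rw [hψ₂, LinearMap.comp_sub, ← LinearMap.comp_assoc, hδ', hγc, sub_self]
    obtain ⟨ψ, hψ⟩ := (hWC I d hTA n ψ₂).mp hψ₂0
    refine ⟨ψ.comp i, ?_⟩
    show (d n).comp (ψ.comp i) = g
    ext l
    have h3 : (d n) (ψ (i l)) = ψ₂ (i l) :=
      congrFun (congrArg (fun (v : _ →ₗ[R] _) => (v : _ → _)) hψ) (i l)
    have h4 : p (i l) = 0 := hip.apply_apply_eq_zero l
    have h1 : gE (i l) = g l := congrFun (congrArg (fun (v : _ →ₗ[R] _) => (v : _ → _)) hgE) l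
    simp only [LinearMap.comp_apply, h3, hψ₂, LinearMap.sub_apply, h4, h1, map_zero,
      sub_zero]
  · rintro ⟨u, rfl⟩
    show (d (n+1)).comp ((d n).comp u) = 0
    rw [← LinearMap.comp_assoc, exact_comp_zero (hTA.2.1 n), LinearMap.zero_comp]

/-! ### The master extension lemma -/

/-- If `X` is Gorenstein weak injective and `0 → A → B → Q → 0` is exact with `CC Q`,
then every map `A → X` extends to `B`. -/
lemma gwi_extend {X : ModuleCat.{u} R} (hX : GorensteinWeakInjective R X)
    {A B Q : ModuleCat.{u} R} {ι : A →ₗ[R] B} {q : B →ₗ[R] Q}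
    (hι : Function.Injective ι) (hq : Function.Surjective q) (hiq : Function.Exact ι q)
    (hQ : CC Q) (φ : A →ₗ[R] X) : ∃ ψ : B →ₗ[R] X, ψ ∘ₗ ι = φ := by
  obtain ⟨I, d, π, hTA, hπs, hπe⟩ := hX
  -- construct the embedding j : X → I 1 with j ∘ π = d 0
  have hkerπ : LinearMap.ker π = LinearMap.range (d (-1)) :=
    LinearMap.exact_iff.mp hπe
  have hkerd0 : LinearMap.ker (d 0) = LinearMap.range (d (-1)) :=
    LinearMap.exact_iff.mp (hTA.2.1 (-1))
  have hkerππ : LinearMap.ker π ≤ LinearMap.ker (d 0) := by rw [hkerπ, hkerd0]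
  set j := descend π hπs (d 0) hkerππ with hj
  have hjc : ∀ b, j (π b) = d 0 b := fun b => descend_apply π hπs (d 0) hkerππ b
  have hjinj : Function.Injective j := by
    rw [← LinearMap.ker_eq_bot]
    rw [Submodule.eq_bot_iff]
    intro x hx
    obtain ⟨b, rfl⟩ := hπs x
    rw [LinearMap.mem_ker, hjc] at hx
    have : b ∈ LinearMap.ker π := by rw [hkerπ, ← hkerd0]; exact hx
    exact this
  have hjrange : LinearMap.range j = LinearMap.ker (d (0+1)) := by
    have h1 : LinearMap.range j = LinearMap.range (d 0) := by
      apply le_antisymm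
      · rintro _ ⟨x, rfl⟩
        obtain ⟨b, rfl⟩ := hπs x
        exact ⟨b, (hjc b).symm⟩
      · rintro _ ⟨b, rfl⟩
        exact ⟨π b, hjc b⟩
    rw [h1, ← LinearMap.exact_iff.mp (hTA.2.1 0)]
  -- extend j ∘ φ along ι
  obtain ⟨ψ₁, hψ₁⟩ := inj_extend (hTA.1 (0+1)) ι hι (j ∘ₗ φ)
  have hψ₁' : ∀ a, ψ₁ (ι a) = j (φ a) :=
    fun a => congrFun (congrArg (fun (v : _ →ₗ[R] _) => (v : _ → _)) hψ₁) a
  -- descend d 1 ∘ ψ₁ along q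
  have hker2 : LinearMap.ker q ≤ LinearMap.ker ((d (0+1)) ∘ₗ ψ₁) := by
    rw [LinearMap.exact_iff.mp hiq]
    rintro _ ⟨a, rfl⟩
    have : ψ₁ (ι a) ∈ LinearMap.ker (d (0+1)) := by
      rw [hψ₁', ← hjrange]; exact ⟨φ a, rfl⟩
    simpa using this
  set α := descend q hq ((d (0+1)) ∘ₗ ψ₁) hker2 with hα
  have hαc : ∀ b, α (q b) = d (0+1) (ψ₁ b) := fun b => descend_apply _ _ _ _ b
  have hα0 : (d (0+1+1)).comp α = 0 := by
    apply eq_zero_of_comp_surjective hq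
    have : ((d (0+1+1)).comp α) ∘ₗ q = (d (0+1+1)) ∘ₗ ((d (0+1)) ∘ₗ ψ₁) := by
      ext b
      simp only [LinearMap.comp_apply]
      rw [hαc b]
    rw [this, ← LinearMap.comp_assoc, exact_comp_zero (hTA.2.1 (0+1)), LinearMap.zero_comp]
  obtain ⟨β, hβ⟩ := (hQ I d hTA (0+1) α).mp hα0
  have hβ' : ∀ c, d (0+1) (β c) = α c :=
    fun c => congrFun (congrArg (fun (v : _ →ₗ[R] _) => (v : _ → _)) hβ) c
  set ψ₂ := ψ₁ - β ∘ₗ q with hψ₂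
  have hrange : LinearMap.range ψ₂ ≤ LinearMap.range j := by
    rw [hjrange]
    rintro _ ⟨b, rfl⟩
    rw [LinearMap.mem_ker]
    simp only [hψ₂, LinearMap.sub_apply, LinearMap.comp_apply, map_sub, hβ', hαc]
    exact sub_self _
  set g := monoFactor j hjinj ψ₂ hrange with hg
  refine ⟨g, ?_⟩
  ext a
  apply hjinj
  have h5 : j (g (ι a)) = ψ₂ (ι a) := monoFactor_spec j hjinj ψ₂ hrange (ι a)
  have h6 : q (ι a) = 0 := hiq.apply_apply_eq_zero a
  simp only [LinearMap.comp_apply, h5, hψ₂, LinearMap.sub_apply, h6, map_zero, sub_zero,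
    hψ₁']

/-! ### `SplitsOver` -/

/-- every short exact sequence `0 → X → Y → Q → 0` splits. -/
def SplitsOver (Q X : ModuleCat.{u} R) : Prop :=
  ∀ (Y : ModuleCat.{u} R) (i : X →ₗ[R] Y) (p : Y →ₗ[R] Q),
    Function.Injective i → Function.Surjective p → Function.Exact i p →
    ∃ r : Y →ₗ[R] X, r ∘ₗ i = LinearMap.id

lemma gwi_splitsOver {X Q : ModuleCat.{u} R} (hX : GorensteinWeakInjective R X)
    (hQ : CC Q) : SplitsOver Q X := by
  intro Y i p hi hp hip
  exact gwi_extend hX hi hp hip hQ LinearMap.id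

lemma splitsOver_iso_left {Q X X' : ModuleCat.{u} R} (e : X ≃ₗ[R] X')
    (h : SplitsOver Q X) : SplitsOver Q X' := by
  intro Y i p hi hp hip
  obtain ⟨r, hr⟩ := h Y (i ∘ₗ e.toLinearMap) p (hi.comp e.injective) hp (by
    intro y
    rw [hip y]
    constructor
    · rintro ⟨x, rfl⟩; exact ⟨e.symm x, by simp⟩
    · rintro ⟨x, rfl⟩; exact ⟨e x, rfl⟩)
  refine ⟨e.toLinearMap ∘ₗ r, ?_⟩
  ext x'
  have := congrFun (congrArg (fun (v : _ →ₗ[R] _) => (v : _ → _)) hr) (e.symm x')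
  simp only [LinearMap.comp_apply, LinearEquiv.coe_coe] at this ⊢
  simp at this
  rw [this]
  simp

/-- lifting through a surjection whose kernel splits over `W`. -/
lemma lift_of_splitsOver {Y Z K W : ModuleCat.{u} R} {p : Y →ₗ[R] Z} {iK : K →ₗ[R] Y}
    (hp : Function.Surjective p) (hiK : Function.Injective iK)
    (hKe : Function.Exact iK p) (hsp : SplitsOver W K) (φ : W →ₗ[R] Z) :
    ∃ h : W →ₗ[R] Y, p ∘ₗ h = φ := by
  classical
  set YW := ModuleCat.of R (Y × W) with hYW
  set f : YW →ₗ[R] Z := p ∘ₗ LinearMap.fst R Y W - φ ∘ₗ LinearMap.snd R Y W with hf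
  set S := LinearMap.ker f with hS
  set PB := ModuleCat.of R S with hPB
  set vl : PB →ₗ[R] YW := S.subtype with hvl
  set c1 : PB →ₗ[R] Y := (LinearMap.fst R Y W) ∘ₗ vl with hc1
  set pr2 : PB →ₗ[R] W := (LinearMap.snd R Y W) ∘ₗ vl with hpr2
  have hfel : ∀ s : PB, p (c1 s) = φ (pr2 s) := by
    intro s
    have h0 : f (vl s) = 0 := LinearMap.mem_ker.mp s.2
    rw [hf] at h0
    simp only [LinearMap.sub_apply, LinearMap.comp_apply] at h0
    rw [sub_eq_zero] at h0
    exact h0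
  have hmemK : ∀ k : K, ((iK k, 0) : Y × W) ∈ S := by
    intro k
    have h1 : p (iK k) = 0 := hKe.apply_apply_eq_zero k
    show f _ = 0
    rw [hf]
    show p (iK k) - φ (0 : W) = 0
    rw [h1, map_zero, sub_zero]
  set iPB : K →ₗ[R] PB := LinearMap.codRestrict S (LinearMap.prod iK 0) (fun k => hmemK k)
    with hiPB
  have hc1iPB : ∀ k, c1 (iPB k) = iK k := fun _ => rfl
  have hpr2iPB : ∀ k, pr2 (iPB k) = 0 := fun _ => rfl
  have hiPBinj : Function.Injective iPB := by
    intro k₁ k₂ h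
    apply hiK
    rw [← hc1iPB k₁, ← hc1iPB k₂, h]
  have hpr2surj : Function.Surjective pr2 := by
    intro w
    obtain ⟨y, hy⟩ := hp (φ w)
    refine ⟨⟨(y, w), ?_⟩, rfl⟩
    show f _ = 0
    rw [hf]
    show p y - φ w = 0
    rw [hy, sub_self]
  have hexact : Function.Exact iPB pr2 := by
    intro s
    constructor
    · intro h0
      have h2 : p (c1 s) = 0 := by rw [hfel s, h0, map_zero]
      have h3 : c1 s ∈ LinearMap.range iK := by
        rw [← LinearMap.exact_iff.mp hKe]
        exact h2
      obtain ⟨k, hk⟩ := h3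
      refine ⟨k, ?_⟩
      apply Subtype.ext
      refine Prod.ext ?_ ?_
      · show iK k = c1 s
        exact hk
      · show (0 : W) = pr2 s
        exact (show pr2 s = 0 from h0).symm
    · rintro ⟨k, rfl⟩
      exact hpr2iPB k
  obtain ⟨r, hr⟩ := hsp PB iPB pr2 hiPBinj hpr2surj hexact
  have hr' : ∀ k, r (iPB k) = k :=
    fun k => congrFun (congrArg (fun (v : _ →ₗ[R] _) => (v : _ → _)) hr) k
  set K2 := LinearMap.ker r with hK2
  set e : K2 →ₗ[R] W := pr2 ∘ₗ K2.subtype with he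
  have hker0 : ∀ s : K2, e s = 0 → s = 0 := by
    intro s h0
    have hw : pr2 (s : PB) = 0 := h0
    have hpY : p (c1 (s : PB)) = 0 := by rw [hfel, hw, map_zero]
    have h3 : c1 (s : PB) ∈ LinearMap.range iK := by
      rw [← LinearMap.exact_iff.mp hKe]; exact hpY
    obtain ⟨k, hk⟩ := h3
    have h4 : (s : PB) = iPB k := by
      apply Subtype.ext
      refine Prod.ext ?_ ?_
      · show c1 (s : PB) = iK k
        exact hk.symm
      · show pr2 (s : PB) = (0 : W)
        exact hw
    have h6 : r (s : PB) = 0 := LinearMap.mem_ker.mp s.2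
    rw [h4, hr'] at h6
    apply Subtype.ext
    show (s : PB) = 0
    rw [h4, h6, map_zero]
  have heinj : Function.Injective e := by
    intro s₁ s₂ h12
    have := hker0 (s₁ - s₂) (by rw [map_sub, h12, sub_self])
    exact sub_eq_zero.mp this
  have hesurj : Function.Surjective e := by
    intro w
    obtain ⟨s₀, hs₀⟩ := hpr2surj w
    refine ⟨⟨s₀ - iPB (r s₀), ?_⟩, ?_⟩
    · rw [hK2, LinearMap.mem_ker, map_sub, hr', sub_self]
    · show pr2 (s₀ - iPB (r s₀)) = w
      rw [map_sub, hs₀, hpr2iPB, sub_zero]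
  set eE := LinearEquiv.ofBijective e ⟨heinj, hesurj⟩ with heE
  refine ⟨c1 ∘ₗ K2.subtype ∘ₗ eE.symm.toLinearMap, ?_⟩
  ext w
  set s : K2 := eE.symm w with hs
  have h7 : e s = w := by rw [hs]; exact eE.apply_symm_apply w
  have h8 : pr2 (K2.subtype s) = w := h7
  show p (c1 (K2.subtype ((eE.symm.toLinearMap) w))) = φ w
  rw [show (eE.symm.toLinearMap) w = s from rfl, hfel, h8]

lemma homContraExact_mk {X A B C : ModuleCat.{u} R} {f : A →ₗ[R] B} {g : B →ₗ[R] C}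
    (hses : ShortExactSeq R A B C f g)
    (hext : ∀ φ : A →ₗ[R] X, ∃ ψ : B →ₗ[R] X, ψ ∘ₗ f = φ) : HomContraExact R X f g :=
  ⟨hom_inj hses.2.1, hom_mid hses.2.1 hses.2.2, fun φ => hext φ⟩

lemma copureExact_of_CC {A B C : ModuleCat.{u} R} {f : A →ₗ[R] B} {g : B →ₗ[R] C}
    (hses : ShortExactSeq R A B C f g) (hC : CC C) : GWICopureExact R f g :=
  ⟨hses, fun X hX => homContraExact_mk hses
    (fun φ => gwi_extend hX hses.1 hses.2.1 hses.2.2 hC φ)⟩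

/-! ### Closure properties of `SplitsOver` -/

lemma splitsOver_ext {W A X B : ModuleCat.{u} R} {iA : A →ₗ[R] X} {pA : X →ₗ[R] B}
    (hiA : Function.Injective iA) (hpA : Function.Surjective pA)
    (heA : Function.Exact iA pA) (hA : SplitsOver W A) (hB : SplitsOver W B) :
    SplitsOver W X := by
  intro Y i p hi hp hip
  classical
  set N := LinearMap.range (i ∘ₗ iA) with hN
  set Ybar := ModuleCat.of R (Y ⧸ N) with hYbar
  set mk : Y →ₗ[R] Ybar := N.mkQ with hmk
  have hmksurj : Function.Surjective mk := Submodule.mkQ_surjective N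
  have hkermk : LinearMap.ker mk = N := Submodule.ker_mkQ N
  -- the induced sequence 0 → B → Ybar → W → 0
  have hker1 : LinearMap.ker pA ≤ LinearMap.ker (mk ∘ₗ i) := by
    rw [LinearMap.exact_iff.mp heA]
    rintro _ ⟨a, rfl⟩
    show mk (i (iA a)) = 0
    rw [← LinearMap.mem_ker, hkermk]
    exact ⟨a, rfl⟩
  set β : B →ₗ[R] Ybar := descend pA hpA (mk ∘ₗ i) hker1 with hβ
  have hβc : ∀ x, β (pA x) = mk (i x) := fun x => descend_apply _ _ _ _ x
  have hker2 : LinearMap.ker mk ≤ LinearMap.ker p := by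
    rw [hkermk, hN]
    rintro _ ⟨a, rfl⟩
    show p (i (iA a)) = 0
    exact hip.apply_apply_eq_zero (iA a)
  set pbar : Ybar →ₗ[R] W := descend mk hmksurj p hker2 with hpbar
  have hpbarc : ∀ y, pbar (mk y) = p y := fun y => descend_apply _ _ _ _ y
  have hβinj : Function.Injective β := by
    intro b₁ b₂ hb
    obtain ⟨x₁, rfl⟩ := hpA b₁
    obtain ⟨x₂, rfl⟩ := hpA b₂
    rw [hβc, hβc] at hb
    have : i x₁ - i x₂ ∈ N := by
      rw [← hkermk, LinearMap.mem_ker, map_sub, sub_eq_zero]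
      exact hb
    obtain ⟨a, ha⟩ := this
    have hx : i (x₁ - x₂) = i (iA a) := by rw [map_sub]; exact ha.symm
    have hx2 := hi hx
    have : pA (x₁ - x₂) = pA (iA a) := by rw [hx2]
    rw [map_sub, heA.apply_apply_eq_zero a] at this
    exact sub_eq_zero.mp this
  have hpbarsurj : Function.Surjective pbar :=
    descend_surjective _ _ _ _ hp
  have hβpbar : Function.Exact β pbar := by
    intro ybar
    constructor
    · intro h0
      obtain ⟨y, rfl⟩ := hmksurj ybar
      rw [hpbarc] at h0
      obtain ⟨x, rfl⟩ := (hip y).mp h0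
      exact ⟨pA x, (hβc x)⟩
    · rintro ⟨b, rfl⟩
      obtain ⟨x, rfl⟩ := hpA b
      rw [hβc, hpbarc]
      exact hip.apply_apply_eq_zero x
  obtain ⟨rB, hrB⟩ := hB Ybar β pbar hβinj hpbarsurj hβpbar
  have hrB' : ∀ b, rB (β b) = b :=
    fun b => congrFun (congrArg (fun (v : _ →ₗ[R] _) => (v : _ → _)) hrB) b
  set s : Y →ₗ[R] B := rB ∘ₗ mk with hs
  have hsx : ∀ x, s (i x) = pA x := by
    intro x
    show rB (mk (i x)) = pA x
    rw [← hβc, hrB']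
  -- the kernel of s
  set K := LinearMap.ker s with hK
  set MK := ModuleCat.of R K with hMK
  have hmem1 : ∀ a, i (iA a) ∈ K := by
    intro a
    rw [hK, LinearMap.mem_ker, hsx, heA.apply_apply_eq_zero a]
  set ιA : A →ₗ[R] MK := LinearMap.codRestrict K (i ∘ₗ iA) hmem1 with hιA
  set pW : MK →ₗ[R] W := p ∘ₗ K.subtype with hpW
  have hιAinj : Function.Injective ιA := by
    intro a₁ a₂ h
    have : i (iA a₁) = i (iA a₂) := congrArg (fun k : K => (k : Y)) h
    exact hiA (hi this)
  have hpWsurj : Function.Surjective pW := by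
    intro w
    obtain ⟨y, hy⟩ := hp w
    obtain ⟨x₀, hx₀⟩ := hpA (s y)
    refine ⟨⟨y - i x₀, ?_⟩, ?_⟩
    · rw [hK, LinearMap.mem_ker, map_sub, hsx, hx₀, sub_self]
    · show p (y - i x₀) = w
      rw [map_sub, hy, hip.apply_apply_eq_zero x₀, sub_zero]
  have hεexact : Function.Exact ιA pW := by
    intro k
    constructor
    · intro h0
      have hpk : p (K.subtype k) = 0 := h0
      obtain ⟨x, hx⟩ := (hip (K.subtype k)).mp hpk
      have hsk : s (K.subtype k) = 0 := LinearMap.mem_ker.mp k.2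
      rw [← hx, hsx] at hsk
      obtain ⟨a, ha⟩ := (heA x).mp hsk
      refine ⟨a, ?_⟩
      apply Subtype.ext
      show i (iA a) = K.subtype k
      rw [ha, hx]
    · rintro ⟨a, rfl⟩
      show p (i (iA a)) = 0
      exact hip.apply_apply_eq_zero (iA a)
  obtain ⟨rA, hrA⟩ := hA MK ιA pW hιAinj hpWsurj hεexact
  have hrA' : ∀ a, rA (ιA a) = a :=
    fun a => congrFun (congrArg (fun (v : _ →ₗ[R] _) => (v : _ → _)) hrA) a
  -- patch the two retractions together
  set F := ModuleCat.of R (K × X) with hF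
  set add : F →ₗ[R] Y := K.subtype ∘ₗ LinearMap.fst R K X + i ∘ₗ LinearMap.snd R K X
    with hadd
  have haddel : ∀ u : K × X, add u = (u.1 : Y) + i u.2 := fun u => rfl
  have haddsurj : Function.Surjective add := by
    intro y
    obtain ⟨x₀, hx₀⟩ := hpA (s y)
    refine ⟨(⟨y - i x₀, ?_⟩, x₀), ?_⟩
    · rw [hK, LinearMap.mem_ker, map_sub, hsx, hx₀, sub_self]
    · rw [haddel]
      show y - i x₀ + i x₀ = y
      rw [sub_add_cancel]
  set ρt : F →ₗ[R] X := iA ∘ₗ rA ∘ₗ LinearMap.fst R K X + LinearMap.snd R K X with hρt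
  have hρtel : ∀ u : K × X, ρt u = iA (rA u.1) + u.2 := fun u => rfl
  have hkerρ : LinearMap.ker add ≤ LinearMap.ker ρt := by
    rintro ⟨k, x⟩ hu
    rw [LinearMap.mem_ker, haddel] at hu
    have hik : (k : Y) = i (-x) :=
      (eq_neg_of_add_eq_zero_left hu).trans (map_neg i x).symm
    have hs0 : s (k : Y) = 0 := LinearMap.mem_ker.mp k.2
    have hpAx : pA (-x) = 0 := by rw [← hsx, ← hik, hs0]
    obtain ⟨a, ha⟩ := (heA (-x)).mp hpAx
    have hk : k = ιA a := by
      apply Subtype.ext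
      show (k : Y) = i (iA a)
      rw [hik, ha]
    rw [LinearMap.mem_ker, hρtel, hk, hrA', ha]
    exact neg_add_cancel x
  set ρ := descend add haddsurj ρt hkerρ with hρ
  refine ⟨ρ, ?_⟩
  ext x
  show ρ (i x) = x
  have h9 : i x = add ((0 : K), x) := by
    rw [haddel]
    show i x = ((0 : K) : Y) + i x
    rw [ZeroMemClass.coe_zero, zero_add]
  rw [h9, hρ, descend_apply, hρtel]
  show iA (rA 0) + x = x
  rw [map_zero, map_zero, zero_add]

set_option maxHeartbeats 1000000 in
/-- a retract of a module that splits over `W` splits over `W`. -/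
lemma splitsOver_retract {W G X : ModuleCat.{u} R} (σ : X →ₗ[R] G) (ρ : G →ₗ[R] X)
    (hρσ : ρ ∘ₗ σ = LinearMap.id) (hG : SplitsOver W G) : SplitsOver W X := by
  intro Y i p hi hp hip
  classical
  have hρσ' : ∀ x, ρ (σ x) = x :=
    fun x => congrFun (congrArg (fun (v : _ →ₗ[R] _) => (v : _ → _)) hρσ) x
  set q0 : X →ₗ[R] ModuleCat.of R (Y × G) := LinearMap.prod i (-σ) with hq0
  set D := LinearMap.range q0 with hD
  set Y2 := ModuleCat.of R ((Y × G) ⧸ D) with hY2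
  set mk2 : ModuleCat.of R (Y × G) →ₗ[R] Y2 := D.mkQ with hmk2
  have hmk2surj : Function.Surjective mk2 := Submodule.mkQ_surjective D
  have hkermk2 : LinearMap.ker mk2 = D := Submodule.ker_mkQ D
  set j : G →ₗ[R] Y2 := mk2 ∘ₗ LinearMap.inr R Y G with hj
  have hjel : ∀ g, j g = mk2 ((0 : Y), g) := fun g => rfl
  have hker3 : LinearMap.ker mk2 ≤ LinearMap.ker (p ∘ₗ LinearMap.fst R Y G) := by
    rw [hkermk2, hD]
    rintro _ ⟨x, rfl⟩
    show p (i x) = 0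
    exact hip.apply_apply_eq_zero x
  set p2 : Y2 →ₗ[R] W := descend mk2 hmk2surj (p ∘ₗ LinearMap.fst R Y G) hker3 with hp2
  have hp2el : ∀ u : Y × G, p2 (mk2 u) = (p ∘ₗ LinearMap.fst R Y G) u :=
    fun u => descend_apply (A := ModuleCat.of R (Y × G)) (B := Y2) (C := W)
      mk2 hmk2surj (p ∘ₗ LinearMap.fst R Y G) hker3 u
  have hjinj : Function.Injective j := by
    intro g₁ g₂ h
    have hsub : (((0 : Y), g₁ - g₂) : Y × G) ∈ D := by
      rw [← hkermk2, LinearMap.mem_ker]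
      have h2 : mk2 (((0 : Y), g₁) - ((0 : Y), g₂)) = 0 := by
        rw [map_sub, ← hjel, ← hjel, h, sub_self]
      have h3 : (((0 : Y), g₁) - ((0 : Y), g₂) : Y × G) = ((0 : Y), g₁ - g₂) := by
        show (((0 : Y) - 0, g₁ - g₂) : Y × G) = ((0 : Y), g₁ - g₂)
        rw [sub_zero]
      rw [← h3]
      exact h2
    obtain ⟨x, hx⟩ := hsub
    have hx1 : i x = 0 := congrArg Prod.fst hx
    have hx0 : x = 0 := by
      apply hi
      rw [hx1, map_zero]
    have hx2 : -σ x = g₁ - g₂ := congrArg Prod.snd hx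
    rw [hx0, map_zero, neg_zero] at hx2
    exact sub_eq_zero.mp hx2.symm
  have hp2surj : Function.Surjective p2 := by
    intro w
    obtain ⟨y, hy⟩ := hp w
    exact ⟨mk2 (y, 0), by rw [hp2el]; exact hy⟩
  have hjp2 : Function.Exact j p2 := by
    intro y2
    constructor
    · intro h0
      obtain ⟨⟨y, g⟩, rfl⟩ := hmk2surj y2
      rw [hp2el] at h0
      obtain ⟨x, hx⟩ := (hip y).mp h0
      refine ⟨g + σ x, ?_⟩
      rw [hjel]
      have h4 : (((0 : Y), g + σ x) - (y, g) : Y × G) = q0 (-x) := by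
        rw [hq0]
        show (((0 : Y) - y, g + σ x - g) : Y × G) = (i (-x), (-σ) (-x))
        have h5 : (-σ) (-x) = σ x := by
          show -(σ (-x)) = σ x
          rw [map_neg, neg_neg]
        rw [zero_sub, add_sub_cancel_left, map_neg, hx, h5]
      rw [← sub_eq_zero, ← map_sub, ← LinearMap.mem_ker, hkermk2, h4]
      exact ⟨-x, rfl⟩
    · rintro ⟨g, rfl⟩
      rw [hjel, hp2el]
      exact map_zero p
  obtain ⟨r2, hr2⟩ := hG Y2 j p2 hjinj hp2surj hjp2
  have hr2' : ∀ g, r2 (j g) = g :=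
    fun g => congrFun (congrArg (fun (v : _ →ₗ[R] _) => (v : _ → _)) hr2) g
  refine ⟨ρ ∘ₗ r2 ∘ₗ (mk2 ∘ₗ LinearMap.inl R Y G), ?_⟩
  ext x
  show ρ (r2 (mk2 ((LinearMap.inl R Y G) (i x)))) = x
  have h1 : mk2 ((i x, (0 : G)) : Y × G) = j (σ x) := by
    rw [hjel, ← sub_eq_zero, ← map_sub, ← LinearMap.mem_ker, hkermk2]
    refine ⟨x, ?_⟩
    rw [hq0]
    refine Prod.ext ?_ ?_
    · show i x = i x - 0
      rw [sub_zero]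
    · show -(σ x) = (0 : G) - σ x
      rw [zero_sub]
  show ρ (r2 (mk2 ((i x, (0 : G)) : Y × G))) = x
  rw [h1, hr2', hρσ']

/-- from a retraction of a short exact sequence, get a section with matching exactness. -/
lemma splitting_data {X Y W : ModuleCat.{u} R} {i : X →ₗ[R] Y} {p : Y →ₗ[R] W}
    (hi : Function.Injective i) (hp : Function.Surjective p) (hip : Function.Exact i p)
    (r : Y →ₗ[R] X) (hr : r ∘ₗ i = LinearMap.id) :
    ∃ sct : W →ₗ[R] Y, p ∘ₗ sct = LinearMap.id ∧ Function.Exact sct r ∧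
      Function.Injective sct ∧ Function.Surjective r := by
  classical
  have hr' : ∀ x, r (i x) = x :=
    fun x => congrFun (congrArg (fun (v : _ →ₗ[R] _) => (v : _ → _)) hr) x
  set K2 := LinearMap.ker r with hK2
  set e : K2 →ₗ[R] W := p ∘ₗ K2.subtype with he
  have hker0 : ∀ s : K2, e s = 0 → s = 0 := by
    intro s h0
    obtain ⟨x, hx⟩ := (hip ((s : Y))).mp h0
    have h1 : r ((s : Y)) = 0 := LinearMap.mem_ker.mp s.2
    rw [← hx, hr'] at h1
    apply Subtype.ext
    show (s : Y) = 0
    rw [← hx, h1, map_zero]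
  have heinj : Function.Injective e := by
    intro s₁ s₂ h12
    have := hker0 (s₁ - s₂) (by rw [map_sub, h12, sub_self])
    exact sub_eq_zero.mp this
  have hesurj : Function.Surjective e := by
    intro w
    obtain ⟨y, hy⟩ := hp w
    refine ⟨⟨y - i (r y), ?_⟩, ?_⟩
    · rw [hK2, LinearMap.mem_ker, map_sub, hr', sub_self]
    · show p (y - i (r y)) = w
      rw [map_sub, hy, hip.apply_apply_eq_zero (r y), sub_zero]
  set eE := LinearEquiv.ofBijective e ⟨heinj, hesurj⟩ with heE
  set sct : W →ₗ[R] Y := K2.subtype ∘ₗ eE.symm.toLinearMap with hsct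
  have hscel : ∀ w, sct w = ((eE.symm w : K2) : Y) := fun w => rfl
  refine ⟨sct, ?_, ?_, ?_, ?_⟩
  · ext w
    show p (sct w) = w
    rw [hscel]
    exact eE.apply_symm_apply w
  · intro y
    constructor
    · intro h0
      refine ⟨e ⟨y, LinearMap.mem_ker.mpr h0⟩, ?_⟩
      rw [hscel]
      have h2 : eE.symm (e ⟨y, LinearMap.mem_ker.mpr h0⟩) = ⟨y, LinearMap.mem_ker.mpr h0⟩ :=
        eE.symm_apply_apply _
      rw [h2]
    · rintro ⟨w, rfl⟩
      rw [hscel]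
      exact LinearMap.mem_ker.mp (eE.symm w).2
  · intro w₁ w₂ h
    rw [hscel, hscel] at h
    have := Subtype.ext h
    exact eE.symm.injective this
  · intro x
    exact ⟨i x, hr' x⟩

/-! ### Complexes: shifts, cosyzygies, syzygies -/

lemma gwi_iso {X X' : ModuleCat.{u} R} (e : X ≃ₗ[R] X')
    (hX : GorensteinWeakInjective R X) : GorensteinWeakInjective R X' := by
  obtain ⟨I, d, π, hTA, hπs, hπe⟩ := hX
  refine ⟨I, d, e.toLinearMap ∘ₗ π, hTA, e.surjective.comp hπs, ?_⟩
  intro y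
  rw [← hπe y]
  constructor
  · intro h0
    show π y = 0
    apply e.injective
    rw [map_zero]
    exact h0
  · intro h0
    show e (π y) = 0
    rw [show π y = 0 from h0, map_zero]

lemma gwi_of_subsingleton (X : ModuleCat.{u} R) [Subsingleton X] :
    GorensteinWeakInjective R X := by
  have hinj : Module.Injective R X := subsingleton_injective X
  refine ⟨fun _ => X, fun _ => 0, LinearMap.id, ⟨fun _ => hinj, ?_, ?_⟩, fun x => ⟨x, rfl⟩, ?_⟩
  · intro n y
    constructor
    · intro _
      exact ⟨y, Subsingleton.elim _ _⟩
    · intro _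
      exact Subsingleton.elim _ _
  · intro W hW n g
    constructor
    · intro _
      refine ⟨g, ?_⟩
      ext w
      exact Subsingleton.elim _ _
    · intro _
      ext w
      exact Subsingleton.elim _ _
  · intro y
    constructor
    · intro _
      exact ⟨y, Subsingleton.elim _ _⟩
    · intro _
      exact Subsingleton.elim _ _

/-- forward cosyzygy: every Gorenstein weak injective module embeds into an injective
module with Gorenstein weak injective cokernel. -/
lemma gwi_cosyzygy {X : ModuleCat.{u} R} (hX : GorensteinWeakInjective R X) :
    ∃ (E X' : ModuleCat.{u} R) (jm : X →ₗ[R] E) (qm : E →ₗ[R] X'),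
      Module.Injective R E ∧ Function.Injective jm ∧ Function.Surjective qm ∧
      Function.Exact jm qm ∧ GorensteinWeakInjective R X' := by
  obtain ⟨I, d, π, hTA, hπs, hπe⟩ := hX
  have hkerπ : LinearMap.ker π = LinearMap.range (d (-1)) := LinearMap.exact_iff.mp hπe
  have hkerd0 : LinearMap.ker (d 0) = LinearMap.range (d (-1)) :=
    LinearMap.exact_iff.mp (hTA.2.1 (-1))
  have hkerππ : LinearMap.ker π ≤ LinearMap.ker (d 0) := by rw [hkerπ, hkerd0]
  set j := descend π hπs (d 0) hkerππ with hj
  have hjc : ∀ b, j (π b) = d 0 b := fun b => descend_apply π hπs (d 0) hkerππ b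
  have hjinj : Function.Injective j := by
    rw [← LinearMap.ker_eq_bot, Submodule.eq_bot_iff]
    intro x hx
    obtain ⟨b, rfl⟩ := hπs x
    rw [LinearMap.mem_ker, hjc] at hx
    have hb : b ∈ LinearMap.ker π := by rw [hkerπ, ← hkerd0]; exact hx
    exact hb
  have hjrange : LinearMap.range j = LinearMap.range (d 0) := by
    apply le_antisymm
    · rintro _ ⟨x, rfl⟩
      obtain ⟨b, rfl⟩ := hπs x
      exact ⟨b, (hjc b).symm⟩
    · rintro _ ⟨b, rfl⟩
      exact ⟨π b, hjc b⟩
  set X' := ModuleCat.of R (I (0+1) ⧸ LinearMap.range (d 0)) with hX'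
  set qm : I (0+1) →ₗ[R] X' := (LinearMap.range (d 0)).mkQ with hqm
  refine ⟨I (0+1), X', j, qm, hTA.1 (0+1), hjinj, Submodule.mkQ_surjective _, ?_, ?_⟩
  · intro y
    rw [hqm]
    constructor
    · intro h0
      have : y ∈ LinearMap.range (d 0) := by
        rw [← Submodule.ker_mkQ (LinearMap.range (d 0))]
        exact h0
      rw [← hjrange] at this
      exact this
    · rintro ⟨x, rfl⟩
      rw [← LinearMap.mem_ker, Submodule.ker_mkQ, ← hjrange]
      exact ⟨x, rfl⟩
  · -- the shifted complex exhibits X' as Gorenstein weak injective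
    refine ⟨fun n => I (n+1), fun n => d (n+1), qm, ⟨fun n => hTA.1 (n+1),
      fun n => hTA.2.1 (n+1), fun W hW n => hTA.2.2 W hW (n+1)⟩,
      Submodule.mkQ_surjective _, ?_⟩
    intro y
    constructor
    · intro h0
      have : y ∈ LinearMap.range (d 0) := by
        rw [← Submodule.ker_mkQ (LinearMap.range (d 0))]
        exact h0
      exact this
    · rintro ⟨x, rfl⟩
      rw [← LinearMap.mem_ker, Submodule.ker_mkQ]
      exact ⟨x, rfl⟩

/-- the complex shifted down by one. -/
def shJ (I : ℤ → ModuleCat.{u} R) : ℤ → ModuleCat.{u} R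
  | .ofNat 0 => I (.negSucc 0)
  | .ofNat (k+1) => I (.ofNat k)
  | .negSucc k => I (.negSucc (k+1))

def shD (I : ℤ → ModuleCat.{u} R) (d : ∀ n : ℤ, I n →ₗ[R] I (n + 1)) :
    ∀ n : ℤ, shJ I n →ₗ[R] shJ I (n + 1)
  | .ofNat 0 => d (.negSucc 0)
  | .ofNat (k+1) => d (.ofNat k)
  | .negSucc 0 => d (.negSucc 1)
  | .negSucc (k+1) => d (.negSucc (k+2))

lemma shTA (I : ℤ → ModuleCat.{u} R) (d : ∀ n : ℤ, I n →ₗ[R] I (n + 1))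
    (hTA : IsTotallyAcyclicInjComplex R (WeakInjective R) I d) :
    IsTotallyAcyclicInjComplex R (WeakInjective R) (shJ I) (shD I d) := by
  refine ⟨?_, ?_, ?_⟩
  · intro n
    match n with
    | .ofNat 0 => exact hTA.1 (.negSucc 0)
    | .ofNat (k+1) => exact hTA.1 (.ofNat k)
    | .negSucc k => exact hTA.1 (.negSucc (k+1))
  · intro n
    match n with
    | .ofNat 0 => exact hTA.2.1 (.negSucc 0)
    | .ofNat (k+1) => exact hTA.2.1 (.ofNat k)
    | .negSucc 0 => exact hTA.2.1 (.negSucc 1)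
    | .negSucc 1 => exact hTA.2.1 (.negSucc 2)
    | .negSucc (k+2) => exact hTA.2.1 (.negSucc (k+3))
  · intro W hW n
    match n with
    | .ofNat 0 => exact hTA.2.2 W hW (.negSucc 0)
    | .ofNat (k+1) => exact hTA.2.2 W hW (.ofNat k)
    | .negSucc 0 => exact hTA.2.2 W hW (.negSucc 1)
    | .negSucc 1 => exact hTA.2.2 W hW (.negSucc 2)
    | .negSucc (k+2) => exact hTA.2.2 W hW (.negSucc (k+3))

/-- backward syzygy: every Gorenstein weak injective module is the quotient of an
injective module by a Gorenstein weak injective submodule. -/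
lemma gwi_syzygy {X : ModuleCat.{u} R} (hX : GorensteinWeakInjective R X) :
    ∃ (E K : ModuleCat.{u} R) (pm : E →ₗ[R] X) (im : K →ₗ[R] E),
      Module.Injective R E ∧ Function.Surjective pm ∧ Function.Injective im ∧
      Function.Exact im pm ∧ GorensteinWeakInjective R K := by
  obtain ⟨I, d, π, hTA, hπs, hπe⟩ := hX
  have hkerπ : LinearMap.ker π = LinearMap.range (d (-1)) := LinearMap.exact_iff.mp hπe
  set K := ModuleCat.of R (LinearMap.ker π) with hK
  refine ⟨I 0, K, π, (LinearMap.ker π).subtype, hTA.1 0, hπs, Subtype.val_injective, ?_, ?_⟩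
  · intro y
    constructor
    · intro h0
      exact ⟨⟨y, LinearMap.mem_ker.mpr h0⟩, rfl⟩
    · rintro ⟨k, rfl⟩
      exact LinearMap.mem_ker.mp k.2
  · -- K is the cokernel of the shifted-down complex
    have hmem : ∀ x : shJ I (.ofNat 0), d (.negSucc 0) x ∈ LinearMap.ker π := by
      intro x
      rw [hkerπ]
      exact ⟨x, rfl⟩
    set πK : shJ I 0 →ₗ[R] K := LinearMap.codRestrict (LinearMap.ker π) (d (.negSucc 0)) hmem
      with hπK
    refine ⟨shJ I, shD I d, πK, shTA I d hTA, ?_, ?_⟩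
    · rintro ⟨y, hy⟩
      rw [hkerπ] at hy
      obtain ⟨x, hx⟩ := hy
      exact ⟨x, Subtype.ext hx⟩
    · intro y
      constructor
      · intro h0
        have h1 : d (.negSucc 0) y = 0 := congrArg Subtype.val h0
        have h2 : y ∈ LinearMap.range (d (.negSucc 1)) := by
          rw [← LinearMap.exact_iff.mp (hTA.2.1 (.negSucc 1))]
          exact h1
        obtain ⟨x, hx⟩ := h2
        exact ⟨x, hx⟩
      · rintro ⟨x, rfl⟩
        apply Subtype.ext
        show d (.negSucc 0) ((shD I d) (.negSucc 0) x) = 0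
        exact (hTA.2.1 (.negSucc 1)).apply_apply_eq_zero x

/-! ### Embedding and epi data, horseshoe lemmas -/

structure EmbedData (X : ModuleCat.{u} R) : Type (u+1) where
  E : ModuleCat.{u} R
  cok : ModuleCat.{u} R
  j : X →ₗ[R] E
  q : E →ₗ[R] cok
  injE : Module.Injective R E
  inj_j : Function.Injective j
  surj_q : Function.Surjective q
  exact : Function.Exact j q

structure EpiData (X : ModuleCat.{u} R) : Type (u+1) where
  E : ModuleCat.{u} R
  ker : ModuleCat.{u} R
  p : E →ₗ[R] X
  i : ker →ₗ[R] E
  injE : Module.Injective R E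
  surj_p : Function.Surjective p
  inj_i : Function.Injective i
  exact : Function.Exact i p

def embedData_iso {X Y : ModuleCat.{u} R} (e : X ≃ₗ[R] Y) (D : EmbedData X) :
    EmbedData Y where
  E := D.E
  cok := D.cok
  j := D.j ∘ₗ e.symm.toLinearMap
  q := D.q
  injE := D.injE
  inj_j := D.inj_j.comp e.symm.injective
  surj_q := D.surj_q
  exact := by
    intro v
    rw [D.exact v]
    constructor
    · rintro ⟨x, rfl⟩
      exact ⟨e x, by simp⟩
    · rintro ⟨y, rfl⟩
      exact ⟨e.symm y, rfl⟩

def epiData_iso {X Y : ModuleCat.{u} R} (e : X ≃ₗ[R] Y) (D : EpiData X) :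
    EpiData Y where
  E := D.E
  ker := D.ker
  p := e.toLinearMap ∘ₗ D.p
  i := D.i
  injE := D.injE
  surj_p := e.surjective.comp D.surj_p
  inj_i := D.inj_i
  exact := by
    intro v
    rw [← D.exact v]
    constructor
    · intro h0
      apply e.injective
      rw [map_zero]
      exact h0
    · intro h0
      show e (D.p v) = 0
      rw [show D.p v = 0 from h0, map_zero]

/-- horseshoe lemma for embeddings. -/
lemma embed_ext {A X B : ModuleCat.{u} R} (i : A →ₗ[R] X) (p : X →ₗ[R] B)
    (hses : ShortExactSeq R A X B i p) (DA : EmbedData A) (DB : EmbedData B) :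
    ∃ (D : EmbedData X) (α : DA.cok →ₗ[R] D.cok) (β : D.cok →ₗ[R] DB.cok),
      ShortExactSeq R DA.cok D.cok DB.cok α β := by
  classical
  obtain ⟨hi, hp, hip⟩ := hses
  obtain ⟨h, hh⟩ := inj_extend DA.injE i hi DA.j
  have hh' : ∀ a, h (i a) = DA.j a :=
    fun a => congrFun (congrArg (fun (v : _ →ₗ[R] _) => (v : _ → _)) hh) a
  set E := ModuleCat.of R (DA.E × DB.E) with hE
  set J : X →ₗ[R] E := LinearMap.prod h (DB.j ∘ₗ p) with hJ
  have hJel : ∀ x, J x = (h x, DB.j (p x)) := fun _ => rfl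
  have hJinj : Function.Injective J := by
    intro x₁ x₂ h12
    have h1 : h x₁ = h x₂ := congrArg Prod.fst h12
    have h2 : DB.j (p x₁) = DB.j (p x₂) := congrArg Prod.snd h12
    have h3 : p (x₁ - x₂) = 0 := by
      rw [map_sub, sub_eq_zero]
      exact DB.inj_j h2
    obtain ⟨a, ha⟩ := (hip _).mp h3
    have h4 : h (x₁ - x₂) = 0 := by rw [map_sub, sub_eq_zero]; exact h1
    rw [← ha, hh'] at h4
    have h5 : a = 0 := DA.inj_j (by rw [h4, map_zero])
    rw [h5, map_zero] at ha
    exact sub_eq_zero.mp ha.symm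
  set N := LinearMap.range J with hN
  set cok := ModuleCat.of R (E ⧸ N) with hcok
  set q : E →ₗ[R] cok := N.mkQ with hq
  have hqsurj : Function.Surjective q := Submodule.mkQ_surjective N
  have hkerq : LinearMap.ker q = N := Submodule.ker_mkQ N
  have hJq : Function.Exact J q := by
    intro v
    constructor
    · intro h0
      have : v ∈ N := by rw [← hkerq]; exact h0
      exact this
    · rintro ⟨x, rfl⟩
      rw [← LinearMap.mem_ker, hkerq]
      exact ⟨x, rfl⟩
  -- the map DA.cok → cok
  have hker1 : LinearMap.ker DA.q ≤
      LinearMap.ker (q ∘ₗ LinearMap.inl R DA.E DB.E) := by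
    rw [LinearMap.exact_iff.mp DA.exact]
    rintro _ ⟨a, rfl⟩
    show q ((DA.j a, 0)) = 0
    rw [← LinearMap.mem_ker, hkerq, hN]
    refine ⟨i a, ?_⟩
    rw [hJel, hh', hip.apply_apply_eq_zero a, map_zero]
  set α : DA.cok →ₗ[R] cok := descend DA.q DA.surj_q (q ∘ₗ LinearMap.inl R DA.E DB.E) hker1
    with hα
  have hαel : ∀ u, α (DA.q u) = q ((u, 0)) := fun u => descend_apply _ _ _ _ u
  -- the map cok → DB.cok
  have hker2 : LinearMap.ker q ≤ LinearMap.ker (DB.q ∘ₗ LinearMap.snd R DA.E DB.E) := by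
    rw [hkerq, hN]
    rintro _ ⟨x, rfl⟩
    show DB.q (DB.j (p x)) = 0
    exact DB.exact.apply_apply_eq_zero (p x)
  set β : cok →ₗ[R] DB.cok := descend q hqsurj (DB.q ∘ₗ LinearMap.snd R DA.E DB.E) hker2
    with hβ
  have hβel : ∀ u : DA.E × DB.E, β (q u) = DB.q u.2 :=
    fun u => descend_apply (A := E) q hqsurj _ hker2 u
  refine ⟨⟨E, cok, J, q, prod_injective DA.E DB.E DA.injE DB.injE, hJinj, hqsurj, hJq⟩,
    α, β, ?_, ?_, ?_⟩
  · -- injectivity of α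
    intro c₁ c₂ h12
    obtain ⟨u₁, rfl⟩ := DA.surj_q c₁
    obtain ⟨u₂, rfl⟩ := DA.surj_q c₂
    rw [hαel, hαel] at h12
    have h3 : ((u₁ - u₂ : DA.E), (0 : DB.E)) ∈ N := by
      rw [← hkerq, LinearMap.mem_ker]
      have : q (((u₁ : DA.E), (0:DB.E)) - ((u₂ : DA.E), (0:DB.E))) = 0 := by
        rw [map_sub, h12, sub_self]
      have heq : (((u₁ : DA.E), (0:DB.E)) - ((u₂ : DA.E), (0:DB.E)) : DA.E × DB.E)
          = ((u₁ - u₂ : DA.E), (0 : DB.E)) := by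
        show ((u₁ - u₂ : DA.E), (0 - 0 : DB.E)) = ((u₁ - u₂ : DA.E), (0 : DB.E))
        rw [sub_zero]
      rw [← heq]
      exact this
    obtain ⟨x, hx⟩ := h3
    have hx2 : DB.j (p x) = 0 := congrArg Prod.snd hx
    have hx3 : p x = 0 := DB.inj_j (by rw [hx2, map_zero])
    obtain ⟨a, ha⟩ := (hip x).mp hx3
    have hx1 : h x = u₁ - u₂ := congrArg Prod.fst hx
    rw [← ha, hh'] at hx1
    rw [← sub_eq_zero, ← map_sub, ← hx1]
    exact DA.exact.apply_apply_eq_zero a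
  · -- surjectivity of β
    intro cB
    obtain ⟨v, rfl⟩ := DB.surj_q cB
    exact ⟨q ((0, v)), hβel (0, v)⟩
  · -- exactness
    intro c
    constructor
    · intro h0
      obtain ⟨⟨u, v⟩, rfl⟩ := hqsurj c
      rw [hβel] at h0
      obtain ⟨b, hb⟩ := (DB.exact v).mp h0
      obtain ⟨x, rfl⟩ := hp b
      refine ⟨DA.q (u - h x), ?_⟩
      have hJx : q (J x) = 0 := by
        rw [← LinearMap.mem_ker, hkerq]
        exact ⟨x, rfl⟩
      rw [hαel]
      rw [← sub_eq_zero, ← map_sub]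
      have hpair : ((((u - h x : DA.E), (0 : DB.E)) : ↑DA.E × ↑DB.E) - ((u, v))) = -(J x) := by
        rw [hJel]
        refine Prod.ext ?_ ?_
        · show u - h x - u = -(h x)
          rw [sub_sub_cancel_left]
        · show (0 : DB.E) - v = -(DB.j (p x))
          rw [hb, zero_sub]
      rw [hpair, map_neg, hJx, neg_zero]
    · rintro ⟨cA, rfl⟩
      obtain ⟨u, rfl⟩ := DA.surj_q cA
      rw [hαel, hβel]
      exact map_zero DB.q

/-- co-horseshoe lemma for epimorphisms. -/
lemma epi_ext {A X B : ModuleCat.{u} R} (i : A →ₗ[R] X) (p : X →ₗ[R] B)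
    (hses : ShortExactSeq R A X B i p) (DA : EpiData A) (DB : EpiData B)
    (hsp : SplitsOver DB.E A) :
    ∃ (D : EpiData X) (α : DA.ker →ₗ[R] D.ker) (β : D.ker →ₗ[R] DB.ker),
      ShortExactSeq R DA.ker D.ker DB.ker α β := by
  classical
  obtain ⟨hi, hp, hip⟩ := hses
  obtain ⟨u, hu⟩ := lift_of_splitsOver hp hi hip hsp DB.p
  have hu' : ∀ v, p (u v) = DB.p v :=
    fun v => congrFun (congrArg (fun (w : _ →ₗ[R] _) => (w : _ → _)) hu) v
  set E := ModuleCat.of R (DA.E × DB.E) with hE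
  set Pp : E →ₗ[R] X := i ∘ₗ DA.p ∘ₗ LinearMap.fst R DA.E DB.E + u ∘ₗ LinearMap.snd R DA.E DB.E
    with hPp
  have hPpel : ∀ w : DA.E × DB.E, Pp w = i (DA.p w.1) + u w.2 := fun _ => rfl
  have hPpsurj : Function.Surjective Pp := by
    intro x
    obtain ⟨v, hv⟩ := DB.surj_p (p x)
    have h1 : p (x - u v) = 0 := by rw [map_sub, hu', hv, sub_self]
    obtain ⟨a, ha⟩ := (hip _).mp h1
    obtain ⟨e, he⟩ := DA.surj_p a
    refine ⟨(e, v), ?_⟩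
    rw [hPpel]
    show i (DA.p e) + u v = x
    rw [he, ha]
    exact sub_add_cancel x (u v)
  set K := ModuleCat.of R (LinearMap.ker Pp) with hK
  set iK : K →ₗ[R] E := (LinearMap.ker Pp).subtype with hiK
  have hKexact : Function.Exact iK Pp := by
    intro w
    constructor
    · intro h0
      exact ⟨⟨w, LinearMap.mem_ker.mpr h0⟩, rfl⟩
    · rintro ⟨k, rfl⟩
      exact LinearMap.mem_ker.mp k.2
  -- the map DA.ker → K
  have hmemα : ∀ a', ((DA.i a', 0) : DA.E × DB.E) ∈ LinearMap.ker Pp := by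
    intro a'
    apply LinearMap.mem_ker.mpr
    show i (DA.p (DA.i a')) + u 0 = 0
    rw [DA.exact.apply_apply_eq_zero a', map_zero, map_zero, add_zero]
  set α : DA.ker →ₗ[R] K :=
    LinearMap.codRestrict (LinearMap.ker Pp) ((LinearMap.inl R DA.E DB.E) ∘ₗ DA.i) hmemα
    with hα
  -- the map K → DB.ker
  have hmemβ : ∀ k : K, ((iK k : DA.E × DB.E)).2 ∈ LinearMap.ker DB.p := by
    intro k
    have h0 : Pp (iK k) = 0 := LinearMap.mem_ker.mp k.2
    rw [hPpel] at h0
    have h1 : p (i (DA.p (iK k : DA.E × DB.E).1) + u ((iK k : DA.E × DB.E)).2) = 0 := by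
      rw [h0, map_zero]
    rw [map_add, hip.apply_apply_eq_zero, hu', zero_add] at h1
    exact LinearMap.mem_ker.mpr h1
  have hrangeβ : LinearMap.range ((LinearMap.snd R DA.E DB.E) ∘ₗ iK) ≤
      LinearMap.range DB.i := by
    rintro _ ⟨k, rfl⟩
    rw [← LinearMap.exact_iff.mp DB.exact]
    exact hmemβ k
  set β : K →ₗ[R] DB.ker :=
    monoFactor DB.i DB.inj_i ((LinearMap.snd R DA.E DB.E) ∘ₗ iK) hrangeβ with hβ
  have hβel : ∀ k : K, DB.i (β k) = ((iK k : DA.E × DB.E)).2 :=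
    fun k => monoFactor_spec _ _ _ _ k
  refine ⟨⟨E, K, Pp, iK, prod_injective DA.E DB.E DA.injE DB.injE, hPpsurj,
    Subtype.val_injective, hKexact⟩, α, β, ?_, ?_, ?_⟩
  · -- injectivity of α
    intro a₁ a₂ h12
    apply DA.inj_i
    have := congrArg (fun k : K => ((iK k : DA.E × DB.E)).1) h12
    exact this
  · -- surjectivity of β
    intro b''
    have h1 : p (u (DB.i b'')) = 0 := by
      rw [hu', DB.exact.apply_apply_eq_zero b'']
    obtain ⟨a, ha⟩ := (hip _).mp h1
    obtain ⟨e, he⟩ := DA.surj_p (-a)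
    have hmem : ((e, DB.i b'') : DA.E × DB.E) ∈ LinearMap.ker Pp := by
      apply LinearMap.mem_ker.mpr
      show i (DA.p e) + u (DB.i b'') = 0
      rw [he, map_neg, ha, neg_add_cancel]
    refine ⟨⟨(e, DB.i b''), hmem⟩, ?_⟩
    apply DB.inj_i
    rw [hβel]
    rfl
  · -- exactness
    intro k
    constructor
    · intro h0
      have h1 : ((iK k : DA.E × DB.E)).2 = 0 := by
        rw [← hβel, show β k = 0 from h0, map_zero]
      have h2 : Pp (iK k) = 0 := LinearMap.mem_ker.mp k.2
      rw [hPpel, h1, map_zero, add_zero] at h2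
      have h3 : DA.p ((iK k : DA.E × DB.E)).1 = 0 := hi (by rw [h2, map_zero])
      obtain ⟨a', ha'⟩ := (DA.exact _).mp h3
      refine ⟨a', ?_⟩
      apply Subtype.ext
      refine Prod.ext ?_ ?_
      · exact ha'
      · exact h1.symm
    · rintro ⟨a', rfl⟩
      apply DB.inj_i
      rw [hβel, map_zero]
      rfl

/-! ### The inductive closure class -/

inductive GClass (S : ModuleCat.{u} R → Prop) : ModuleCat.{u} R → Prop
  | base {X : ModuleCat.{u} R} : S X → GClass S X
  | iso {X Y : ModuleCat.{u} R} : (X ≃ₗ[R] Y) → GClass S X → GClass S Y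
  | ext {A X B : ModuleCat.{u} R} (i : A →ₗ[R] X) (p : X →ₗ[R] B) :
      ShortExactSeq R A X B i p → GClass S A → GClass S B → GClass S X

theorem gclass_mono {S S' : ModuleCat.{u} R → Prop} (h : ∀ X, S X → S' X)
    {X : ModuleCat.{u} R} (hX : GClass S X) : GClass S' X := by
  induction hX with
  | base hb => exact GClass.base (h _ hb)
  | iso e _ ih => exact GClass.iso e ih
  | ext i p hses _ _ ihA ihB => exact GClass.ext i p hses ihA ihB

theorem gclass_splits {S : ModuleCat.{u} R → Prop}
    (hS : ∀ X, S X → ∀ W : ModuleCat.{u} R, CC W → SplitsOver W X)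
    {X : ModuleCat.{u} R} (hX : GClass S X) :
    ∀ W : ModuleCat.{u} R, CC W → SplitsOver W X := by
  induction hX with
  | base hb => exact hS _ hb
  | iso e _ ih => exact fun W hW => splitsOver_iso_left e (ih W hW)
  | ext i p hses _ _ ihA ihB =>
      exact fun W hW => splitsOver_ext hses.1 hses.2.1 hses.2.2 (ihA W hW) (ihB W hW)

theorem gclass_embed {S : ModuleCat.{u} R → Prop}
    (hS : ∀ X, S X → ∃ D : EmbedData X, GClass S D.cok)
    {X : ModuleCat.{u} R} (hX : GClass S X) : ∃ D : EmbedData X, GClass S D.cok := by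
  induction hX with
  | base hb => exact hS _ hb
  | iso e _ ih =>
      obtain ⟨D, hD⟩ := ih
      exact ⟨embedData_iso e D, hD⟩
  | ext i p hses _ _ ihA ihB =>
      obtain ⟨DA, hDA⟩ := ihA
      obtain ⟨DB, hDB⟩ := ihB
      obtain ⟨D, α, β, hs⟩ := embed_ext i p hses DA DB
      exact ⟨D, GClass.ext α β hs hDA hDB⟩

theorem gclass_epi {S : ModuleCat.{u} R → Prop}
    (hsplits : ∀ X : ModuleCat.{u} R, GClass S X →
      ∀ W : ModuleCat.{u} R, CC W → SplitsOver W X)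
    (hS : ∀ X, S X → ∃ D : EpiData X, GClass S D.ker)
    {X : ModuleCat.{u} R} (hX : GClass S X) : ∃ D : EpiData X, GClass S D.ker := by
  induction hX with
  | base hb => exact hS _ hb
  | iso e _ ih =>
      obtain ⟨D, hD⟩ := ih
      exact ⟨epiData_iso e D, hD⟩
  | @ext A X' B i p hses hA hB ihA ihB =>
      obtain ⟨DA, hDA⟩ := ihA
      obtain ⟨DB, hDB⟩ := ihB
      have hsp : SplitsOver DB.E A :=
        hsplits A hA DB.E (CC_of_injective DB.injE)
      obtain ⟨D, α, β, hs⟩ := epi_ext i p hses DA DB hsp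
      exact ⟨D, GClass.ext α β hs hDA hDB⟩

/-! ### atomic facts for the class of Gorenstein weak injectives -/

lemma gwiS_splits : ∀ X : ModuleCat.{u} R, GorensteinWeakInjective R X →
    ∀ W : ModuleCat.{u} R, CC W → SplitsOver W X :=
  fun _ hX _ hW => gwi_splitsOver hX hW

lemma gwiS_embed : ∀ X : ModuleCat.{u} R, GorensteinWeakInjective R X →
    ∃ D : EmbedData X, GClass (GorensteinWeakInjective R) D.cok := by
  intro X hX
  obtain ⟨E, X', jm, qm, h1, h2, h3, h4, h5⟩ := gwi_cosyzygy hX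
  exact ⟨⟨E, X', jm, qm, h1, h2, h3, h4⟩, GClass.base h5⟩

lemma gwiS_epi : ∀ X : ModuleCat.{u} R, GorensteinWeakInjective R X →
    ∃ D : EpiData X, GClass (GorensteinWeakInjective R) D.ker := by
  intro X hX
  obtain ⟨E, K, pm, im, h1, h2, h3, h4, h5⟩ := gwi_syzygy hX
  exact ⟨⟨E, K, pm, im, h1, h2, h3, h4⟩, GClass.base h5⟩

/-! ### two gluing lemmas -/

/-- cokernel of a composition of two injections. -/
lemma compose_embed {M Q E C1 C2 : ModuleCat.{u} R} (i1 : M →ₗ[R] Q) (i2 : Q →ₗ[R] E)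
    (hi1 : Function.Injective i1) (hi2 : Function.Injective i2)
    (q1 : Q →ₗ[R] C1) (hq1s : Function.Surjective q1) (hq1e : Function.Exact i1 q1)
    (q2 : E →ₗ[R] C2) (hq2s : Function.Surjective q2) (hq2e : Function.Exact i2 q2) :
    ∃ (X' : ModuleCat.{u} R) (qm : E →ₗ[R] X') (α : C1 →ₗ[R] X') (β : X' →ₗ[R] C2),
      Function.Surjective qm ∧ Function.Exact (i2 ∘ₗ i1) qm ∧
      ShortExactSeq R C1 X' C2 α β := by
  classical
  set N := LinearMap.range (i2 ∘ₗ i1) with hN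
  set X' := ModuleCat.of R (E ⧸ N) with hX'
  set qm : E →ₗ[R] X' := N.mkQ with hqm
  have hqmsurj : Function.Surjective qm := Submodule.mkQ_surjective N
  have hkerqm : LinearMap.ker qm = N := Submodule.ker_mkQ N
  have hker1 : LinearMap.ker q1 ≤ LinearMap.ker (qm ∘ₗ i2) := by
    rw [LinearMap.exact_iff.mp hq1e]
    rintro _ ⟨m, rfl⟩
    show qm (i2 (i1 m)) = 0
    rw [← LinearMap.mem_ker, hkerqm]
    exact ⟨m, rfl⟩
  set α : C1 →ₗ[R] X' := descend q1 hq1s (qm ∘ₗ i2) hker1 with hα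
  have hαel : ∀ x, α (q1 x) = qm (i2 x) := fun x => descend_apply _ _ _ _ x
  have hker2 : LinearMap.ker qm ≤ LinearMap.ker q2 := by
    rw [hkerqm, hN]
    rintro _ ⟨m, rfl⟩
    show q2 (i2 (i1 m)) = 0
    exact hq2e.apply_apply_eq_zero (i1 m)
  set β : X' →ₗ[R] C2 := descend qm hqmsurj q2 hker2 with hβ
  have hβel : ∀ e, β (qm e) = q2 e := fun e => descend_apply _ _ _ _ e
  refine ⟨X', qm, α, β, hqmsurj, ?_, ?_, ?_, ?_⟩
  · intro e
    constructor
    · intro h0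
      have : e ∈ N := by rw [← hkerqm]; exact h0
      exact this
    · rintro ⟨m, rfl⟩
      rw [← LinearMap.mem_ker, hkerqm]
      exact ⟨m, rfl⟩
  · -- injectivity of α
    intro c₁ c₂ h12
    obtain ⟨x₁, rfl⟩ := hq1s c₁
    obtain ⟨x₂, rfl⟩ := hq1s c₂
    rw [hαel, hαel] at h12
    have h3 : i2 (x₁ - x₂) ∈ N := by
      rw [← hkerqm, LinearMap.mem_ker, map_sub, map_sub, sub_eq_zero]
      exact h12
    obtain ⟨m, hm⟩ := h3
    have h4 : x₁ - x₂ = i1 m := hi2 hm.symm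
    rw [← sub_eq_zero, ← map_sub, h4]
    exact hq1e.apply_apply_eq_zero m
  · exact descend_surjective _ _ _ _ hq2s
  · intro x'
    constructor
    · intro h0
      obtain ⟨e, rfl⟩ := hqmsurj x'
      rw [hβel] at h0
      obtain ⟨x, hx⟩ := (hq2e e).mp h0
      refine ⟨q1 x, ?_⟩
      rw [hαel, hx]
    · rintro ⟨c, rfl⟩
      obtain ⟨x, rfl⟩ := hq1s c
      rw [hαel, hβel]
      exact hq2e.apply_apply_eq_zero x

/-- kernel of a composition of two surjections. -/
lemma ker_comp {E Q M KQ : ModuleCat.{u} R} (pq : E →ₗ[R] Q) (hpqs : Function.Surjective pq)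
    (iK : KQ →ₗ[R] E) (hiK : Function.Injective iK) (hKe : Function.Exact iK pq)
    (r : Q →ₗ[R] M) (hrs : Function.Surjective r) :
    ∃ (K' : ModuleCat.{u} R) (i' : K' →ₗ[R] E) (α : KQ →ₗ[R] K')
      (β : K' →ₗ[R] ModuleCat.of R (LinearMap.ker r)),
      Function.Injective i' ∧ Function.Exact i' (r ∘ₗ pq) ∧
      Function.Surjective (r ∘ₗ pq) ∧
      ShortExactSeq R KQ K' (ModuleCat.of R (LinearMap.ker r)) α β := by
  classical
  set K' := ModuleCat.of R (LinearMap.ker (r ∘ₗ pq)) with hK'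
  set i' : K' →ₗ[R] E := (LinearMap.ker (r ∘ₗ pq)).subtype with hi'
  have hmemα : ∀ k, iK k ∈ LinearMap.ker (r ∘ₗ pq) := by
    intro k
    apply LinearMap.mem_ker.mpr
    show r (pq (iK k)) = 0
    rw [hKe.apply_apply_eq_zero k, map_zero]
  set α : KQ →ₗ[R] K' := LinearMap.codRestrict _ iK hmemα with hα
  have hmemβ : ∀ k' : K', pq (i' k') ∈ LinearMap.ker r := by
    intro k'
    apply LinearMap.mem_ker.mpr
    exact LinearMap.mem_ker.mp k'.2
  set β : K' →ₗ[R] ModuleCat.of R (LinearMap.ker r) :=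
    LinearMap.codRestrict _ (pq ∘ₗ i') hmemβ with hβ
  refine ⟨K', i', α, β, Subtype.val_injective, ?_, hrs.comp hpqs, ?_, ?_, ?_⟩
  · intro e
    constructor
    · intro h0
      exact ⟨⟨e, LinearMap.mem_ker.mpr h0⟩, rfl⟩
    · rintro ⟨k', rfl⟩
      exact LinearMap.mem_ker.mp k'.2
  · intro k₁ k₂ h
    apply hiK
    exact congrArg (fun k' : K' => (i' k' : E)) h
  · rintro ⟨y, hy⟩
    obtain ⟨e, he⟩ := hpqs y
    have hmem : e ∈ LinearMap.ker (r ∘ₗ pq) := by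
      apply LinearMap.mem_ker.mpr
      show r (pq e) = 0
      rw [he]
      exact LinearMap.mem_ker.mp hy
    exact ⟨⟨e, hmem⟩, Subtype.ext he⟩
  · intro k'
    constructor
    · intro h0
      have h1 : pq (i' k') = 0 := congrArg Subtype.val h0
      obtain ⟨k, hk⟩ := (hKe _).mp h1
      exact ⟨k, Subtype.ext hk⟩
    · rintro ⟨k, rfl⟩
      apply Subtype.ext
      show pq (iK k) = 0
      exact hKe.apply_apply_eq_zero k

/-! ### The special approximation sequence from finite Gorenstein weak injective dimension -/

lemma stepA : ∀ (k : ℕ) (M : ModuleCat.{u} R), GwidLE R M k →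
    ∃ (Q P : ModuleCat.{u} R) (ι : M →ₗ[R] Q) (q : Q →ₗ[R] P),
      ShortExactSeq R M Q P ι q ∧ CC P ∧ GClass (GorensteinWeakInjective R) Q := by
  intro k
  induction k with
  | zero =>
    intro M hM
    obtain ⟨G, dG, ε, ⟨hεinj, hεex, hGex, hvanish⟩, hGWI⟩ := hM
    have hsub : Subsingleton (G 1) := ⟨fun a b =>
      (hvanish 1 (by omega) a).trans (hvanish 1 (by omega) b).symm⟩
    refine ⟨G 0, G 1, ε, dG 0, ⟨hεinj, ?_, hεex⟩, ?_, GClass.base (hGWI 0)⟩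
    · intro y
      exact ⟨0, (hvanish 1 (by omega) ((dG 0) 0)).trans (hvanish 1 (by omega) y).symm⟩
    · exact CC_of_injective (subsingleton_injective (G 1))
  | succ k ih =>
    intro M hM
    obtain ⟨G, dG, ε, ⟨hεinj, hεex, hGex, hvanish⟩, hGWI⟩ := hM
    classical
    -- the first cosyzygy C of M
    set NC := LinearMap.range ε with hNC
    set C := ModuleCat.of R (G 0 ⧸ NC) with hC
    set mkC : G 0 →ₗ[R] C := NC.mkQ with hmkC
    have hmkCsurj : Function.Surjective mkC := Submodule.mkQ_surjective NC
    have hkermkC : LinearMap.ker mkC = NC := Submodule.ker_mkQ NC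
    have hkerd0 : LinearMap.ker (dG 0) = NC := by
      rw [hNC, ← LinearMap.exact_iff.mp hεex]
    have hker1 : LinearMap.ker mkC ≤ LinearMap.ker (dG 0) := by
      rw [hkermkC, hkerd0]
    set ε' : C →ₗ[R] G 1 := descend mkC hmkCsurj (dG 0) hker1 with hε'
    have hε'el : ∀ x, ε' (mkC x) = dG 0 x := fun x => descend_apply _ _ _ _ x
    have hε'inj : Function.Injective ε' := by
      rw [← LinearMap.ker_eq_bot, Submodule.eq_bot_iff]
      intro x hx
      obtain ⟨g, rfl⟩ := hmkCsurj x
      rw [LinearMap.mem_ker, hε'el] at hx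
      have : g ∈ LinearMap.ker mkC := by rw [hkermkC, ← hkerd0]; exact hx
      exact this
    have hCk : GwidLE R C k := by
      refine ⟨fun i => G (i+1), fun i => dG (i+1), ε', ⟨hε'inj, ?_, fun i => hGex (i+1),
        ?_⟩, fun i => hGWI (i+1)⟩
      · intro y
        constructor
        · intro h0
          obtain ⟨x, hx⟩ := (hGex 0 y).mp h0
          exact ⟨mkC x, by rw [hε'el, hx]⟩
        · rintro ⟨x, rfl⟩
          obtain ⟨g, rfl⟩ := hmkCsurj x
          rw [hε'el]
          exact (hGex 0 _).mpr ⟨g, rfl⟩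
      · intro i hi x
        exact hvanish (i+1) (by omega) x
    obtain ⟨Q', P', ι', q', hses', hCCP', hEQ'⟩ := ih C hCk
    obtain ⟨hι'inj, hq'surj, hιq'ex⟩ := hses'
    -- an epimorphism onto Q' with good kernel
    obtain ⟨D, hKcls⟩ := gclass_epi (fun X hX => gclass_splits gwiS_splits hX) gwiS_epi hEQ'
    -- P := preimage of C in D.E
    set Pv := ModuleCat.of R (LinearMap.ker (q' ∘ₗ D.p)) with hPv
    set iPv : Pv →ₗ[R] D.E := (LinearMap.ker (q' ∘ₗ D.p)).subtype with hiPv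
    have hPvexact : Function.Exact iPv (q' ∘ₗ D.p) := by
      intro e
      constructor
      · intro h0
        exact ⟨⟨e, LinearMap.mem_ker.mpr h0⟩, rfl⟩
      · rintro ⟨v, rfl⟩
        exact LinearMap.mem_ker.mp v.2
    have hCCPv : CC Pv :=
      CC_two iPv (q' ∘ₗ D.p) Subtype.val_injective (hq'surj.comp D.surj_p) hPvexact
        D.injE hCCP'
    -- the map c : Pv → C
    have hrangec : LinearMap.range (D.p ∘ₗ iPv) ≤ LinearMap.range ι' := by
      rintro _ ⟨v, rfl⟩
      rw [← LinearMap.exact_iff.mp hιq'ex]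
      exact LinearMap.mem_ker.mp v.2
    set c : Pv →ₗ[R] C := monoFactor ι' hι'inj (D.p ∘ₗ iPv) hrangec with hc
    have hcel : ∀ v, ι' (c v) = D.p (iPv v) := fun v => monoFactor_spec _ _ _ _ v
    have hcsurj : Function.Surjective c := by
      intro cc
      obtain ⟨e, he⟩ := D.surj_p (ι' cc)
      have hmem : e ∈ LinearMap.ker (q' ∘ₗ D.p) := by
        apply LinearMap.mem_ker.mpr
        show q' (D.p e) = 0
        rw [he]
        exact hιq'ex.apply_apply_eq_zero cc
      refine ⟨⟨e, hmem⟩, ?_⟩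
      apply hι'inj
      rw [hcel]
      exact he
    -- the kernel sequence 0 → D.ker → Pv → C → 0
    have hmemαK : ∀ kk, D.i kk ∈ LinearMap.ker (q' ∘ₗ D.p) := by
      intro kk
      apply LinearMap.mem_ker.mpr
      show q' (D.p (D.i kk)) = 0
      rw [D.exact.apply_apply_eq_zero kk, map_zero]
    set αK : D.ker →ₗ[R] Pv := LinearMap.codRestrict _ D.i hmemαK with hαK
    have hαKinj : Function.Injective αK := by
      intro k₁ k₂ h
      apply D.inj_i
      exact congrArg (fun v : Pv => (iPv v : D.E)) h
    have hαKc : Function.Exact αK c := by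
      intro v
      constructor
      · intro h0
        have h1 : D.p (iPv v) = 0 := by
          rw [← hcel, show c v = 0 from h0, map_zero]
        obtain ⟨kk, hkk⟩ := (D.exact _).mp h1
        exact ⟨kk, Subtype.ext hkk⟩
      · rintro ⟨kk, rfl⟩
        apply hι'inj
        rw [hcel, map_zero]
        show D.p (D.i kk) = 0
        exact D.exact.apply_apply_eq_zero kk
    -- the pullback Q of (mkC : G 0 → C) and (c : Pv → C)
    set GP := ModuleCat.of R (G 0 × Pv) with hGP
    set f2 : GP →ₗ[R] C := mkC ∘ₗ LinearMap.fst R (G 0) Pv - c ∘ₗ LinearMap.snd R (G 0) Pv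
      with hf2
    set Q := ModuleCat.of R (LinearMap.ker f2) with hQ
    set vlQ : Q →ₗ[R] GP := (LinearMap.ker f2).subtype with hvlQ
    have hfel : ∀ s : Q, mkC ((vlQ s : G 0 × Pv).1) = c ((vlQ s : G 0 × Pv).2) := by
      intro s
      have h0 : f2 (vlQ s) = 0 := LinearMap.mem_ker.mp s.2
      change (mkC ∘ₗ LinearMap.fst R (G 0) Pv - c ∘ₗ LinearMap.snd R (G 0) Pv) (vlQ s) = 0 at h0
      simp only [LinearMap.sub_apply, LinearMap.comp_apply] at h0
      rw [sub_eq_zero] at h0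
      exact h0
    have hmemM : ∀ m : M, ((ε m, 0) : G 0 × Pv) ∈ LinearMap.ker f2 := by
      intro m
      apply LinearMap.mem_ker.mpr
      show mkC (ε m) - c 0 = 0
      rw [map_zero]
      have : mkC (ε m) = 0 := by
        rw [← LinearMap.mem_ker, hkermkC]
        exact ⟨m, rfl⟩
      rw [this, sub_zero]
    set ιM : M →ₗ[R] Q := LinearMap.codRestrict _ (LinearMap.prod ε 0) hmemM with hιM
    set pr2Q : Q →ₗ[R] Pv := LinearMap.snd R (G 0) Pv ∘ₗ vlQ with hpr2Q
    have hιMinj : Function.Injective ιM := by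
      intro m₁ m₂ h
      apply hεinj
      exact congrArg (fun s : Q => (vlQ s : G 0 × Pv).1) h
    have hpr2Qsurj : Function.Surjective pr2Q := by
      intro v
      obtain ⟨g, hg⟩ := hmkCsurj (c v)
      refine ⟨⟨(g, v), ?_⟩, rfl⟩
      apply LinearMap.mem_ker.mpr
      show mkC g - c v = 0
      rw [hg, sub_self]
    have hMexact : Function.Exact ιM pr2Q := by
      intro s
      constructor
      · intro h0
        have h1 : (vlQ s : G 0 × Pv).2 = 0 := h0
        have h2 : mkC ((vlQ s : G 0 × Pv).1) = 0 := by
          rw [hfel, h1, map_zero]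
        have h3 : (vlQ s : G 0 × Pv).1 ∈ NC := by
          have h2' := LinearMap.mem_ker.mpr h2; rwa [hkermkC] at h2'
        obtain ⟨m, hm⟩ := h3
        refine ⟨m, ?_⟩
        apply Subtype.ext
        refine Prod.ext ?_ ?_
        · exact hm
        · exact h1.symm
      · rintro ⟨m, rfl⟩
        rfl
    -- the sequence 0 → D.ker → Q → G 0 → 0
    have hmemK2 : ∀ kk, ((0, αK kk) : G 0 × Pv) ∈ LinearMap.ker f2 := by
      intro kk
      apply LinearMap.mem_ker.mpr
      show mkC 0 - c (αK kk) = 0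
      rw [map_zero]
      have : c (αK kk) = 0 := (hαKc.apply_apply_eq_zero kk)
      rw [this, sub_zero]
    set ιK2 : D.ker →ₗ[R] Q :=
      LinearMap.codRestrict _ (LinearMap.prod 0 αK) hmemK2 with hιK2
    set prG : Q →ₗ[R] G 0 := LinearMap.fst R (G 0) Pv ∘ₗ vlQ with hprG
    have hιK2inj : Function.Injective ιK2 := by
      intro k₁ k₂ h
      apply hαKinj
      exact congrArg (fun s : Q => (vlQ s : G 0 × Pv).2) h
    have hprGsurj : Function.Surjective prG := by
      intro g
      obtain ⟨v, hv⟩ := hcsurj (mkC g)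
      refine ⟨⟨(g, v), ?_⟩, rfl⟩
      apply LinearMap.mem_ker.mpr
      show mkC g - c v = 0
      rw [hv, sub_self]
    have hK2exact : Function.Exact ιK2 prG := by
      intro s
      constructor
      · intro h0
        have h1 : (vlQ s : G 0 × Pv).1 = 0 := h0
        have h2 : c ((vlQ s : G 0 × Pv).2) = 0 := by
          rw [← hfel, h1, map_zero]
        obtain ⟨kk, hkk⟩ := (hαKc _).mp h2
        refine ⟨kk, ?_⟩
        apply Subtype.ext
        refine Prod.ext ?_ ?_
        · exact h1.symm
        · exact hkk
      · rintro ⟨kk, rfl⟩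
        rfl
    exact ⟨Q, Pv, ιM, pr2Q, ⟨hιMinj, hpr2Qsurj, hMexact⟩, hCCPv,
      GClass.ext ιK2 prG ⟨hιK2inj, hprGsurj, hK2exact⟩ hKcls (GClass.base (hGWI 0))⟩

/-! ### gluing helpers for the total complex -/

lemma exact_glue {A Z1 B Z2 C : ModuleCat.{u} R} (e1 : A →ₗ[R] Z1) (m1 : Z1 →ₗ[R] B)
    (e2 : B →ₗ[R] Z2) (m2 : Z2 →ₗ[R] C) (he1 : Function.Surjective e1)
    (hm2 : Function.Injective m2) (hmid : Function.Exact m1 e2) :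
    Function.Exact (m1 ∘ₗ e1) (m2 ∘ₗ e2) := by
  intro b
  constructor
  · intro h0
    have h1 : e2 b = 0 := hm2 (by rw [show m2 (e2 b) = 0 from h0, map_zero])
    obtain ⟨z, hz⟩ := (hmid b).mp h1
    obtain ⟨a, rfl⟩ := he1 z
    exact ⟨a, hz⟩
  · rintro ⟨a, rfl⟩
    show m2 (e2 (m1 (e1 a))) = 0
    rw [hmid.apply_apply_eq_zero (e1 a), map_zero]

lemma hom_exact_glue {W A Z1 B Z2 C K : ModuleCat.{u} R} (e1 : A →ₗ[R] Z1)
    (m1 : Z1 →ₗ[R] B) (e2 : B →ₗ[R] Z2) (m2 : Z2 →ₗ[R] C)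
    (he1 : Function.Surjective e1) (hm1 : Function.Injective m1)
    (hm2 : Function.Injective m2) (hmid : Function.Exact m1 e2)
    (iK : K →ₗ[R] A) (hiK : Function.Injective iK) (hKe : Function.Exact iK e1)
    (hsp : SplitsOver W K) :
    Function.Exact (fun g : W →ₗ[R] A => (m1 ∘ₗ e1).comp g)
      (fun g : W →ₗ[R] B => (m2 ∘ₗ e2).comp g) := by
  intro g
  constructor
  · intro h0
    have h1 : ∀ w, m2 (e2 (g w)) = 0 :=
      fun w => congrFun (congrArg (fun (v : _ →ₗ[R] _) => (v : _ → _)) h0) w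
    have hrange : LinearMap.range g ≤ LinearMap.range m1 := by
      rintro _ ⟨w, rfl⟩
      rw [← LinearMap.exact_iff.mp hmid, LinearMap.mem_ker]
      exact hm2 (by rw [h1 w, map_zero])
    set g1 := monoFactor m1 hm1 g hrange with hg1
    have hg1el : ∀ w, m1 (g1 w) = g w := fun w => monoFactor_spec _ _ _ _ w
    obtain ⟨h, hh⟩ := lift_of_splitsOver he1 hiK hKe hsp g1
    have hh' : ∀ w, e1 (h w) = g1 w :=
      fun w => congrFun (congrArg (fun (v : _ →ₗ[R] _) => (v : _ → _)) hh) w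
    refine ⟨h, ?_⟩
    ext w
    show m1 (e1 (h w)) = g w
    rw [hh', hg1el]
  · rintro ⟨h, rfl⟩
    ext w
    show m2 (e2 (m1 (e1 (h w)))) = 0
    rw [hmid.apply_apply_eq_zero (e1 (h w)), map_zero]

set_option maxHeartbeats 1600000 in
/-- The endgame: a copure injective module admitting a split special approximation is
Gorenstein weak injective. -/
lemma endgame {M Q P : ModuleCat.{u} R} {ι : M →ₗ[R] Q} {q : Q →ₗ[R] P}
    (hses : ShortExactSeq R M Q P ι q) (hCCP : CC P)
    (hQ : GClass (GorensteinWeakInjective R) Q)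
    (hcop : GWICopureInjectiveMod R M)
    {r : Q →ₗ[R] M} {sct : P →ₗ[R] Q}
    (hr : r ∘ₗ ι = LinearMap.id) (hsct : q ∘ₗ sct = LinearMap.id)
    (hsr : Function.Exact sct r) (hsctinj : Function.Injective sct)
    (hrsurj : Function.Surjective r) :
    GorensteinWeakInjective R M := by
  classical
  obtain ⟨hιinj, hqsurj, hιq⟩ := hses
  set S' : ModuleCat.{u} R → Prop :=
    fun X => GorensteinWeakInjective R X ∨ X = M ∨ X = P with hS'
  have hbM : GClass S' M := GClass.base (Or.inr (Or.inl rfl))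
  have hbP : GClass S' P := GClass.base (Or.inr (Or.inr rfl))
  have hQsplits : ∀ W : ModuleCat.{u} R, CC W → SplitsOver W Q :=
    gclass_splits gwiS_splits hQ
  have hs1 : ∀ X, S' X → ∀ W : ModuleCat.{u} R, CC W → SplitsOver W X := by
    intro X hX W hW
    rcases hX with h | rfl | rfl
    · exact gwiS_splits X h W hW
    · intro Y i p hi hp hip
      have hce : GWICopureExact R i p := copureExact_of_CC ⟨hi, hp, hip⟩ hW
      obtain ⟨r', hr'⟩ := (hcop X Y W i p hce).2.2 LinearMap.id
      exact ⟨r', hr'⟩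
    · exact splitsOver_retract sct q hsct (hQsplits W hW)
  have splits1 : ∀ X, GClass S' X → ∀ W : ModuleCat.{u} R, CC W → SplitsOver W X :=
    fun X hX => gclass_splits hs1 hX
  obtain ⟨DQ, hDQ⟩ := gclass_embed gwiS_embed hQ
  have hDQ1 : GClass S' DQ.cok := gclass_mono (fun X h => Or.inl h) hDQ
  have hs2 : ∀ X, S' X → ∃ D : EmbedData X, GClass S' D.cok := by
    intro X hX
    rcases hX with h | rfl | rfl
    · obtain ⟨D, hD⟩ := gwiS_embed X h
      exact ⟨D, gclass_mono (fun Y hY => Or.inl hY) hD⟩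
    · obtain ⟨X', qm, α, β, h1, h2, h3⟩ :=
        compose_embed ι DQ.j hιinj DQ.inj_j q hqsurj hιq DQ.q DQ.surj_q DQ.exact
      exact ⟨⟨DQ.E, X', DQ.j ∘ₗ ι, qm, DQ.injE, DQ.inj_j.comp hιinj, h1, h2⟩,
        GClass.ext α β h3 hbP hDQ1⟩
    · obtain ⟨X', qm, α, β, h1, h2, h3⟩ :=
        compose_embed sct DQ.j hsctinj DQ.inj_j r hrsurj hsr DQ.q DQ.surj_q DQ.exact
      exact ⟨⟨DQ.E, X', DQ.j ∘ₗ sct, qm, DQ.injE, DQ.inj_j.comp hsctinj, h1, h2⟩,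
        GClass.ext α β h3 hbM hDQ1⟩
  have embed1 : ∀ X, GClass S' X → ∃ D : EmbedData X, GClass S' D.cok :=
    fun X hX => gclass_embed hs2 hX
  obtain ⟨DQe, hDQe⟩ := gclass_epi (fun X hX => gclass_splits gwiS_splits hX) gwiS_epi hQ
  have hDQe1 : GClass S' DQe.ker := gclass_mono (fun X h => Or.inl h) hDQe
  have hkerr : LinearMap.ker r = LinearMap.range sct := LinearMap.exact_iff.mp hsr
  have eP : P ≃ₗ[R] (ModuleCat.of R (LinearMap.ker r)) :=
    (LinearEquiv.ofInjective sct hsctinj).trans (LinearEquiv.ofEq _ _ hkerr.symm)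
  have hkerq : LinearMap.ker q = LinearMap.range ι := LinearMap.exact_iff.mp hιq
  have eM : M ≃ₗ[R] (ModuleCat.of R (LinearMap.ker q)) :=
    (LinearEquiv.ofInjective ι hιinj).trans (LinearEquiv.ofEq _ _ hkerq.symm)
  have hs3 : ∀ X, S' X → ∃ D : EpiData X, GClass S' D.ker := by
    intro X hX
    rcases hX with h | rfl | rfl
    · obtain ⟨D, hD⟩ := gwiS_epi X h
      exact ⟨D, gclass_mono (fun Y hY => Or.inl hY) hD⟩
    · obtain ⟨K', i', α, β, h1, h2, h3, h4⟩ :=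
        ker_comp DQe.p DQe.surj_p DQe.i DQe.inj_i DQe.exact r hrsurj
      exact ⟨⟨DQe.E, K', r ∘ₗ DQe.p, i', DQe.injE, h3, h1, h2⟩,
        GClass.ext α β h4 hDQe1 (GClass.iso eP hbP)⟩
    · obtain ⟨K', i', α, β, h1, h2, h3, h4⟩ :=
        ker_comp DQe.p DQe.surj_p DQe.i DQe.inj_i DQe.exact q hqsurj
      exact ⟨⟨DQe.E, K', q ∘ₗ DQe.p, i', DQe.injE, h3, h1, h2⟩,
        GClass.ext α β h4 hDQe1 (GClass.iso eM hbM)⟩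
  have epi1 : ∀ X, GClass S' X → ∃ D : EpiData X, GClass S' D.ker :=
    fun X hX => gclass_epi splits1 hs3 hX
  -- build the chains
  let rdata : ℕ → Σ' (X : ModuleCat.{u} R), GClass S' X := fun n =>
    Nat.rec ⟨M, hbM⟩ (fun _ prev => ⟨(embed1 prev.1 prev.2).choose.cok,
      (embed1 prev.1 prev.2).choose_spec⟩) n
  let DD : ∀ n : ℕ, EmbedData (rdata n).1 := fun n => (embed1 (rdata n).1 (rdata n).2).choose
  let ldata : ℕ → Σ' (X : ModuleCat.{u} R), GClass S' X := fun n =>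
    Nat.rec ⟨M, hbM⟩ (fun _ prev => ⟨(epi1 prev.1 prev.2).choose.ker,
      (epi1 prev.1 prev.2).choose_spec⟩) n
  let EE : ∀ n : ℕ, EpiData (ldata n).1 := fun n => (epi1 (ldata n).1 (ldata n).2).choose
  -- the total complex
  let T : ℤ → ModuleCat.{u} R := fun n =>
    match n with
    | .ofNat 0 => (EE 0).E
    | .ofNat (k+1) => (DD k).E
    | .negSucc k => (EE (k+1)).E
  let dT : ∀ n : ℤ, T n →ₗ[R] T (n+1) := fun n =>
    match n with
    | .ofNat 0 => (DD 0).j ∘ₗ (EE 0).p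
    | .ofNat (k+1) => (DD (k+1)).j ∘ₗ (DD k).q
    | .negSucc 0 => (EE 0).i ∘ₗ (EE 1).p
    | .negSucc (k+1) => (EE (k+1)).i ∘ₗ (EE (k+2)).p
  refine ⟨T, dT, (EE 0).p, ⟨?_, ?_, ?_⟩, (EE 0).surj_p, ?_⟩
  · intro n
    cases n with
    | ofNat k =>
      cases k with
      | zero => exact (EE 0).injE
      | succ k => exact (DD k).injE
    | negSucc k => exact (EE (k+1)).injE
  · intro n
    cases n with
    | ofNat k =>
      cases k with
      | zero =>
        exact exact_glue (EE 0).p (DD 0).j (DD 0).q (DD 1).j (EE 0).surj_p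
          (DD 1).inj_j (DD 0).exact
      | succ k =>
        exact exact_glue (DD k).q (DD (k+1)).j (DD (k+1)).q (DD (k+2)).j (DD k).surj_q
          (DD (k+2)).inj_j (DD (k+1)).exact
    | negSucc k =>
      cases k with
      | zero =>
        exact exact_glue (EE 1).p (EE 0).i (EE 0).p (DD 0).j (EE 1).surj_p
          (DD 0).inj_j (EE 0).exact
      | succ k =>
        cases k with
        | zero =>
          exact exact_glue (EE 2).p (EE 1).i (EE 1).p (EE 0).i (EE 2).surj_p
            (EE 0).inj_i (EE 1).exact
        | succ k =>
          exact exact_glue (EE (k+3)).p (EE (k+2)).i (EE (k+2)).p (EE (k+1)).i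
            (EE (k+3)).surj_p (EE (k+1)).inj_i (EE (k+2)).exact
  · intro W hW n
    have hWCC : CC W := CC_of_weakInjective hW
    cases n with
    | ofNat k =>
      cases k with
      | zero =>
        exact hom_exact_glue (EE 0).p (DD 0).j (DD 0).q (DD 1).j (EE 0).surj_p
          (DD 0).inj_j (DD 1).inj_j (DD 0).exact (EE 0).i (EE 0).inj_i (EE 0).exact
          (splits1 _ (ldata 1).2 W hWCC)
      | succ k =>
        exact hom_exact_glue (DD k).q (DD (k+1)).j (DD (k+1)).q (DD (k+2)).j
          (DD k).surj_q (DD (k+1)).inj_j (DD (k+2)).inj_j (DD (k+1)).exact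
          (DD k).j (DD k).inj_j (DD k).exact (splits1 _ (rdata k).2 W hWCC)
    | negSucc k =>
      cases k with
      | zero =>
        exact hom_exact_glue (EE 1).p (EE 0).i (EE 0).p (DD 0).j (EE 1).surj_p
          (EE 0).inj_i (DD 0).inj_j (EE 0).exact (EE 1).i (EE 1).inj_i (EE 1).exact
          (splits1 _ (ldata 2).2 W hWCC)
      | succ k =>
        cases k with
        | zero =>
          exact hom_exact_glue (EE 2).p (EE 1).i (EE 1).p (EE 0).i (EE 2).surj_p
            (EE 1).inj_i (EE 0).inj_i (EE 1).exact (EE 2).i (EE 2).inj_i (EE 2).exact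
            (splits1 _ (ldata 3).2 W hWCC)
        | succ k =>
          exact hom_exact_glue (EE (k+3)).p (EE (k+2)).i (EE (k+2)).p (EE (k+1)).i
            (EE (k+3)).surj_p (EE (k+2)).inj_i (EE (k+1)).inj_i (EE (k+2)).exact
            (EE (k+3)).i (EE (k+3)).inj_i (EE (k+3)).exact
            (splits1 _ (ldata (k+4)).2 W hWCC)
  · intro y
    constructor
    · intro h0
      obtain ⟨kk, hkk⟩ := ((EE 0).exact y).mp h0
      obtain ⟨j1, hj1⟩ := (EE 1).surj_p kk
      refine ⟨j1, ?_⟩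
      show (EE 0).i ((EE 1).p j1) = y
      rw [hj1, hkk]
    · rintro ⟨j1, rfl⟩
      show (EE 0).p ((EE 0).i ((EE 1).p j1)) = 0
      exact (EE 0).exact.apply_apply_eq_zero ((EE 1).p j1)

end GWIual
end

/-- A module is Gorenstein weak injective iff it is `GWI`-copure injective and has finite
Gorenstein weak injective dimension. -/
theorem gorensteinWeakInjective_iff_copureInjective (M : ModuleCat.{u} R) :
    GorensteinWeakInjective R M ↔
      GWICopureInjectiveMod R M ∧ ∃ k : ℕ, GwidLE R M k := by
  constructor
  · intro hM
    refine ⟨fun A B C f g hc => hc.2 M hM, 0, ?_⟩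
    refine ⟨fun i => match i with | 0 => M | _+1 => ModuleCat.of R PUnit,
      fun i => 0, LinearMap.id, ⟨fun a b h => h, ?_, ?_, ?_⟩, ?_⟩
    · intro y
      constructor
      · intro _
        exact ⟨y, rfl⟩
      · intro _
        rfl
    · intro i y
      constructor
      · intro _
        exact ⟨0, Subsingleton.elim _ _⟩
      · intro _
        rfl
    · intro i hi x
      match i, hi with
      | (j+1), _ => exact Subsingleton.elim x 0
    · intro i
      match i with
      | 0 => exact hM
      | (j+1) => exact GWIual.gwi_of_subsingleton (ModuleCat.of R PUnit)
  · rintro ⟨hcop, k, hGw⟩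
    obtain ⟨Q, P, ι, q, hses, hCCP, hQ⟩ := GWIual.stepA k M hGw
    have hce : GWICopureExact R ι q := GWIual.copureExact_of_CC hses hCCP
    obtain ⟨r, hr⟩ := (hcop M Q P ι q hce).2.2 LinearMap.id
    obtain ⟨sct, hsct, hsr, hsctinj, hrsurj⟩ :=
      GWIual.splitting_data hses.1 hses.2.1 hses.2.2 r hr
    exact GWIual.endgame hses hCCP hQ hcop hr hsct hsr hsctinj hrsurj
end

section
/- Let M be an R-module with Gwid_R(M) = n < ∞ admitting a WI-pure Tate injective resolution. Then the injective dimension id_R(M) ≤ n if and only if the relative Tate cohomology Ext-hat^i_{GWI}(N, M) = 0 for every R-module N and every integer i, if and only if Ext-hat^i_{GWI}(R/I, M) = 0 for every left ideal I of R and every integer i. -/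
open CategoryTheory

universe u

variable (R : Type u) [Ring R]

namespace GWIProof

variable {R : Type u} [Ring R]

section Helpers
variable {A B X Y W Q A' : Type u}
  [AddCommGroup A] [Module R A] [AddCommGroup B] [Module R B]
  [AddCommGroup X] [Module R X] [AddCommGroup Y] [Module R Y]
  [AddCommGroup W] [Module R W] [AddCommGroup Q] [Module R Q]
  [AddCommGroup A'] [Module R A']

lemma factorSurj (p : X →ₗ[R] W) (hp : Function.Surjective p) (f : X →ₗ[R] Y)
    (h : ∀ x, p x = 0 → f x = 0) : ∃ g : W →ₗ[R] Y, g.comp p = f := by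
  refine ⟨((LinearMap.ker p).liftQ f ?_).comp (p.quotKerEquivOfSurjective hp).symm.toLinearMap, ?_⟩
  · intro x hx; exact h x hx
  · ext x
    simp only [LinearMap.comp_apply, LinearEquiv.coe_toLinearMap]
    have : (p.quotKerEquivOfSurjective hp).symm (p x) = Submodule.Quotient.mk x := by
      rw [LinearEquiv.symm_apply_eq]; rfl
    rw [this]; rfl


lemma comp_apply_eq {f : Y →ₗ[R] W} {p : X →ₗ[R] Y} {g : X →ₗ[R] W}
    (h : f.comp p = g) (x : X) : f (p x) = g x :=
  LinearMap.congr_fun h x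

lemma comp_apply_id {p : X →ₗ[R] W} {s : W →ₗ[R] X}
    (h : p.comp s = LinearMap.id) (w : W) : p (s w) = w :=
  LinearMap.congr_fun h w

lemma sectionOfRetraction {i : A →ₗ[R] X} {p : X →ₗ[R] W}
    (hex : Function.Exact i p) (hp : Function.Surjective p)
    {r : X →ₗ[R] A} (hr : r.comp i = LinearMap.id) :
    ∃ s : W →ₗ[R] X, p.comp s = LinearMap.id := by
  have hker : ∀ x, p x = 0 → (LinearMap.id - i.comp r : X →ₗ[R] X) x = 0 := by
    intro x hx
    obtain ⟨a, rfl⟩ := (hex x).mp hx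
    have h1 : r (i a) = a := comp_apply_eq hr a
    simp only [LinearMap.sub_apply, LinearMap.id_apply, LinearMap.comp_apply, h1, sub_self]
  obtain ⟨s, hs⟩ := factorSurj p hp (LinearMap.id - i.comp r : X →ₗ[R] X) hker
  refine ⟨s, ?_⟩
  ext w
  obtain ⟨x, rfl⟩ := hp w
  have h1 : s (p x) = x - i (r x) := comp_apply_eq hs x
  show p (s (p x)) = p x
  rw [h1, map_sub, hex.apply_apply_eq_zero (r x), sub_zero]

lemma retractionOfSection {i : A →ₗ[R] X} {p : X →ₗ[R] W}
    (hi : Function.Injective i) (hex : Function.Exact i p)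
    {s : W →ₗ[R] X} (hs : p.comp s = LinearMap.id) :
    ∃ r : X →ₗ[R] A, r.comp i = LinearMap.id := by
  have hmem : ∀ x : X, (LinearMap.id - s.comp p : X →ₗ[R] X) x ∈ LinearMap.range i := by
    intro x
    apply (hex _).mp
    have h1 : p (s (p x)) = p x := comp_apply_id hs (p x)
    simp only [map_sub, LinearMap.sub_apply, LinearMap.id_apply, LinearMap.comp_apply, h1, sub_self]
  refine ⟨(LinearEquiv.ofInjective i hi).symm.toLinearMap.comp
    ((LinearMap.id - s.comp p : X →ₗ[R] X).codRestrict (LinearMap.range i) hmem), ?_⟩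
  ext a
  show (LinearEquiv.ofInjective i hi).symm
    (((LinearMap.id - s.comp p : X →ₗ[R] X).codRestrict (LinearMap.range i) hmem) (i a)) = a
  have h1 : (LinearMap.id - s.comp p : X →ₗ[R] X) (i a) = i a := by
    have h2 : p (i a) = 0 := hex.apply_apply_eq_zero a
    simp only [LinearMap.sub_apply, LinearMap.id_apply, LinearMap.comp_apply, h2, map_zero, sub_zero]
  apply (LinearEquiv.ofInjective i hi).injective
  rw [LinearEquiv.apply_symm_apply]
  exact Subtype.ext h1

lemma injective_of_retract {i : A →ₗ[R] Q} {r : Q →ₗ[R] A}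
    (hr : r.comp i = LinearMap.id) (hQ : Module.Injective R Q) :
    Module.Injective R A := by
  constructor
  intro X Y _ _ _ _ f hf g
  obtain ⟨h, hh⟩ := hQ.out f hf (i.comp g)
  refine ⟨r.comp h, fun x => ?_⟩
  have : r (i (g x)) = g x := LinearMap.congr_fun hr (g x)
  simp only [LinearMap.comp_apply, hh x]
  exact this

lemma injective_of_equiv (e : A ≃ₗ[R] B) (hA : Module.Injective R A) :
    Module.Injective R B := by
  refine injective_of_retract (i := e.symm.toLinearMap) (r := e.toLinearMap) ?_ hA
  ext b; simp

lemma injective_prod (hA : Module.Injective R A) (hB : Module.Injective R B) :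
    Module.Injective R (A × B) := by
  constructor
  intro X Y _ _ _ _ f hf g
  obtain ⟨h1, hh1⟩ := hA.out f hf ((LinearMap.fst R A B).comp g)
  obtain ⟨h2, hh2⟩ := hB.out f hf ((LinearMap.snd R A B).comp g)
  refine ⟨h1.prod h2, fun x => ?_⟩
  ext
  · simpa using hh1 x
  · simpa using hh2 x

lemma injective_punit : Module.Injective R PUnit.{u+1} := by
  constructor
  intro X Y _ _ _ _ f hf g
  exact ⟨0, fun x => Subsingleton.elim _ _⟩

lemma exists_section_of_injective_sub {i : A →ₗ[R] X} {p : X →ₗ[R] W}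
    (hi : Function.Injective i) (hex : Function.Exact i p) (hp : Function.Surjective p)
    (hA : Module.Injective R A) :
    ∃ s : W →ₗ[R] X, p.comp s = LinearMap.id := by
  obtain ⟨r, hr⟩ := hA.out i hi LinearMap.id
  exact sectionOfRetraction hex hp (r := r) (by ext a; exact hr a)

lemma injective_of_split {i : A →ₗ[R] Q} {p : Q →ₗ[R] W}
    (hi : Function.Injective i) (hex : Function.Exact i p)
    {s : W →ₗ[R] Q} (hs : p.comp s = LinearMap.id) (hQ : Module.Injective R Q) :
    Module.Injective R A := by
  obtain ⟨r, hr⟩ := retractionOfSection hi hex hs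
  exact injective_of_retract hr hQ

end Helpers

/-- every short exact sequence `0 → A → X → W → 0` splits. -/
def SplitsAll (R : Type u) [Ring R] (W A : Type u) [AddCommGroup W] [Module R W]
    [AddCommGroup A] [Module R A] : Prop :=
  ∀ (X : Type u) [AddCommGroup X] [Module R X], ∀ (i : A →ₗ[R] X) (p : X →ₗ[R] W),
    Function.Injective i → Function.Exact i p → Function.Surjective p →
    ∃ s : W →ₗ[R] X, p.comp s = LinearMap.id

section Splits
variable {A B C W P X : Type u}
  [AddCommGroup A] [Module R A] [AddCommGroup B] [Module R B] [AddCommGroup C] [Module R C]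
  [AddCommGroup W] [Module R W] [AddCommGroup P] [Module R P] [AddCommGroup X] [Module R X]

lemma splitsAll_of_injective (hA : Module.Injective R A) : SplitsAll R W A :=
  fun _ _ _ i p hi hex hp => exists_section_of_injective_sub hi hex hp hA

lemma splitsAll_equiv (e : A ≃ₗ[R] B) (h : SplitsAll R W A) : SplitsAll R W B := by
  intro X _ _ i p hi hex hp
  refine h X (i.comp e.toLinearMap) p (by
    intro a b hab
    exact e.injective (hi hab)) ?_ hp
  intro x
  rw [hex x]
  constructor
  · rintro ⟨b, rfl⟩; exact ⟨e.symm b, by simp⟩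
  · rintro ⟨a, rfl⟩; exact ⟨e a, rfl⟩

lemma splitsAll_extension {i : A →ₗ[R] B} {p : B →ₗ[R] C}
    (hi : Function.Injective i) (hex : Function.Exact i p) (hp : Function.Surjective p)
    (hA : SplitsAll R W A) (hC : SplitsAll R W C) : SplitsAll R W B := by
  intro X _ _ j q hj hexq hq
  set K : Submodule R X := LinearMap.range (j.comp i) with hK
  set π : X →ₗ[R] (X ⧸ K) := K.mkQ with hπ
  have hmkzero : ∀ a : A, π (j (i a)) = 0 := by
    intro a
    exact (Submodule.Quotient.mk_eq_zero _).mpr ⟨a, rfl⟩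
  obtain ⟨jC, hjC⟩ : ∃ jC : C →ₗ[R] (X ⧸ K), jC.comp p = π.comp j := by
    refine factorSurj p hp (π.comp j) ?_
    intro b hb
    obtain ⟨a, rfl⟩ := (hex b).mp hb
    exact hmkzero a
  have hjC' : ∀ b, jC (p b) = π (j b) := comp_apply_eq hjC
  obtain ⟨q', hq'⟩ : ∃ q' : (X ⧸ K) →ₗ[R] W, q'.comp π = q := by
    refine ⟨K.liftQ q ?_, ?_⟩
    · rintro x ⟨a, rfl⟩
      exact hexq.apply_apply_eq_zero (i a)
    · ext x; rfl
  have hq'' : ∀ x, q' (π x) = q x := comp_apply_eq hq'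
  have hjC_inj : Function.Injective jC := by
    intro c c' hcc
    obtain ⟨b, rfl⟩ := hp c
    obtain ⟨b', rfl⟩ := hp c'
    have h1 : π (j b) = π (j b') := by rw [← hjC' b, ← hjC' b', hcc]
    have h2 : j b - j b' ∈ K := by
      rw [← Submodule.Quotient.mk_eq_zero K]
      show π (j b - j b') = 0
      rw [map_sub, h1, sub_self]
    obtain ⟨a, ha⟩ := h2
    have h3 : i a = b - b' := hj (by simpa using ha)
    have h4 : p (b - b') = 0 := by rw [← h3]; exact hex.apply_apply_eq_zero a
    rw [map_sub, sub_eq_zero] at h4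
    rw [h4]
  have hq'_surj : Function.Surjective q' := by
    intro w
    obtain ⟨x, rfl⟩ := hq w
    exact ⟨π x, hq'' x⟩
  have hexq' : Function.Exact jC q' := by
    intro x'
    constructor
    · intro hx'
      obtain ⟨x, rfl⟩ := Submodule.mkQ_surjective K x'
      have hqx : q x = 0 := by rw [← hq'' x]; exact hx'
      obtain ⟨b, rfl⟩ := (hexq x).mp hqx
      exact ⟨p b, hjC' b⟩
    · rintro ⟨c, rfl⟩
      obtain ⟨b, rfl⟩ := hp c
      rw [hjC' b, hq'' (j b)]
      exact hexq.apply_apply_eq_zero b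
  obtain ⟨s', hs'⟩ := hC (X ⧸ K) jC q' hjC_inj hexq' hq'_surj
  have hs'' : ∀ w, q' (s' w) = w := comp_apply_id hs'
  set X'' : Submodule R X := Submodule.comap π (LinearMap.range s') with hX''
  set jA : A →ₗ[R] X'' := (j.comp i).codRestrict X'' (fun a => by
    show π (j (i a)) ∈ LinearMap.range s'
    rw [hmkzero a]
    exact ⟨0, map_zero s'⟩) with hjA
  set pW : X'' →ₗ[R] W := q.comp X''.subtype with hpW
  have hpW_surj : Function.Surjective pW := by
    intro w
    obtain ⟨x, hx⟩ : ∃ x, π x = s' w := Submodule.mkQ_surjective K (s' w)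
    have hqx : q x = w := by rw [← hq'' x, hx, hs'' w]
    exact ⟨⟨x, ⟨w, hx.symm⟩⟩, hqx⟩
  have hjA_inj : Function.Injective jA := by
    intro a a' haa
    have h5 : j (i a) = j (i a') := congrArg Subtype.val haa
    exact hi (hj h5)
  have hexA : Function.Exact jA pW := by
    rintro ⟨x, hx⟩
    constructor
    · intro hpx
      have hqx : q x = 0 := hpx
      obtain ⟨w₀, hw₀⟩ := hx
      have h1 : q' (s' w₀) = 0 := by rw [hw₀, hq'' x]; exact hqx
      have h2 : w₀ = 0 := by rw [← hs'' w₀, h1]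
      have h3 : π x = 0 := by rw [← hw₀, h2, map_zero]
      obtain ⟨a, ha⟩ := (Submodule.Quotient.mk_eq_zero K).mp h3
      exact ⟨a, Subtype.ext ha⟩
    · rintro ⟨a, ha⟩
      have h5 : j (i a) = x := congrArg Subtype.val ha
      show q x = 0
      rw [← h5]
      exact hexq.apply_apply_eq_zero (i a)
  obtain ⟨s'', hs0⟩ := hA X'' jA pW hjA_inj hexA hpW_surj
  refine ⟨X''.subtype.comp s'', ?_⟩
  ext w
  exact LinearMap.congr_fun hs0 w

lemma splitsAll_prod (hA : SplitsAll R W A) (hB : SplitsAll R W B) :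
    SplitsAll R W (A × B) := by
  refine splitsAll_extension (i := LinearMap.inl R A B) (p := LinearMap.snd R A B)
    ?_ ?_ ?_ hA hB
  · intro a a' h; simpa using congrArg Prod.fst h
  · intro x
    constructor
    · intro hx; exact ⟨x.1, by ext <;> simp_all⟩
    · rintro ⟨a, rfl⟩; simp
  · intro b; exact ⟨(0, b), rfl⟩

lemma splitsAll_summand (h : SplitsAll R W (A × P)) : SplitsAll R W A := by
  intro X _ _ i p hi hex hp
  have h2 := h (X × P) (i.prodMap LinearMap.id) (p.comp (LinearMap.fst R X P))
    (by intro a a' haa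
        have h1 := congrArg Prod.fst haa
        have h2 := congrArg Prod.snd haa
        exact Prod.ext (hi h1) h2)
    (by rintro ⟨x, q⟩
        constructor
        · intro hx
          obtain ⟨a, ha⟩ := (hex x).mp hx
          exact ⟨(a, q), by simp [ha, Prod.ext_iff]⟩
        · rintro ⟨⟨a, q'⟩, h⟩
          obtain ⟨h1, h2⟩ := Prod.ext_iff.mp h
          show p x = 0
          have h1' : i a = x := h1
          rw [← h1']
          exact hex.apply_apply_eq_zero a)
    (fun w => by obtain ⟨x, hx⟩ := hp w; exact ⟨(x, 0), hx⟩)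
  obtain ⟨s, hs⟩ := h2
  refine ⟨(LinearMap.fst R X P).comp s, ?_⟩
  ext w
  exact LinearMap.congr_fun hs w

end Splits

section Cyc

variable {R : Type u} [Ring R]

/-- `X` is (isomorphic to) a cycle of some `WI`-totally acyclic complex. -/
def IsCyc (R : Type u) [Ring R] (X : Type u) [AddCommGroup X] [Module R X] : Prop :=
  ∃ (T : ℤ → ModuleCat.{u} R) (d : ∀ n : ℤ, T n →ₗ[R] T (n + 1)),
    IsTotallyAcyclicInjComplex R (WeakInjective R) T d ∧
    ∃ c : ℤ, Nonempty (X ≃ₗ[R] LinearMap.ker (d c))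

variable {X Z Z' : Type u} [AddCommGroup X] [Module R X] [AddCommGroup Z] [Module R Z]
  [AddCommGroup Z'] [Module R Z']

lemma isCyc_equiv (h : IsCyc R Z) (e : Z ≃ₗ[R] Z') : IsCyc R Z' := by
  obtain ⟨T, d, hTA, c, ⟨f⟩⟩ := h
  exact ⟨T, d, hTA, c, ⟨e.symm.trans f⟩⟩

/-- The canonical short exact sequence `0 → Z^c → T^c → Z^{c+1} → 0`. -/
lemma cyc_ses (T : ℤ → ModuleCat.{u} R) (d : ∀ n : ℤ, T n →ₗ[R] T (n + 1))
    (hTA : IsTotallyAcyclicInjComplex R (WeakInjective R) T d) (c : ℤ) :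
    ∃ p : T c →ₗ[R] LinearMap.ker (d (c + 1)),
      Function.Exact (LinearMap.ker (d c)).subtype p ∧ Function.Surjective p ∧
      ∀ x, ((p x : T (c + 1))) = d c x := by
  have hmem : ∀ x : T c, d c x ∈ LinearMap.ker (d (c + 1)) :=
    fun x => (hTA.2.1 c).apply_apply_eq_zero x
  refine ⟨(d c).codRestrict (LinearMap.ker (d (c + 1))) hmem, ?_, ?_, fun x => rfl⟩
  · intro x
    constructor
    · intro hx
      have h1 : d c x = 0 := congrArg Subtype.val hx
      exact ⟨⟨x, h1⟩, rfl⟩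
    · rintro ⟨⟨z, hz⟩, rfl⟩
      exact Subtype.ext hz
  · rintro ⟨y, hy⟩
    obtain ⟨x, hx⟩ := (hTA.2.1 c y).mp hy
    exact ⟨x, Subtype.ext hx⟩

lemma isCyc_splitsAll (hZ : IsCyc R Z) (W : ModuleCat.{u} R) (hW : WeakInjective R W) :
    SplitsAll R W Z := by
  obtain ⟨T, d, hTA, c, ⟨f⟩⟩ := hZ
  refine splitsAll_equiv f.symm ?_
  intro X _ _ i p hi hex hp
  -- extend the inclusion of the cycle along i
  obtain ⟨φ, hφ⟩ := (hTA.1 c).out i hi (LinearMap.ker (d c)).subtype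
  -- factor (d c) ∘ φ through p
  obtain ⟨ψ, hψ⟩ : ∃ ψ : W →ₗ[R] T (c + 1), ψ.comp p = (d c).comp φ := by
    refine factorSurj p hp ((d c).comp φ) ?_
    intro x hx
    obtain ⟨z, rfl⟩ := (hex x).mp hx
    show d c (φ (i z)) = 0
    rw [hφ z]
    exact z.2
  have hψ' : ∀ x, ψ (p x) = d c (φ x) := comp_apply_eq hψ
  have hψ0 : (fun g : W →ₗ[R] T (c + 1) => (d (c + 1)).comp g) ψ = 0 := by
    show (d (c + 1)).comp ψ = 0
    ext w
    obtain ⟨x, rfl⟩ := hp w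
    show d (c + 1) (ψ (p x)) = 0
    rw [hψ' x]
    exact (hTA.2.1 c).apply_apply_eq_zero (φ x)
  obtain ⟨h0, hh0⟩ := ((hTA.2.2 W hW c) ψ).mp hψ0
  have hh0' : ∀ w, d c (h0 w) = ψ w := comp_apply_eq hh0
  have hmem : ∀ x, (φ - h0.comp p) x ∈ LinearMap.ker (d c) := by
    intro x
    rw [LinearMap.mem_ker]
    show d c (φ x - h0 (p x)) = 0
    rw [map_sub, hh0' (p x), hψ' x, sub_self]
  set r : X →ₗ[R] LinearMap.ker (d c) := (φ - h0.comp p).codRestrict _ hmem with hr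
  have hri : r.comp i = LinearMap.id := by
    refine LinearMap.ext fun z => Subtype.ext ?_
    show φ (i z) - h0 (p (i z)) = (z : T c)
    rw [hex.apply_apply_eq_zero z, map_zero, sub_zero, hφ z]
    rfl
  exact sectionOfRetraction hex hp hri

lemma isCyc_step (hZ : IsCyc R Z) :
    ∃ (Q Z' : ModuleCat.{u} R) (i : Z →ₗ[R] Q) (p : Q →ₗ[R] Z'),
      Module.Injective R Q ∧ Function.Injective i ∧ Function.Exact i p ∧
      Function.Surjective p ∧ IsCyc R Z' := by
  obtain ⟨T, d, hTA, c, ⟨f⟩⟩ := hZ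
  obtain ⟨p, hex, hp, hval⟩ := cyc_ses T d hTA c
  refine ⟨T c, ModuleCat.of R (LinearMap.ker (d (c + 1))),
    (LinearMap.ker (d c)).subtype.comp f.toLinearMap, p, hTA.1 c, ?_, ?_, hp,
    ⟨T, d, hTA, c + 1, ⟨LinearEquiv.refl R _⟩⟩⟩
  · intro a b hab
    exact f.injective (Subtype.ext hab)
  · intro x
    constructor
    · intro hx
      obtain ⟨z, rfl⟩ := (hex x).mp hx
      exact ⟨f.symm z, by simp⟩
    · rintro ⟨a, rfl⟩
      exact (hex _).mpr ⟨f a, rfl⟩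

lemma isCyc_of_injective (X : ModuleCat.{u} R) (hX : Module.Injective R X) :
    IsCyc R X := by
  set dd : (X × X) →ₗ[R] (X × X) := (0 : (X × X) →ₗ[R] X).prod (LinearMap.fst R X X) with hdd
  have hdval : ∀ z : X × X, dd z = (0, z.1) := fun z => rfl
  refine ⟨fun _ => ModuleCat.of R (X × X), fun _ => dd, ⟨?_, ?_, ?_⟩, 0, ⟨?_⟩⟩
  · intro n; exact injective_prod hX hX
  · intro n
    show Function.Exact dd dd
    intro z
    constructor
    · intro hz
      have h1 : (z.1 : X) = 0 := (Prod.ext_iff.mp hz).2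
      refine ⟨(z.2, 0), ?_⟩
      exact Prod.ext_iff.mpr ⟨h1.symm, rfl⟩
    · rintro ⟨w, rfl⟩
      rfl
  · intro W hW n
    show Function.Exact (fun g : W →ₗ[R] (X × X) => dd.comp g)
      (fun g : W →ₗ[R] (X × X) => dd.comp g)
    intro g
    constructor
    · intro hg
      have hg1 : ∀ w, ((g w).1 : X) = 0 := by
        intro w
        have h1 : dd (g w) = 0 := LinearMap.congr_fun hg w
        exact (Prod.ext_iff.mp h1).2
      refine ⟨((LinearMap.snd R X X).comp g).prod ((LinearMap.fst R X X).comp g), ?_⟩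
      show dd.comp (((LinearMap.snd R X X).comp g).prod ((LinearMap.fst R X X).comp g)) = g
      refine LinearMap.ext fun w => ?_
      exact Prod.ext_iff.mpr ⟨(hg1 w).symm, rfl⟩
    · rintro ⟨h, rfl⟩
      show dd.comp (dd.comp h) = 0
      refine LinearMap.ext fun w => ?_
      rfl
  · -- X ≃ ker dd
    have hmem : ∀ x : X, ((0 : X), x) ∈ LinearMap.ker dd := by
      intro x
      rw [LinearMap.mem_ker, hdval ((0 : X), x)]
      rfl
    have hmap : ∀ x : X, (LinearMap.inr R X X) x ∈ LinearMap.ker dd := fun x => hmem x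
    refine LinearEquiv.ofBijective ((LinearMap.inr R X X).codRestrict _ hmap) ⟨?_, ?_⟩
    · intro a b hab
      have h1 := congrArg Subtype.val hab
      exact (Prod.ext_iff.mp h1).2
    · rintro ⟨⟨z1, z2⟩, hz⟩
      have h1 : (z1 : X) = 0 := by
        have h2 : dd (z1, z2) = 0 := hz
        rw [hdval (z1, z2)] at h2
        exact (Prod.ext_iff.mp h2).2
      refine ⟨z2, Subtype.ext ?_⟩
      exact Prod.ext_iff.mpr ⟨h1.symm, rfl⟩

lemma gwi_isCyc (G : ModuleCat.{u} R) (hG : GorensteinWeakInjective R G) : IsCyc R G := by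
  obtain ⟨I, d, π, hTA, hπs, hexπ⟩ := hG
  have hmem : ∀ x : I 0, d 0 x ∈ LinearMap.ker (d 1) :=
    fun x => (hTA.2.1 0).apply_apply_eq_zero x
  set η : I 0 →ₗ[R] LinearMap.ker (d 1) := (d 0).codRestrict _ hmem with hη
  have hηs : Function.Surjective η := by
    rintro ⟨y, hy⟩
    obtain ⟨x, hx⟩ := (hTA.2.1 0 y).mp hy
    exact ⟨x, Subtype.ext hx⟩
  have hker : LinearMap.ker π = LinearMap.ker η := by
    have h1 : Function.Exact (d (-1 : ℤ)) (d (0 : ℤ)) := hTA.2.1 (-1)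
    have h2 : LinearMap.ker (d (0 : ℤ)) = LinearMap.range (d (-1 : ℤ)) :=
      LinearMap.exact_iff.mp h1
    have h3 : LinearMap.ker π = LinearMap.range (d (-1 : ℤ)) := LinearMap.exact_iff.mp hexπ
    have h4 : LinearMap.ker η = LinearMap.ker (d (0 : ℤ)) := LinearMap.ker_codRestrict _ _ _
    rw [h3, h4, h2]
  refine ⟨I, d, hTA, 1, ⟨?_⟩⟩
  exact ((π.quotKerEquivOfSurjective hπs).symm.trans
    (Submodule.quotEquivOfEq _ _ hker)).trans (η.quotKerEquivOfSurjective hηs)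

end Cyc

section GoodCls

variable {R : Type u} [Ring R]

/-- The class generated by cycles of `WI`-totally acyclic complexes under extensions. -/
inductive Good (R : Type u) [Ring R] : ModuleCat.{u} R → Prop
  | cyc (X : ModuleCat.{u} R) (h : IsCyc R X) : Good R X
  | ext (A B X : ModuleCat.{u} R) (i : A →ₗ[R] X) (p : X →ₗ[R] B)
      (hi : Function.Injective i) (hex : Function.Exact i p) (hp : Function.Surjective p)
      (hA : Good R A) (hB : Good R B) : Good R X

lemma good_of_equiv {A B : ModuleCat.{u} R} (h : Good R A) (e : A ≃ₗ[R] B) : Good R B := by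
  cases h with
  | cyc _ hc => exact Good.cyc _ (isCyc_equiv hc e)
  | ext A0 B0 _ i p hi hex hp hA hB =>
      refine Good.ext A0 B0 B (e.toLinearMap.comp i) (p.comp e.symm.toLinearMap)
        ?_ ?_ ?_ hA hB
      · intro a b hab
        exact hi (e.injective hab)
      · intro b
        constructor
        · intro hb
          obtain ⟨a, ha⟩ := (hex (e.symm b)).mp hb
          exact ⟨a, by show e (i a) = b; rw [ha]; simp⟩
        · rintro ⟨a, rfl⟩
          show p (e.symm (e (i a))) = 0
          rw [e.symm_apply_apply]
          exact hex.apply_apply_eq_zero a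
      · intro b0
        obtain ⟨a, ha⟩ := hp b0
        exact ⟨e a, by show p (e.symm (e a)) = b0; rw [e.symm_apply_apply]; exact ha⟩

lemma good_splitsAll {X : ModuleCat.{u} R} (h : Good R X) :
    ∀ (W : ModuleCat.{u} R), WeakInjective R W → SplitsAll R W X := by
  induction h with
  | cyc X hX => exact fun W hW => isCyc_splitsAll hX W hW
  | ext A B X i p hi hex hp hA hB ihA ihB =>
      exact fun W hW => splitsAll_extension hi hex hp (ihA W hW) (ihB W hW)

/-- The horseshoe step : an extension of modules embedding into injectives with cokernels
`A'`, `B'` embeds into the product, with cokernel an extension of `A'` by `B'`. -/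
lemma horseshoe_step {A X B QA A' QB B' : ModuleCat.{u} R}
    (iX : A →ₗ[R] X) (pX : X →ₗ[R] B) (hiX : Function.Injective iX)
    (hexX : Function.Exact iX pX) (hpX : Function.Surjective pX)
    (iA : A →ₗ[R] QA) (pA : QA →ₗ[R] A') (hiA : Function.Injective iA)
    (hexA : Function.Exact iA pA) (hpA : Function.Surjective pA)
    (iB : B →ₗ[R] QB) (pB : QB →ₗ[R] B') (hiB : Function.Injective iB)
    (hexB : Function.Exact iB pB) (hpB : Function.Surjective pB)
    (hQA : Module.Injective R QA) :
    ∃ (X' : ModuleCat.{u} R) (iX' : X →ₗ[R] ModuleCat.of R (QA × QB))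
      (pX' : ModuleCat.of R (QA × QB) →ₗ[R] X')
      (jA : A' →ₗ[R] X') (pB' : X' →ₗ[R] B'),
      Function.Injective iX' ∧ Function.Exact iX' pX' ∧ Function.Surjective pX' ∧
      Function.Injective jA ∧ Function.Exact jA pB' ∧ Function.Surjective pB' := by
  obtain ⟨φ, hφ⟩ := hQA.out iX hiX iA
  set m : X →ₗ[R] (QA × QB) := φ.prod (iB.comp pX) with hm
  have hmval : ∀ x : X, m x = (φ x, iB (pX x)) := fun _ => rfl
  set K : Submodule R (QA × QB) := LinearMap.range m with hK
  set π : (QA × QB) →ₗ[R] ((QA × QB) ⧸ K) := K.mkQ with hπ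
  have hm_inj : Function.Injective m := by
    intro x y hxy
    have h1 : φ x = φ y := (Prod.ext_iff.mp hxy).1
    have h2 : iB (pX x) = iB (pX y) := (Prod.ext_iff.mp hxy).2
    have h3 : pX (x - y) = 0 := by rw [map_sub, hiB h2, sub_self]
    obtain ⟨a, ha⟩ := (hexX _).mp h3
    have h4 : φ (x - y) = iA a := by rw [← ha]; exact hφ a
    have h5 : φ (x - y) = 0 := by rw [map_sub, h1, sub_self]
    have h6 : a = 0 := hiA (by rw [← h4, h5, map_zero])
    have : x - y = 0 := by rw [← ha, h6, map_zero]
    exact sub_eq_zero.mp this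
  have hexm : Function.Exact m π := by
    intro z
    constructor
    · intro hz
      exact (Submodule.Quotient.mk_eq_zero K).mp hz
    · rintro ⟨x, rfl⟩
      exact (Submodule.Quotient.mk_eq_zero K).mpr ⟨x, rfl⟩
  have hπs : Function.Surjective π := Submodule.mkQ_surjective K
  -- jA
  have hπinl : ∀ a : A, π (iA a, 0) = 0 := by
    intro a
    refine (Submodule.Quotient.mk_eq_zero K).mpr ⟨iX a, ?_⟩
    rw [hmval (iX a), hφ a, hexX.apply_apply_eq_zero a, map_zero]
  obtain ⟨jA, hjA⟩ : ∃ jA : A' →ₗ[R] ((QA × QB) ⧸ K),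
      jA.comp pA = π.comp (LinearMap.inl R QA QB) := by
    refine factorSurj pA hpA _ ?_
    intro q hq
    obtain ⟨a, rfl⟩ := (hexA q).mp hq
    exact hπinl a
  have hjA' : ∀ q : QA, jA (pA q) = π (q, 0) := comp_apply_eq hjA
  -- pB'
  obtain ⟨pB', hpB'⟩ : ∃ pB' : ((QA × QB) ⧸ K) →ₗ[R] B',
      pB'.comp π = pB.comp (LinearMap.snd R QA QB) := by
    refine ⟨K.liftQ (pB.comp (LinearMap.snd R QA QB)) ?_, ?_⟩
    · rintro z ⟨x, rfl⟩
      show pB ((m x).2) = 0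
      rw [hmval x]
      exact hexB.apply_apply_eq_zero (pX x)
    · ext z <;> rfl
  have hpB'' : ∀ z : QA × QB, pB' (π z) = pB z.2 := comp_apply_eq hpB'
  have hjA_inj : Function.Injective jA := by
    have hker : ∀ a', jA a' = 0 → a' = 0 := by
      intro a' ha'
      obtain ⟨q, rfl⟩ := hpA a'
      rw [hjA' q] at ha'
      obtain ⟨x, hx⟩ := (Submodule.Quotient.mk_eq_zero K).mp ha'
      have h1' : iB (pX x) = 0 := by
        rw [hmval x] at hx
        exact (Prod.ext_iff.mp hx).2
      have h2 : pX x = 0 := by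
        apply hiB
        rw [h1', map_zero]
      obtain ⟨a, rfl⟩ := (hexX x).mp h2
      have h3 : q = φ (iX a) := by
        rw [hmval (iX a)] at hx
        exact ((Prod.ext_iff.mp hx).1).symm
      rw [h3, hφ a]
      exact hexA.apply_apply_eq_zero a
    intro a b hab
    have : jA (a - b) = 0 := by rw [map_sub, hab, sub_self]
    exact sub_eq_zero.mp (hker _ this)
  have hpB'_surj : Function.Surjective pB' := by
    intro b'
    obtain ⟨q, rfl⟩ := hpB b'
    exact ⟨π (0, q), hpB'' (0, q)⟩
  have hexAB : Function.Exact jA pB' := by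
    intro x'
    constructor
    · intro hx'
      obtain ⟨z, rfl⟩ := hπs x'
      have h1 : pB z.2 = 0 := by rw [← hpB'' z]; exact hx'
      obtain ⟨b, hb⟩ := (hexB z.2).mp h1
      obtain ⟨x, hx⟩ := hpX b
      refine ⟨pA (z.1 - φ x), ?_⟩
      rw [hjA' (z.1 - φ x)]
      have h2 : π (m x) = 0 := (Submodule.Quotient.mk_eq_zero K).mpr ⟨x, rfl⟩
      have h3 : π z = π z - π (m x) := by rw [h2, sub_zero]
      rw [h3, ← map_sub]
      congr 1
      rw [hmval x, hx, hb]
      exact Prod.ext_iff.mpr ⟨rfl, by simp⟩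
    · rintro ⟨a', rfl⟩
      obtain ⟨q, rfl⟩ := hpA a'
      rw [hjA' q, hpB'' (q, 0)]
      exact map_zero pB
  exact ⟨ModuleCat.of R ((QA × QB) ⧸ K), m, π, jA, pB', hm_inj, hexm, hπs,
    hjA_inj, hexAB, hpB'_surj⟩

/-- Composition of a mono with cokernel `C` and a mono with cokernel `G'` has cokernel
an extension of `C` by `G'`. -/
lemma coker_compose {M G Q C G' : ModuleCat.{u} R}
    (ε : M →ₗ[R] G) (ι : G →ₗ[R] Q) (pC : G →ₗ[R] C) (pG : Q →ₗ[R] G')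
    (hε : Function.Injective ε) (hι : Function.Injective ι)
    (hexC : Function.Exact ε pC) (hpC : Function.Surjective pC)
    (hexG : Function.Exact ι pG) (hpG : Function.Surjective pG) :
    ∃ (X : ModuleCat.{u} R) (iM : M →ₗ[R] Q) (πX : Q →ₗ[R] X)
      (jC : C →ₗ[R] X) (pX : X →ₗ[R] G'),
      Function.Injective iM ∧ Function.Exact iM πX ∧ Function.Surjective πX ∧
      Function.Injective jC ∧ Function.Exact jC pX ∧ Function.Surjective pX := by
  set iM : M →ₗ[R] Q := ι.comp ε with hiM
  set K : Submodule R Q := LinearMap.range iM with hK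
  set π : Q →ₗ[R] (Q ⧸ K) := K.mkQ with hπ
  have hiM_inj : Function.Injective iM := fun a b hab => hε (hι hab)
  have hexm : Function.Exact iM π := by
    intro z
    constructor
    · intro hz; exact (Submodule.Quotient.mk_eq_zero K).mp hz
    · rintro ⟨x, rfl⟩; exact (Submodule.Quotient.mk_eq_zero K).mpr ⟨x, rfl⟩
  have hπs : Function.Surjective π := Submodule.mkQ_surjective K
  obtain ⟨jC, hjC⟩ : ∃ jC : C →ₗ[R] (Q ⧸ K), jC.comp pC = π.comp ι := by
    refine factorSurj pC hpC _ ?_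
    intro g hg
    obtain ⟨x, rfl⟩ := (hexC g).mp hg
    exact (Submodule.Quotient.mk_eq_zero K).mpr ⟨x, rfl⟩
  have hjC' : ∀ g : G, jC (pC g) = π (ι g) := comp_apply_eq hjC
  obtain ⟨pX, hpX⟩ : ∃ pX : (Q ⧸ K) →ₗ[R] G', pX.comp π = pG := by
    refine ⟨K.liftQ pG ?_, ?_⟩
    · rintro z ⟨x, rfl⟩
      show pG (ι (ε x)) = 0
      exact hexG.apply_apply_eq_zero (ε x)
    · ext z <;> rfl
  have hpX' : ∀ q : Q, pX (π q) = pG q := comp_apply_eq hpX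
  have hjC_inj : Function.Injective jC := by
    have hker : ∀ c, jC c = 0 → c = 0 := by
      intro c hc
      obtain ⟨g, rfl⟩ := hpC c
      rw [hjC' g] at hc
      obtain ⟨x, hx⟩ := (Submodule.Quotient.mk_eq_zero K).mp hc
      have h1 : ε x = g := hι hx
      rw [← h1]
      exact hexC.apply_apply_eq_zero x
    intro a b hab
    have : jC (a - b) = 0 := by rw [map_sub, hab, sub_self]
    exact sub_eq_zero.mp (hker _ this)
  have hpX_surj : Function.Surjective pX := by
    intro g'
    obtain ⟨q, rfl⟩ := hpG g'
    exact ⟨π q, hpX' q⟩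
  have hexCX : Function.Exact jC pX := by
    intro x'
    constructor
    · intro hx'
      obtain ⟨q, rfl⟩ := hπs x'
      have h1 : pG q = 0 := by rw [← hpX' q]; exact hx'
      obtain ⟨g, rfl⟩ := (hexG q).mp h1
      exact ⟨pC g, hjC' g⟩
    · rintro ⟨c, rfl⟩
      obtain ⟨g, rfl⟩ := hpC c
      rw [hjC' g, hpX' (ι g)]
      exact hexG.apply_apply_eq_zero g
  exact ⟨ModuleCat.of R (Q ⧸ K), iM, π, jC, pX, hiM_inj, hexm, hπs, hjC_inj, hexCX, hpX_surj⟩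

end GoodCls

section Res

variable {R : Type u} [Ring R]

/-- `X` has a coresolution of length `d` by injectives followed by a `Good` end. -/
def HasGoodRes (R : Type u) [Ring R] : ℕ → ModuleCat.{u} R → Prop
  | 0, X => Good R X
  | (d+1), X => ∃ (Q X' : ModuleCat.{u} R) (i : X →ₗ[R] Q) (p : Q →ₗ[R] X'),
      Module.Injective R Q ∧ Function.Injective i ∧ Function.Exact i p ∧
      Function.Surjective p ∧ HasGoodRes R d X'

/-- `Z` is the `d`-th cosyzygy of an injective partial coresolution of `X`. -/
def InjCores (R : Type u) [Ring R] : ℕ → ModuleCat.{u} R → ModuleCat.{u} R → Prop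
  | 0, X, Z => Nonempty (X ≃ₗ[R] Z)
  | (d+1), X, Z => ∃ (Q Y : ModuleCat.{u} R) (i : X →ₗ[R] Q) (p : Q →ₗ[R] Y),
      Module.Injective R Q ∧ Function.Injective i ∧ Function.Exact i p ∧
      Function.Surjective p ∧ InjCores R d Y Z

lemma ses_transport {A B X : ModuleCat.{u} R} (e : A ≃ₗ[R] B)
    {Q : ModuleCat.{u} R} {i : B →ₗ[R] Q} {p : Q →ₗ[R] X}
    (hi : Function.Injective i) (hex : Function.Exact i p) :
    Function.Injective (i.comp e.toLinearMap) ∧ Function.Exact (i.comp e.toLinearMap) p := by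
  constructor
  · intro a b hab
    exact e.injective (hi hab)
  · intro q
    rw [hex q]
    constructor
    · rintro ⟨b, rfl⟩
      exact ⟨e.symm b, by show i (e (e.symm b)) = i b; rw [e.apply_symm_apply]⟩
    · rintro ⟨a, rfl⟩
      exact ⟨e a, rfl⟩

lemma hgr_of_equiv {A B : ModuleCat.{u} R} (e : A ≃ₗ[R] B) :
    ∀ d, HasGoodRes R d A → HasGoodRes R d B := by
  intro d h
  cases d with
  | zero => exact good_of_equiv h e
  | succ d =>
      obtain ⟨Q, X', i, p, hQ, hi, hex, hp, hres⟩ := h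
      obtain ⟨hi', hex'⟩ := ses_transport e.symm hi hex
      exact ⟨Q, X', i.comp e.symm.toLinearMap, p, hQ, hi', hex', hp, hres⟩

lemma hgr_of_isCyc {X : ModuleCat.{u} R} (hX : IsCyc R X) : ∀ d, HasGoodRes R d X := by
  intro d
  induction d generalizing X with
  | zero => exact Good.cyc X hX
  | succ d ih =>
      obtain ⟨Q, Z', i, p, hQ, hi, hex, hp, hZ'⟩ := isCyc_step hX
      exact ⟨Q, Z', i, p, hQ, hi, hex, hp, ih hZ'⟩

lemma hgr_of_injective {X : ModuleCat.{u} R} (hX : Module.Injective R X) :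
    ∀ d, HasGoodRes R d X :=
  hgr_of_isCyc (isCyc_of_injective X hX)

lemma hgr_ext : ∀ (d : ℕ) {A X B : ModuleCat.{u} R}
    (iX : A →ₗ[R] X) (pX : X →ₗ[R] B),
    Function.Injective iX → Function.Exact iX pX → Function.Surjective pX →
    HasGoodRes R d A → HasGoodRes R d B → HasGoodRes R d X := by
  intro d
  induction d with
  | zero =>
      intro A X B iX pX hiX hexX hpX hA hB
      exact Good.ext A B X iX pX hiX hexX hpX hA hB
  | succ d ih =>
      intro A X B iX pX hiX hexX hpX hA hB
      obtain ⟨QA, A', iA, pA, hQA, hiA, hexA, hpA, hresA⟩ := hA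
      obtain ⟨QB, B', iB, pB, hQB, hiB, hexB, hpB, hresB⟩ := hB
      obtain ⟨X', iX', pX', jA, pB', h1, h2, h3, h4, h5, h6⟩ :=
        horseshoe_step iX pX hiX hexX hpX iA pA hiA hexA hpA iB pB hiB hexB hpB hQA
      exact ⟨ModuleCat.of R (QA × QB), X', iX', pX', injective_prod hQA hQB,
        h1, h2, h3, ih jA pB' h4 h5 h6 hresA hresB⟩

lemma hgr_prod {A B : ModuleCat.{u} R} (d : ℕ) (hA : HasGoodRes R d A)
    (hB : HasGoodRes R d B) : HasGoodRes R d (ModuleCat.of R (A × B)) := by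
  refine hgr_ext d (LinearMap.inl R A B) (LinearMap.snd R A B) ?_ ?_ ?_ hA hB
  · intro a b hab; simpa using congrArg Prod.fst hab
  · intro z
    constructor
    · intro hz
      have hz2 : z.2 = 0 := hz
      exact ⟨z.1, Prod.ext_iff.mpr ⟨rfl, hz2.symm⟩⟩
    · rintro ⟨a, rfl⟩; rfl
  · intro b; exact ⟨(0, b), rfl⟩

lemma injCores_equiv_left {X X' Z : ModuleCat.{u} R} (e : X' ≃ₗ[R] X) :
    ∀ d, InjCores R d X Z → InjCores R d X' Z := by
  intro d h
  cases d with
  | zero =>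
      obtain ⟨f⟩ := h
      exact ⟨e.trans f⟩
  | succ d =>
      obtain ⟨Q, Y, i, p, hQ, hi, hex, hp, hres⟩ := h
      obtain ⟨hi', hex'⟩ := ses_transport e hi hex
      exact ⟨Q, Y, i.comp e.toLinearMap, p, hQ, hi', hex', hp, hres⟩

lemma injCores_pad {Y Z Q : ModuleCat.{u} R} (hQ : Module.Injective R Q) (d : ℕ)
    (h : InjCores R (d+1) Y Z) : InjCores R (d+1) (ModuleCat.of R (Y × Q)) Z := by
  obtain ⟨J, Y1, i, p, hJ, hi, hex, hp, hres⟩ := h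
  refine ⟨ModuleCat.of R (J × Q), Y1, i.prodMap LinearMap.id,
    p.comp (LinearMap.fst R J Q), injective_prod hJ hQ, ?_, ?_, ?_, hres⟩
  · intro a b hab
    have h1 := (Prod.ext_iff.mp hab).1
    have h2 := (Prod.ext_iff.mp hab).2
    exact Prod.ext_iff.mpr ⟨hi h1, h2⟩
  · intro z
    constructor
    · intro hz
      obtain ⟨y, hy⟩ := (hex z.1).mp hz
      exact ⟨(y, z.2), Prod.ext_iff.mpr ⟨hy, rfl⟩⟩
    · rintro ⟨w, rfl⟩
      show p ((i.prodMap LinearMap.id) w).1 = 0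
      exact hex.apply_apply_eq_zero w.1
  · intro y1
    obtain ⟨j, hj⟩ := hp y1
    exact ⟨(j, 0), hj⟩

/-- Schanuel's lemma for cosyzygies. -/
lemma schanuel {N Q1 C1 Q2 C2 : Type u}
    [AddCommGroup N] [Module R N] [AddCommGroup Q1] [Module R Q1]
    [AddCommGroup C1] [Module R C1] [AddCommGroup Q2] [Module R Q2]
    [AddCommGroup C2] [Module R C2]
    (f1 : N →ₗ[R] Q1) (c1 : Q1 →ₗ[R] C1) (f2 : N →ₗ[R] Q2) (c2 : Q2 →ₗ[R] C2)
    (hf1 : Function.Injective f1) (hex1 : Function.Exact f1 c1) (hc1 : Function.Surjective c1)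
    (hf2 : Function.Injective f2) (hex2 : Function.Exact f2 c2) (hc2 : Function.Surjective c2)
    (hQ1 : Module.Injective R Q1) (hQ2 : Module.Injective R Q2) :
    Nonempty ((C1 × Q2) ≃ₗ[R] (Q1 × C2)) := by
  obtain ⟨e, he⟩ := hQ1.out f2 hf2 f1
  obtain ⟨e', he'⟩ := hQ2.out f1 hf1 f2
  set p : (Q1 × Q2) →ₗ[R] (Q1 × C2) :=
    ((LinearMap.fst R Q1 Q2) - e.comp (LinearMap.snd R Q1 Q2)).prod
      (c2.comp (LinearMap.snd R Q1 Q2)) with hp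
  set q : (Q1 × Q2) →ₗ[R] (C1 × Q2) :=
    (c1.comp (LinearMap.fst R Q1 Q2)).prod
      ((LinearMap.snd R Q1 Q2) - e'.comp (LinearMap.fst R Q1 Q2)) with hq
  have hpval : ∀ z : Q1 × Q2, p z = (z.1 - e z.2, c2 z.2) := fun _ => rfl
  have hqval : ∀ z : Q1 × Q2, q z = (c1 z.1, z.2 - e' z.1) := fun _ => rfl
  have hps : Function.Surjective p := by
    rintro ⟨u, c⟩
    obtain ⟨b, rfl⟩ := hc2 c
    refine ⟨(u + e b, b), ?_⟩
    rw [hpval]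
    exact Prod.ext_iff.mpr ⟨by simp, rfl⟩
  have hqs : Function.Surjective q := by
    rintro ⟨c, v⟩
    obtain ⟨a, rfl⟩ := hc1 c
    refine ⟨(a, v + e' a), ?_⟩
    rw [hqval]
    exact Prod.ext_iff.mpr ⟨rfl, by simp⟩
  have hkerp : LinearMap.ker p = LinearMap.range (f1.prod f2) := by
    ext z
    rw [LinearMap.mem_ker]
    constructor
    · intro hz
      rw [hpval] at hz
      have h0 : z.1 - e z.2 = 0 := (Prod.ext_iff.mp hz).1
      have h1 : z.1 = e z.2 := by rwa [sub_eq_zero] at h0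
      have h2 : c2 z.2 = 0 := (Prod.ext_iff.mp hz).2
      obtain ⟨x, hx⟩ := (hex2 z.2).mp h2
      refine ⟨x, ?_⟩
      show (f1 x, f2 x) = z
      refine Prod.ext_iff.mpr ⟨?_, hx⟩
      rw [← he x, hx, ← h1]
    · rintro ⟨x, rfl⟩
      rw [hpval]
      refine Prod.ext_iff.mpr ⟨?_, ?_⟩
      · show f1 x - e (f2 x) = 0
        rw [he x, sub_self]
      · show c2 (f2 x) = 0
        exact hex2.apply_apply_eq_zero x
  have hkerq : LinearMap.ker q = LinearMap.range (f1.prod f2) := by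
    ext z
    rw [LinearMap.mem_ker]
    constructor
    · intro hz
      rw [hqval] at hz
      have h0 : z.2 - e' z.1 = 0 := (Prod.ext_iff.mp hz).2
      have h1 : z.2 = e' z.1 := by rwa [sub_eq_zero] at h0
      have h2 : c1 z.1 = 0 := (Prod.ext_iff.mp hz).1
      obtain ⟨x, hx⟩ := (hex1 z.1).mp h2
      refine ⟨x, ?_⟩
      show (f1 x, f2 x) = z
      refine Prod.ext_iff.mpr ⟨hx, ?_⟩
      rw [← he' x, hx, ← h1]
    · rintro ⟨x, rfl⟩
      rw [hqval]
      refine Prod.ext_iff.mpr ⟨?_, ?_⟩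
      · show c1 (f1 x) = 0
        exact hex1.apply_apply_eq_zero x
      · show f2 x - e' (f1 x) = 0
        rw [he' x, sub_self]
  have hkk : LinearMap.ker q = LinearMap.ker p := by rw [hkerp, hkerq]
  exact ⟨((q.quotKerEquivOfSurjective hqs).symm.trans
    (Submodule.quotEquivOfEq _ _ hkk)).trans (p.quotKerEquivOfSurjective hps)⟩

lemma schanuel_cores : ∀ (d : ℕ) (X Z1 Z2 : ModuleCat.{u} R),
    InjCores R d X Z1 → InjCores R d X Z2 →
    ∃ (P1 P2 : ModuleCat.{u} R), Module.Injective R P1 ∧ Module.Injective R P2 ∧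
      Nonempty ((Z1 × P1) ≃ₗ[R] (Z2 × P2)) := by
  intro d
  induction d with
  | zero =>
      intro X Z1 Z2 h1 h2
      obtain ⟨e1⟩ := h1
      obtain ⟨e2⟩ := h2
      exact ⟨ModuleCat.of R PUnit.{u+1}, ModuleCat.of R PUnit.{u+1}, injective_punit, injective_punit,
        ⟨LinearEquiv.prodCongr (e1.symm.trans e2) (LinearEquiv.refl R _)⟩⟩
  | succ d ih =>
      intro X Z1 Z2 h1 h2
      obtain ⟨Q1, Y1, i1, p1, hQ1, hi1, hex1, hp1, hres1⟩ := h1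
      obtain ⟨Q2, Y2, i2, p2, hQ2, hi2, hex2, hp2, hres2⟩ := h2
      obtain ⟨esch⟩ := schanuel i2 p2 i1 p1 hi2 hex2 hp2 hi1 hex1 hp1 hQ2 hQ1
      -- esch : (Y2 × Q1) ≃ (Q2 × Y1)
      have e12 : (ModuleCat.of R (Y1 × Q2) : Type u) ≃ₗ[R] (Y2 × Q1 : Type u) :=
        (LinearEquiv.prodComm R Y1 Q2).trans (esch.symm)
      cases d with
      | zero =>
          obtain ⟨f1⟩ := hres1
          obtain ⟨f2⟩ := hres2
          refine ⟨Q2, Q1, hQ2, hQ1, ⟨?_⟩⟩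
          -- Z1 × Q2 ≃ Y1 × Q2 ≃ Y2 × Q1 ≃ Z2 × Q1
          exact ((LinearEquiv.prodCongr f1.symm (LinearEquiv.refl R Q2)).trans e12).trans
            (LinearEquiv.prodCongr f2 (LinearEquiv.refl R Q1))
      | succ d' =>
          have hc1 : InjCores R (d'+1) (ModuleCat.of R (Y1 × Q2)) Z1 :=
            injCores_pad hQ2 d' hres1
          have hc2 : InjCores R (d'+1) (ModuleCat.of R (Y1 × Q2)) Z2 := by
            refine injCores_equiv_left ?_ (d'+1) (injCores_pad hQ1 d' hres2)
            exact e12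
          exact ih _ _ _ hc1 hc2

lemma main_schanuel : ∀ (d : ℕ) (X Z : ModuleCat.{u} R) (W : ModuleCat.{u} R),
    WeakInjective R W → HasGoodRes R d X → InjCores R d X Z → SplitsAll R W Z := by
  intro d
  induction d with
  | zero =>
      intro X Z W hW hg hc
      obtain ⟨e⟩ := hc
      exact splitsAll_equiv e (good_splitsAll hg W hW)
  | succ d ih =>
      intro X Z W hW hg hc
      obtain ⟨Qg, Xg, ig, pg, hQg, hig, hexg, hpg, hresg⟩ := hg
      obtain ⟨E0, Y, ie, pe, hE0, hie, hexe, hpe, hrese⟩ := hc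
      obtain ⟨esch⟩ := schanuel ie pe ig pg hie hexe hpe hig hexg hpg hE0 hQg
      -- esch : (Y × Qg) ≃ (E0 × Xg)
      have hV : HasGoodRes R d (ModuleCat.of R (Y × Qg)) := by
        have hV0 := hgr_prod d (hgr_of_injective hE0 d) hresg
        exact hgr_of_equiv (A := ModuleCat.of R (E0 × Xg)) (B := ModuleCat.of R (Y × Qg))
          esch.symm d hV0
      cases d with
      | zero =>
          obtain ⟨f⟩ := hrese
          have hc' : InjCores R 0 (ModuleCat.of R (Y × Qg)) (ModuleCat.of R (Z × Qg)) :=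
            ⟨LinearEquiv.prodCongr f (LinearEquiv.refl R Qg)⟩
          have := ih _ _ W hW hV hc'
          exact splitsAll_summand this
      | succ d' =>
          have hc' : InjCores R (d'+1) (ModuleCat.of R (Y × Qg)) Z :=
            injCores_pad hQg d' hrese
          exact ih _ _ W hW hV hc'

end Res

section Cores

variable {R : Type u} [Ring R]

lemma hgr_of_coresolution : ∀ (n : ℕ) (M : ModuleCat.{u} R) (G : ℕ → ModuleCat.{u} R)
    (d : ∀ i, G i →ₗ[R] G (i + 1)) (ε : M →ₗ[R] G 0),
    IsFiniteCoresolution R M n G d ε → (∀ i, GorensteinWeakInjective R (G i)) →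
    HasGoodRes R n M := by
  intro n
  induction n with
  | zero =>
      intro M G d ε hcor hgwi
      obtain ⟨hinj, hex0, hexs, htriv⟩ := hcor
      have hsurj : Function.Surjective ε := by
        intro g
        exact (hex0 g).mp (htriv 1 (by omega) (d 0 g))
      exact good_of_equiv (Good.cyc (G 0) (gwi_isCyc (G 0) (hgwi 0)))
        (LinearEquiv.ofBijective ε ⟨hinj, hsurj⟩).symm
  | succ n ih =>
      intro M G d ε hcor hgwi
      obtain ⟨hinj, hex0, hexs, htriv⟩ := hcor
      -- C := ker (d 1), the first cosyzygy
      set C : ModuleCat.{u} R := ModuleCat.of R (LinearMap.ker (d 1)) with hC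
      have hmem : ∀ g : G 0, d 0 g ∈ LinearMap.ker (d 1) :=
        fun g => (hexs 0).apply_apply_eq_zero g
      set pC : G 0 →ₗ[R] C := (d 0).codRestrict (LinearMap.ker (d 1)) hmem with hpC
      have hpC_surj : Function.Surjective pC := by
        rintro ⟨y, hy⟩
        obtain ⟨g, hg⟩ := (hexs 0 y).mp hy
        exact ⟨g, Subtype.ext hg⟩
      have hexpC : Function.Exact ε pC := by
        intro g
        constructor
        · intro hg
          exact (hex0 g).mp (congrArg Subtype.val hg)
        · intro hg
          exact Subtype.ext ((hex0 g).mpr hg)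
      -- HasGoodRes n C via the truncated coresolution
      have hresC : HasGoodRes R n C := by
        refine ih C (fun i => G (i + 1)) (fun i => d (i + 1))
          (LinearMap.ker (d 1)).subtype ⟨?_, ?_, ?_, ?_⟩ (fun i => hgwi (i + 1))
        · exact Subtype.coe_injective
        · intro y
          constructor
          · intro hy
            exact ⟨⟨y, hy⟩, rfl⟩
          · rintro ⟨⟨z, hz⟩, rfl⟩
            exact hz
        · intro i
          exact hexs (i + 1)
        · intro i hi
          exact htriv (i + 1) (by omega)
      -- step for G 0
      obtain ⟨Q, G', ι, pG, hQ, hι, hexι, hpG, hG'cyc⟩ :=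
        isCyc_step (gwi_isCyc (G 0) (hgwi 0))
      obtain ⟨X, iM, πX, jC, pX, h1, h2, h3, h4, h5, h6⟩ :=
        coker_compose ε ι pC pG hinj hι hexpC hpC_surj hexι hpG
      exact ⟨Q, X, iM, πX, hQ, h1, h2, h3,
        hgr_ext n jC pX h4 h5 h6 hresC (hgr_of_isCyc hG'cyc n)⟩

end Cores

section Bridge

variable {R : Type u} [Ring R]

lemma subsingleton_of_isZero' {S : Type*} [Ring S] {A : ModuleCat S}
    (h : Limits.IsZero A) : Subsingleton A := by
  constructor
  intro a b
  have hid : (𝟙 A) = (0 : A ⟶ A) := h.eq_of_src _ _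
  have hz : ∀ x : A, x = 0 := by
    intro x
    conv_lhs => rw [show x = (𝟙 A) x from rfl]
    rw [hid]
    rfl
  rw [hz a, hz b]

lemma extVanish_succ_of_injective (N W : ModuleCat.{u} R) (hW : Module.Injective R W)
    (n : ℕ) : ExtVanish R (n+1) N W := by
  have hpr : HasProjectiveResolution N := inferInstance
  obtain ⟨P⟩ := hpr.out
  have e := P.isoExt (R := ℤ) (n+1) W
  have hz : Limits.IsZero ((P.complex.linearYonedaObj ℤ W).homology (n+1)) := by
    rw [← HomologicalComplex.exactAt_iff_isZero_homology]
    rw [HomologicalComplex.exactAt_iff' _ n (n+1) (n+2) (by simp) (by simp)]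
    rw [ShortComplex.moduleCat_exact_iff]
    intro x0 hx
    let x : P.complex.X (n+1) ⟶ W := x0
    have h0 : ((P.complex.linearYonedaObj ℤ W).d (n+1) (n+2)) x0 = 0 := hx
    rw [ChainComplex.linearYonedaObj_d] at h0
    have hx' : ∀ a, x (P.complex.d (n+2) (n+1) a) = 0 := by
      intro a
      have h1 : (P.complex.d (n+2) (n+1) ≫ x) = 0 := h0
      have h2 : (P.complex.d (n+2) (n+1) ≫ x) a = 0 := by rw [h1]; rfl
      exact h2
    have hex : ∀ a : P.complex.X (n+1), P.complex.d (n+1) n a = 0 →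
        ∃ b, P.complex.d (n+2) (n+1) b = a := by
      have h1 := P.complex_exactAt_succ n
      rw [HomologicalComplex.exactAt_iff' _ (n+2) (n+1) n (by simp) (by simp)] at h1
      rw [ShortComplex.moduleCat_exact_iff] at h1
      exact fun a ha => h1 a ha
    set d10 : P.complex.X (n+1) →ₗ[R] P.complex.X n := (P.complex.d (n+1) n).hom with hd10
    set q : P.complex.X (n+1) →ₗ[R] LinearMap.range d10 := d10.rangeRestrict with hq
    have hqsurj : Function.Surjective q := LinearMap.surjective_rangeRestrict d10
    have hker : ∀ a, q a = 0 → x a = 0 := by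
      intro a ha
      have hda : d10 a = 0 := congrArg Subtype.val ha
      obtain ⟨b, hb⟩ := hex a hda
      rw [← hb]; exact hx' b
    obtain ⟨g, hg⟩ := factorSurj q hqsurj x.hom hker
    obtain ⟨h, hh⟩ := hW.out (LinearMap.range d10).subtype Subtype.coe_injective g
    refine ⟨ModuleCat.ofHom h, ?_⟩
    have key : h.comp d10 = x.hom := by
      apply LinearMap.ext
      intro a
      have h1 : h (d10 a) = g (q a) := hh ⟨d10 a, ⟨a, rfl⟩⟩
      have h2 : g (q a) = x a := comp_apply_eq hg a
      simp only [LinearMap.comp_apply]; rw [h1, h2]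
    show ((P.complex.linearYonedaObj ℤ W).d n (n+1)) _ = x0
    rw [ChainComplex.linearYonedaObj_d]
    exact ModuleCat.hom_ext key
  have hsub : Subsingleton ((P.complex.linearYonedaObj ℤ W).homology (n+1)) :=
    subsingleton_of_isZero' hz
  show Subsingleton _
  constructor
  intro a b
  have h1 : e.hom a = e.hom b := Subsingleton.elim _ _
  have h2 : e.inv (e.hom a) = e.inv (e.hom b) := congrArg e.inv h1
  have ha : e.inv (e.hom a) = a := by
    rw [show e.inv (e.hom a) = (e.hom ≫ e.inv) a from rfl, e.hom_inv_id]; rfl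
  have hb : e.inv (e.hom b) = b := by
    rw [show e.inv (e.hom b) = (e.hom ≫ e.inv) b from rfl, e.hom_inv_id]; rfl
  rw [← ha, ← hb, h2]

lemma weakInjective_of_injective (W : ModuleCat.{u} R) (hW : Module.Injective R W) :
    WeakInjective R W :=
  fun N _ => extVanish_succ_of_injective N W hW 0

end Bridge

section Dims

variable {R : Type u} [Ring R]

lemma idLE_mono {M : ModuleCat.{u} R} {k n : ℕ} (h : IdLE R M k) (hkn : k ≤ n) :
    IdLE R M n := by
  obtain ⟨G, d, ε, ⟨h1, h2, h3, h4⟩, h5⟩ := h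
  exact ⟨G, d, ε, ⟨h1, h2, h3, fun i hi => h4 i (by omega)⟩, h5⟩

lemma gwidLE_mono {M : ModuleCat.{u} R} {k n : ℕ} (h : GwidLE R M k) (hkn : k ≤ n) :
    GwidLE R M n := by
  obtain ⟨G, d, ε, ⟨h1, h2, h3, h4⟩, h5⟩ := h
  exact ⟨G, d, ε, ⟨h1, h2, h3, fun i hi => h4 i (by omega)⟩, h5⟩

lemma injective_of_subsingleton {Z : Type u} [AddCommGroup Z] [Module R Z]
    (hs : Subsingleton Z) : Module.Injective R Z := by
  constructor
  intro X Y _ _ _ _ f hf g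
  exact ⟨0, fun x => Subsingleton.elim _ _⟩

lemma idLE_zero {M : ModuleCat.{u} R} (hM : Module.Injective R M) : IdLE R M 0 := by
  refine ⟨fun i => match i with | 0 => M | (_+1) => ModuleCat.of R PUnit.{u+1},
    fun i => match i with | 0 => 0 | (_+1) => 0, LinearMap.id, ⟨?_, ?_, ?_, ?_⟩, ?_⟩
  · exact fun a b hab => hab
  · intro y
    constructor
    · intro _; exact ⟨y, rfl⟩
    · intro _; exact Subsingleton.elim _ _
  · intro i y
    constructor
    · intro _
      refine ⟨0, ?_⟩
      exact Subsingleton.elim _ _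
    · intro _; exact Subsingleton.elim _ _
  · intro i hi x
    match i, hi with
    | (j+1), _ => exact Subsingleton.elim _ _
  · intro i
    match i with
    | 0 => exact hM
    | (j+1) => exact injective_punit

lemma idLE_step {M Q M' : ModuleCat.{u} R} {n : ℕ} (i : M →ₗ[R] Q) (p : Q →ₗ[R] M')
    (hQ : Module.Injective R Q) (hi : Function.Injective i) (hex : Function.Exact i p)
    (hp : Function.Surjective p) (h : IdLE R M' n) : IdLE R M (n+1) := by
  obtain ⟨G, d, ε, ⟨h1, h2, h3, h4⟩, h5⟩ := h
  refine ⟨fun k => match k with | 0 => Q | (j+1) => G j,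
    fun k => match k with | 0 => ε.comp p | (j+1) => d j, i, ⟨hi, ?_, ?_, ?_⟩, ?_⟩
  · intro q
    constructor
    · intro hq
      have hpq : p q = 0 := h1 (by rw [show ε (p q) = 0 from hq, map_zero])
      exact (hex q).mp hpq
    · rintro ⟨a, rfl⟩
      show ε (p (i a)) = 0
      rw [hex.apply_apply_eq_zero a, map_zero]
  · intro k
    match k with
    | 0 =>
        intro y
        constructor
        · intro hy
          obtain ⟨g, hg⟩ := (h2 y).mp hy
          obtain ⟨q, rfl⟩ := hp g
          exact ⟨q, hg⟩
        · rintro ⟨q, rfl⟩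
          exact (h2 _).mpr ⟨p q, rfl⟩
    | (j+1) => exact h3 j
  · intro k hk x
    match k, hk with
    | (j+1), hk => exact h4 j (by omega) x
  · intro k
    match k with
    | 0 => exact hQ
    | (j+1) => exact h5 j

lemma idLE_of_injCores : ∀ (d : ℕ) (X Z : ModuleCat.{u} R),
    InjCores R d X Z → Module.Injective R Z → IdLE R X d := by
  intro d
  induction d with
  | zero =>
      intro X Z hc hZ
      obtain ⟨e⟩ := hc
      exact idLE_zero (injective_of_equiv e.symm hZ)
  | succ d ih =>
      intro X Z hc hZ
      obtain ⟨Q, Y, i, p, hQ, hi, hex, hp, hres⟩ := hc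
      exact idLE_step i p hQ hi hex hp (ih Y Z hres hZ)

lemma idim_le_iff {M : ModuleCat.{u} R} {n : ℕ} :
    Idim R M ≤ (n : ℕ∞) ↔ IdLE R M n := by
  constructor
  · intro h
    set S : Set ℕ∞ := {c : ℕ∞ | ∃ k : ℕ, c = k ∧ IdLE R M k} with hS
    by_cases hne : S.Nonempty
    · obtain ⟨k, hkeq, hk⟩ := csInf_mem hne
      have hkn : (k : ℕ∞) ≤ n := by
        rw [← hkeq]
        exact h
      exact idLE_mono hk (by exact_mod_cast hkn)
    · exfalso
      have hempty : S = ∅ := Set.not_nonempty_iff_eq_empty.mp hne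
      have : Idim R M = ⊤ := by
        show sInf S = ⊤
        rw [hempty, sInf_empty]
      rw [this] at h
      exact (ENat.coe_ne_top n) (top_le_iff.mp h)
  · intro h
    exact sInf_le ⟨n, rfl, h⟩

lemma gwidLE_of_eq {M : ModuleCat.{u} R} {n : ℕ} (h : Gwid R M = (n : ℕ∞)) :
    GwidLE R M n := by
  set S : Set ℕ∞ := {c : ℕ∞ | ∃ k : ℕ, c = k ∧ GwidLE R M k} with hS
  by_cases hne : S.Nonempty
  · obtain ⟨k, hkeq, hk⟩ := csInf_mem hne
    have hkn : (k : ℕ∞) = n := by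
      rw [← hkeq]
      exact h
    have : k = n := by exact_mod_cast hkn
    rwa [this] at hk
  · exfalso
    have hempty : S = ∅ := Set.not_nonempty_iff_eq_empty.mp hne
    have htop : Gwid R M = ⊤ := by
      show sInf S = ⊤
      rw [hempty, sInf_empty]
    rw [h] at htop
    exact (ENat.coe_ne_top n) htop

end Dims

section Complexes

variable {R : Type u} [Ring R]

/-- Kernel short exact sequence `0 → ker d₁ → A → ker d₂ → 0` for exact `d₁, d₂`. -/
lemma ker_ses {A B C : Type u} [AddCommGroup A] [Module R A] [AddCommGroup B] [Module R B]
    [AddCommGroup C] [Module R C] (d1 : A →ₗ[R] B) (d2 : B →ₗ[R] C)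
    (hex : Function.Exact d1 d2) :
    ∃ p : A →ₗ[R] LinearMap.ker d2,
      Function.Exact (LinearMap.ker d1).subtype p ∧ Function.Surjective p ∧
      ∀ x, ((p x : B)) = d1 x := by
  have hmem : ∀ x : A, d1 x ∈ LinearMap.ker d2 := fun x => hex.apply_apply_eq_zero x
  refine ⟨d1.codRestrict (LinearMap.ker d2) hmem, ?_, ?_, fun x => rfl⟩
  · intro x
    constructor
    · intro hx
      exact ⟨⟨x, congrArg Subtype.val hx⟩, rfl⟩
    · rintro ⟨⟨z, hz⟩, rfl⟩
      exact Subtype.ext hz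
  · rintro ⟨y, hy⟩
    obtain ⟨x, hx⟩ := (hex y).mp hy
    exact ⟨x, Subtype.ext hx⟩

/-- Transfer of kernels along a commuting square of bijections. -/
lemma ker_equiv_transfer {A B A' B' : Type u} [AddCommGroup A] [Module R A]
    [AddCommGroup B] [Module R B] [AddCommGroup A'] [Module R A'] [AddCommGroup B'] [Module R B']
    (f : A →ₗ[R] B) (g : A' →ₗ[R] B') (α : A →ₗ[R] A') (β : B →ₗ[R] B')
    (hcomm : g.comp α = β.comp f) (hα : Function.Bijective α) (hβ : Function.Bijective β) :
    Nonempty ((LinearMap.ker f) ≃ₗ[R] (LinearMap.ker g)) := by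
  have hcomm' : ∀ a, g (α a) = β (f a) := comp_apply_eq hcomm
  have hmem : ∀ z : LinearMap.ker f, α ((LinearMap.ker f).subtype z) ∈ LinearMap.ker g := by
    rintro ⟨z, hz⟩
    rw [LinearMap.mem_ker]
    show g (α z) = 0
    rw [hcomm' z, hz, map_zero]
  refine ⟨LinearEquiv.ofBijective ((α.comp (LinearMap.ker f).subtype).codRestrict _ hmem)
    ⟨?_, ?_⟩⟩
  · intro a b hab
    exact Subtype.ext (hα.1 (congrArg Subtype.val hab))
  · rintro ⟨y, hy⟩
    obtain ⟨x, rfl⟩ := hα.2 y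
    have hfx : f x = 0 := by
      apply hβ.1
      rw [← hcomm' x, hy, map_zero]
    exact ⟨⟨x, hfx⟩, Subtype.ext rfl⟩

lemma injective_of_prod_equiv {Z1 P1 Z2 : Type u} [AddCommGroup Z1] [Module R Z1]
    [AddCommGroup P1] [Module R P1] [AddCommGroup Z2] [Module R Z2]
    (e : (Z1 × P1) ≃ₗ[R] Z2) (hZ2 : Module.Injective R Z2) : Module.Injective R Z1 := by
  refine injective_of_retract (i := e.toLinearMap.comp (LinearMap.inl R Z1 P1))
    (r := (LinearMap.fst R Z1 P1).comp e.symm.toLinearMap) ?_ hZ2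
  ext a
  show ((e.symm (e (a, 0))).1 : Z1) = a
  rw [e.symm_apply_apply]

/-- Appending a step at the end of a partial injective coresolution. -/
lemma injCores_append : ∀ (k : ℕ) (X Y Z Q : ModuleCat.{u} R)
    (_ : InjCores R k X Y) (i : Y →ₗ[R] Q) (p : Q →ₗ[R] Z),
    Module.Injective R Q → Function.Injective i → Function.Exact i p →
    Function.Surjective p → InjCores R (k+1) X Z := by
  intro k
  induction k with
  | zero =>
      intro X Y Z Q hc i p hQ hi hex hp
      obtain ⟨e⟩ := hc
      obtain ⟨hi', hex'⟩ := ses_transport e hi hex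
      exact ⟨Q, Z, i.comp e.toLinearMap, p, hQ, hi', hex', hp, ⟨LinearEquiv.refl R _⟩⟩
  | succ k ih =>
      intro X Y Z Q hc i p hQ hi hex hp
      obtain ⟨Q0, Y0, i0, p0, hQ0, hi0, hex0, hp0, hres0⟩ := hc
      exact ⟨Q0, Y0, i0, p0, hQ0, hi0, hex0, hp0, ih Y0 Y Z Q hres0 i p hQ hi hex hp⟩

/-- Cosyzygies of an injective resolution give `InjCores`. -/
lemma injCores_of_resolution (M : ModuleCat.{u} R) (G : ℕ → ModuleCat.{u} R)
    (d : ∀ i, G i →ₗ[R] G (i + 1)) (ε : M →ₗ[R] G 0)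
    (hinj : Function.Injective ε) (hex0 : Function.Exact ε (d 0))
    (hexs : ∀ i, Function.Exact (d i) (d (i + 1)))
    (hGinj : ∀ i, Module.Injective R (G i)) :
    ∀ k, InjCores R k M (ModuleCat.of R (LinearMap.ker (d k))) := by
  intro k
  induction k with
  | zero =>
      refine ⟨?_⟩
      have h1 : LinearMap.range ε = LinearMap.ker (d 0) :=
        (LinearMap.exact_iff.mp hex0).symm
      exact (LinearEquiv.ofInjective ε hinj).trans (LinearEquiv.ofEq _ _ h1)
  | succ k ih =>
      obtain ⟨p, hexp, hps, hval⟩ := ker_ses (d k) (d (k+1)) (hexs k)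
      exact injCores_append k M (ModuleCat.of R (LinearMap.ker (d k))) _ (G k) ih
        (LinearMap.ker (d k)).subtype p (hGinj k) Subtype.coe_injective hexp hps

end Complexes

section TateCx

variable {R : Type u} [Ring R]
variable (T : ℤ → ModuleCat.{u} R) (dT : ∀ n : ℤ, T n →ₗ[R] T (n + 1))

/-- Baer's criterion applied to cycles : vanishing of `Êxt(R/I, -)` forces all cycles
to be injective. -/
lemma cycles_injective_of_quot_vanish
    (hTA : IsTotallyAcyclicInjComplex R (WeakInjective R) T dT)
    (hB : ∀ I : Submodule R R, ExtHatVanishesAll R (ModuleCat.of R (R ⧸ I)) T dT)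
    (m : ℤ) : Module.Injective R (LinearMap.ker (dT m)) := by
  apply Module.Baer.injective
  intro I f
  -- extend incl ∘ f along I ↪ R
  obtain ⟨F, hF⟩ := (hTA.1 m).out I.subtype Subtype.coe_injective
    ((LinearMap.ker (dT m)).subtype.comp f)
  -- dT m ∘ F kills I, factor through R ⧸ I
  have hkill : ∀ x : R, x ∈ I → (dT m) (F x) = 0 := by
    intro x hx
    have h1 : F x = (f ⟨x, hx⟩ : T m) := hF ⟨x, hx⟩
    rw [h1]
    exact (f ⟨x, hx⟩).2
  set ψ : (R ⧸ I) →ₗ[R] T (m + 1) := I.liftQ ((dT m).comp F)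
    (by intro x hx; rw [LinearMap.mem_ker]; show dT m (F x) = 0; exact hkill x hx) with hψ
  have hψ' : ∀ r : R, ψ (I.mkQ r) = dT m (F r) := fun r => rfl
  have hψ0 : (dT (m+1)).comp ψ = 0 := by
    refine LinearMap.ext fun z => ?_
    obtain ⟨r, rfl⟩ := I.mkQ_surjective z
    show dT (m+1) (ψ (I.mkQ r)) = 0
    rw [hψ' r]
    exact (hTA.2.1 m).apply_apply_eq_zero (F r)
  obtain ⟨h0, hh0⟩ := ((hB I m) ψ).mp hψ0
  have hh0' : ∀ z, dT m (h0 z) = ψ z := comp_apply_eq hh0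
  -- F - h0 ∘ mkQ lands in the kernel
  set F' : R →ₗ[R] T m := F - h0.comp I.mkQ with hF'
  have hmem : ∀ r : R, F' r ∈ LinearMap.ker (dT m) := by
    intro r
    rw [LinearMap.mem_ker]
    show dT m (F r - h0 (I.mkQ r)) = 0
    rw [map_sub, hh0' (I.mkQ r), hψ' r, sub_self]
  refine ⟨F'.codRestrict _ hmem, ?_⟩
  intro x hx
  apply Subtype.ext
  show F x - h0 (I.mkQ x) = (f ⟨x, hx⟩ : T m)
  have h2 : I.mkQ x = 0 := (Submodule.Quotient.mk_eq_zero I).mpr hx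
  rw [h2, map_zero, sub_zero]
  exact hF ⟨x, hx⟩

/-- Injectivity propagates upward along the complex. -/
lemma cycle_injective_up (hTA : IsTotallyAcyclicInjComplex R (WeakInjective R) T dT)
    (c : ℤ) (h : Module.Injective R (LinearMap.ker (dT c))) :
    Module.Injective R (LinearMap.ker (dT (c + 1))) := by
  obtain ⟨p, hexp, hps, hval⟩ := ker_ses (dT c) (dT (c+1)) (hTA.2.1 c)
  obtain ⟨s, hs⟩ := exists_section_of_injective_sub Subtype.coe_injective hexp hps h
  exact injective_of_retract hs (hTA.1 c)

/-- Injectivity propagates downward along the complex. -/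
lemma cycle_injective_down (hTA : IsTotallyAcyclicInjComplex R (WeakInjective R) T dT)
    (c : ℤ) (h : Module.Injective R (LinearMap.ker (dT (c + 1)))) :
    Module.Injective R (LinearMap.ker (dT c)) := by
  obtain ⟨p, hexp, hps, hval⟩ := ker_ses (dT c) (dT (c+1)) (hTA.2.1 c)
  have hW : WeakInjective R (ModuleCat.of R (LinearMap.ker (dT (c+1)))) :=
    weakInjective_of_injective _ h
  have hsub0 : (dT (c+1)).comp (LinearMap.ker (dT (c+1))).subtype = 0 := by
    ext z
    exact z.2
  obtain ⟨h0, hh0⟩ := ((hTA.2.2 _ hW c) (LinearMap.ker (dT (c+1))).subtype).mp hsub0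
  have hh0' : ∀ z : LinearMap.ker (dT (c+1)), dT c (h0 z) = z.1 := comp_apply_eq hh0
  have hsec : p.comp h0 = LinearMap.id := by
    refine LinearMap.ext fun z => Subtype.ext ?_
    show (p (h0 z)).1 = z.1
    rw [hval (h0 z)]
    exact hh0' z
  exact injective_of_split Subtype.coe_injective hexp hsec (hTA.1 c)

lemma all_cycles_injective (hTA : IsTotallyAcyclicInjComplex R (WeakInjective R) T dT)
    (m : ℤ) (hm : Module.Injective R (LinearMap.ker (dT m))) :
    ∀ c : ℤ, Module.Injective R (LinearMap.ker (dT c)) := by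
  have hdown : ∀ (j : ℕ) (c : ℤ), c + j = m → Module.Injective R (LinearMap.ker (dT c)) := by
    intro j
    induction j with
    | zero =>
        intro c hc
        have hcm : c = m := by omega
        rw [hcm]
        exact hm
    | succ j ih =>
        intro c hc
        have h1 : (c + 1) + (j : ℤ) = m := by push_cast at hc ⊢; omega
        exact cycle_injective_down T dT hTA c (ih (c+1) h1)
  have hup : ∀ (j : ℕ) (c : ℤ), c = m + j → Module.Injective R (LinearMap.ker (dT c)) := by
    intro j
    induction j with
    | zero =>
        intro c hc
        have hcm : c = m := by omega
        rw [hcm]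
        exact hm
    | succ j ih =>
        intro c hc
        have h1 : c = (m + j) + 1 := by push_cast at hc ⊢; omega
        rw [h1]
        exact cycle_injective_up T dT hTA _ (ih (m + j) rfl)
  intro c
  rcases le_or_gt c m with hc | hc
  · exact hdown (m - c).toNat c (by omega)
  · exact hup (c - m).toNat c (by omega)

/-- If all cycles are injective, `Hom(N, T)` is exact for every `N`. -/
lemma extHat_of_cycles_injective
    (hTA : IsTotallyAcyclicInjComplex R (WeakInjective R) T dT)
    (hc : ∀ c : ℤ, Module.Injective R (LinearMap.ker (dT c)))
    (N : ModuleCat.{u} R) : ExtHatVanishesAll R N T dT := by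
  intro m
  obtain ⟨p, hexp, hps, hval⟩ := ker_ses (dT m) (dT (m+1)) (hTA.2.1 m)
  obtain ⟨s, hs⟩ := exists_section_of_injective_sub Subtype.coe_injective hexp hps (hc m)
  have hs' : ∀ z, p (s z) = z := comp_apply_id hs
  intro g
  constructor
  · intro hg
    have hgmem : ∀ x : N, g x ∈ LinearMap.ker (dT (m+1)) := by
      intro x
      rw [LinearMap.mem_ker]
      exact LinearMap.congr_fun hg x
    set g' : N →ₗ[R] LinearMap.ker (dT (m+1)) := g.codRestrict _ hgmem with hg'
    refine ⟨s.comp g', ?_⟩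
    show (dT m).comp (s.comp g') = g
    ext x
    show dT m (s (g' x)) = g x
    rw [← hval (s (g' x)), hs' (g' x)]
    rfl
  · rintro ⟨h, rfl⟩
    show (dT (m+1)).comp ((dT m).comp h) = 0
    ext x
    exact (hTA.2.1 m).apply_apply_eq_zero (h x)

end TateCx

end GWIProof

/-- Let `M` have `Gwid_R M = n < ∞` and a `WI`-pure Tate injective resolution
`M → E → T`. Then `id_R M ≤ n` iff `Êxt^i_GWI(N, M) = 0` for every module `N` and
every `i ∈ ℤ`, iff `Êxt^i_GWI(R/I, M) = 0` for every left ideal `I` and every `i ∈ ℤ`. -/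
theorem idim_le_iff_extHat_vanishes (M : ModuleCat.{u} R) (n : ℕ)
    (E : ℕ → ModuleCat.{u} R) (dE : ∀ m, E m →ₗ[R] E (m + 1)) (ε : M →ₗ[R] E 0)
    (T : ℤ → ModuleCat.{u} R) (dT : ∀ m : ℤ, T m →ₗ[R] T (m + 1))
    (u : ∀ m : ℕ, E m →ₗ[R] T m)
    (hTate : WIPureTateInjectiveResolution R M E dE ε T dT u)
    (hGwid : Gwid R M = (n : ℕ∞)) :
    (Idim R M ≤ (n : ℕ∞) ↔ ∀ N : ModuleCat.{u} R, ExtHatVanishesAll R N T dT) ∧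
    ((∀ N : ModuleCat.{u} R, ExtHatVanishesAll R N T dT) ↔
      ∀ I : Submodule R R, ExtHatVanishesAll R (ModuleCat.of R (R ⧸ I)) T dT) := by
  classical
  open GWIProof in
  obtain ⟨hEinj, hεinj, hexε, hexE, hTA, hcomm, N₀, hN₀⟩ := hTate
  have hGw : GwidLE R M n := GWIProof.gwidLE_of_eq hGwid
  have hketransfer : ∀ k : ℕ, N₀ ≤ k →
      Nonempty ((LinearMap.ker (dE k)) ≃ₗ[R] (LinearMap.ker (dT (k : ℤ)))) := by
    intro k hk
    exact GWIProof.ker_equiv_transfer (dE k) (dT (k : ℤ)) (u k) (u (k+1)) (hcomm k)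
      (hN₀ k hk) (hN₀ (k+1) (by omega))
  have hCores : ∀ k : ℕ, InjCores R k M (ModuleCat.of R (LinearMap.ker (dE k))) :=
    GWIProof.injCores_of_resolution M E dE ε hεinj hexε hexE hEinj
  -- (B) implies all cycles of `T` are injective
  have hBC : (∀ I : Submodule R R, ExtHatVanishesAll R (ModuleCat.of R (R ⧸ I)) T dT) →
      ∀ c : ℤ, Module.Injective R (LinearMap.ker (dT c)) := by
    intro hB c
    exact GWIProof.cycles_injective_of_quot_vanish T dT hTA hB c
  -- descent : all cycles of `T` injective implies `IdLE R M n`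
  have descent : (∀ c : ℤ, Module.Injective R (LinearMap.ker (dT c))) → IdLE R M n := by
    intro hC
    set m : ℕ := max n N₀ with hm
    have base : Module.Injective R (LinearMap.ker (dE m)) := by
      obtain ⟨e⟩ := hketransfer m (le_max_right _ _)
      exact GWIProof.injective_of_equiv e.symm (hC (m : ℤ))
    have step : ∀ k : ℕ, n ≤ k → Module.Injective R (LinearMap.ker (dE (k+1))) →
        Module.Injective R (LinearMap.ker (dE k)) := by
      intro k hk hnext
      have hW : WeakInjective R (ModuleCat.of R (LinearMap.ker (dE (k+1)))) :=
        GWIProof.weakInjective_of_injective _ hnext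
      obtain ⟨Gg, dGg, εGg, hcorg, hGWIg⟩ := GWIProof.gwidLE_mono hGw hk
      have hGk : GWIProof.HasGoodRes R k M :=
        GWIProof.hgr_of_coresolution k M Gg dGg εGg hcorg hGWIg
      have hsplits := GWIProof.main_schanuel k M (ModuleCat.of R (LinearMap.ker (dE k)))
        (ModuleCat.of R (LinearMap.ker (dE (k+1)))) hW hGk (hCores k)
      obtain ⟨p, hexp, hps, hval⟩ := GWIProof.ker_ses (dE k) (dE (k+1)) (hexE k)
      obtain ⟨s, hs⟩ := hsplits (E k) (LinearMap.ker (dE k)).subtype p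
        Subtype.coe_injective hexp hps
      exact GWIProof.injective_of_split Subtype.coe_injective hexp hs (hEinj k)
    have alldown : ∀ (j k : ℕ), n ≤ k → k + j = m →
        Module.Injective R (LinearMap.ker (dE k)) := by
      intro j
      induction j with
      | zero =>
          intro k hk hkm
          have : k = m := by omega
          rw [this]
          exact base
      | succ j ih =>
          intro k hk hkm
          exact step k hk (ih (k+1) (by omega) (by omega))
    have hn : Module.Injective R (LinearMap.ker (dE n)) :=
      alldown (m - n) n le_rfl (by omega)
    exact GWIProof.idLE_of_injCores n M _ (hCores n) hn
  -- IdLE n implies all Êxt vanish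
  have hDA : IdLE R M n → ∀ N : ModuleCat.{u} R, ExtHatVanishesAll R N T dT := by
    intro hId N
    set m : ℕ := max (n+1) N₀ with hm
    obtain ⟨G, dG, εG, ⟨hg1, hg2, hg3, hg4⟩, hg5⟩ := hId
    have hzCores : InjCores R m M (ModuleCat.of R (LinearMap.ker (dG m))) :=
      GWIProof.injCores_of_resolution M G dG εG hg1 hg2 hg3 hg5 m
    have hzsub : Subsingleton (LinearMap.ker (dG m)) := by
      constructor
      intro a b
      apply Subtype.ext
      rw [hg4 m (by omega) a.1, hg4 m (by omega) b.1]
    obtain ⟨P1, P2, hP1, hP2, ⟨e⟩⟩ := GWIProof.schanuel_cores m M _ _ (hCores m) hzCores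
    have hinj2 : Module.Injective R ((LinearMap.ker (dG m)) × P2) :=
      GWIProof.injective_prod (GWIProof.injective_of_subsingleton hzsub) hP2
    have hEm : Module.Injective R (LinearMap.ker (dE m)) :=
      GWIProof.injective_of_prod_equiv e hinj2
    obtain ⟨et⟩ := hketransfer m (le_max_right _ _)
    have hTm : Module.Injective R (LinearMap.ker (dT (m : ℤ))) :=
      GWIProof.injective_of_equiv et hEm
    exact GWIProof.extHat_of_cycles_injective T dT hTA
      (GWIProof.all_cycles_injective T dT hTA (m : ℤ) hTm) N
  constructor
  · constructor
    · intro hD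
      exact hDA (GWIProof.idim_le_iff.mp hD)
    · intro hA
      exact GWIProof.idim_le_iff.mpr (descent (hBC (fun I => hA _)))
  · constructor
    · intro hA I
      exact hA _
    · intro hB
      exact fun N => GWIProof.extHat_of_cycles_injective T dT hTA (hBC hB) N
end
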